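/- arXiv:1711.07030 — 8 statements merged into one kernel-verified Lean document; each statement's English description precedes it below -/
import Mathlib

section
/- Let 𝔽 be an ordered field. Any two normal systems of the same cardinality n in the plane 𝔽^2 are isomorphic: given two sets {±v_1, …, ±v_n} and {±w_1, …, ±w_n} of antipodal pairs of nonzero vectors in 𝔽^2 lying on n distinct lines through the origin (respectively), there exists a convex positive bijection between them. -/
open SignType (sign)

namespace CPB2aux

variable {F : Type*} [Field F] [LinearOrder F] [IsStrictOrderedRing F]

/-- 2×2 determinant of two plane vectors. -/
def det2 (x y : Fin 2 → F) : F := x 0 * y 1 - x 1 * y 0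

lemma det2_swap (x y : Fin 2 → F) : det2 y x = - det2 x y := by
  simp only [det2]; ring

lemma det2_self (x : Fin 2 → F) : det2 x x = 0 := by simp only [det2]; ring

lemma det2_smul_smul (s t : F) (x y : Fin 2 → F) :
    det2 (s • x) (t • y) = s * t * det2 x y := by
  simp only [det2, Pi.smul_apply, smul_eq_mul]; ring

/-- dependence from vanishing determinant -/
lemma span_eq_of_det2_eq_zero {x y : Fin 2 → F} (hx : x ≠ 0) (hy : y ≠ 0)
    (h : det2 x y = 0) : Submodule.span F {x} = Submodule.span F {y} := by
  have h' : x 0 * y 1 = x 1 * y 0 := by simp only [det2] at h; linarith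
  have hxc : x 0 ≠ 0 ∨ x 1 ≠ 0 := by
    by_contra hc
    push_neg at hc
    apply hx
    funext t; fin_cases t <;> simp [hc.1, hc.2]
  obtain ⟨t, ht, rfl⟩ : ∃ t : F, t ≠ 0 ∧ y = t • x := by
    rcases hxc with h0 | h1
    · refine ⟨y 0 / x 0, ?_, ?_⟩
      · intro hc
        apply hy
        have hy0 : y 0 = 0 := by
          field_simp at hc; simpa using hc
        have hy1 : y 1 = 0 := by
          have := h'
          rw [hy0] at this
          have : x 0 * y 1 = 0 := by simpa using this
          exact (mul_eq_zero.mp this).resolve_left h0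
        funext t; fin_cases t <;> simp [hy0, hy1]
      · funext t; fin_cases t <;> simp [Pi.smul_apply, smul_eq_mul]
        · field_simp
        · field_simp
          nlinarith [h']
    · refine ⟨y 1 / x 1, ?_, ?_⟩
      · intro hc
        apply hy
        have hy1 : y 1 = 0 := by field_simp at hc; simpa using hc
        have hy0 : y 0 = 0 := by
          have := h'
          rw [hy1] at this
          have : x 1 * y 0 = 0 := by simpa using this.symm
          exact (mul_eq_zero.mp this).resolve_left h1
        funext t; fin_cases t <;> simp [hy0, hy1]
      · funext t; fin_cases t <;> simp [Pi.smul_apply, smul_eq_mul]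
        · field_simp
          nlinarith [h']
        · field_simp
  exact (Submodule.span_singleton_smul_eq (IsUnit.mk0 t ht) x).symm

lemma det2_ne_zero {x y : Fin 2 → F} (hx : x ≠ 0) (hy : y ≠ 0)
    (h : Submodule.span F {x} ≠ Submodule.span F {y}) : det2 x y ≠ 0 :=
  fun hc => h (span_eq_of_det2_eq_zero hx hy hc)

/-- upper half-plane normalization predicate -/
def Up (x : Fin 2 → F) : Prop := 0 < x 1 ∨ (x 1 = 0 ∧ 0 < x 0)

lemma exists_sign_up {x : Fin 2 → F} (hx : x ≠ 0) :
    ∃ s : F, (s = 1 ∨ s = -1) ∧ Up (s • x) := by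
  by_cases h : Up x
  · exact ⟨1, Or.inl rfl, by simpa using h⟩
  · refine ⟨-1, Or.inr rfl, ?_⟩
    rw [Up, not_or, not_lt, not_and] at h
    obtain ⟨h1, h2⟩ := h
    have hsm : ∀ t, ((-1 : F) • x) t = - x t := by
      intro t; simp
    rcases lt_or_eq_of_le h1 with h1' | h1'
    · left; rw [hsm]; linarith
    · right
      have h0 := not_lt.mp (h2 h1')
      have hx0 : x 0 ≠ 0 := by
        intro hc
        apply hx
        funext t; fin_cases t <;> simp [hc, h1']
      refine ⟨by rw [hsm, h1', neg_zero], ?_⟩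
      rw [hsm]
      have : x 0 < 0 := lt_of_le_of_ne h0 hx0
      linarith

/-- key for ordering lines in the upper half-plane -/
noncomputable def kappa (x : Fin 2 → F) : WithBot F :=
  if x 1 = 0 then ⊥ else ↑(-(x 0 / x 1))

lemma kappa_lt_iff {a b : Fin 2 → F} (ha : Up a) (hb : Up b) :
    kappa a < kappa b ↔ 0 < det2 a b := by
  rcases ha with ha1 | ⟨ha1, ha0⟩ <;> rcases hb with hb1 | ⟨hb1, hb0⟩
  · -- both a1 > 0, b1 > 0
    rw [kappa, kappa, if_neg (ne_of_gt ha1), if_neg (ne_of_gt hb1), WithBot.coe_lt_coe]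
    rw [neg_lt_neg_iff, div_lt_div_iff₀ hb1 ha1]
    constructor <;> intro h <;> simp only [det2] at * <;> nlinarith
  · -- a1 > 0, b1 = 0 (b0 > 0): false ↔ det < 0
    rw [kappa, kappa, if_neg (ne_of_gt ha1), if_pos hb1]
    simp only [det2, hb1, mul_zero, zero_sub]
    constructor
    · intro h; exact absurd h (by simp)
    · intro h; nlinarith
  · -- a1 = 0 (a0>0), b1 > 0 : true ↔ det > 0
    rw [kappa, kappa, if_pos ha1, if_neg (ne_of_gt hb1)]
    simp only [det2, ha1, zero_mul, sub_zero]
    constructor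
    · intro _; positivity
    · intro _; exact WithBot.bot_lt_coe _
  · rw [kappa, kappa, if_pos ha1, if_pos hb1]
    simp only [det2, ha1, hb1, mul_zero, zero_mul, sub_zero, lt_self_iff_false]


lemma eq_comb_iff (x u1 u2 : Fin 2 → F) (c1 c2 : F) :
    x = c1 • u1 + c2 • u2 ↔ (x 0 = c1 * u1 0 + c2 * u2 0 ∧ x 1 = c1 * u1 1 + c2 * u2 1) := by
  constructor
  · intro h
    constructor <;> (rw [h]; simp)
  · intro ⟨h0, h1⟩
    funext t; fin_cases t <;> simpa

lemma div_pos_of_mul_pos {a b : F} (h : 0 < a * b) : 0 < b / a := by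
  rcases lt_trichotomy a 0 with h' | h' | h'
  · have hb : b < 0 := by nlinarith
    exact div_pos_of_neg_of_neg hb h'
  · rw [h'] at h; simp at h
  · exact div_pos (by nlinarith) h'

lemma cramer (u1 u2 x : Fin 2 → F) (hd : det2 u1 u2 ≠ 0) :
    (∃ c1 c2 : F, 0 < c1 ∧ 0 < c2 ∧ x = c1 • u1 + c2 • u2) ↔
      (0 < det2 u1 u2 * det2 x u2 ∧ 0 < det2 u1 u2 * det2 u1 x) := by
  constructor
  · rintro ⟨c1, c2, hc1, hc2, hx⟩
    rw [eq_comb_iff] at hx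
    obtain ⟨h0, h1⟩ := hx
    have e1 : det2 x u2 = c1 * det2 u1 u2 := by simp only [det2, h0, h1]; ring
    have e2 : det2 u1 x = c2 * det2 u1 u2 := by simp only [det2, h0, h1]; ring
    have hds : 0 < det2 u1 u2 * det2 u1 u2 := mul_self_pos.mpr hd
    rw [e1, e2]
    constructor <;> nlinarith
  · rintro ⟨h1, h2⟩
    refine ⟨det2 x u2 / det2 u1 u2, det2 u1 x / det2 u1 u2,
      div_pos_of_mul_pos h1, div_pos_of_mul_pos h2, ?_⟩
    rw [eq_comb_iff]
    constructor
    · rw [div_mul_eq_mul_div, div_mul_eq_mul_div, ← add_div, eq_div_iff hd]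
      simp only [det2]; ring
    · rw [div_mul_eq_mul_div, div_mul_eq_mul_div, ← add_div, eq_div_iff hd]
      simp only [det2]; ring

lemma pair_comb_iff {n : ℕ} {i j : Fin n} (hij : i ≠ j) (g : Fin n → Fin 2 → F)
    (X : Fin 2 → F) :
    (∃ c : Fin n → F, (∀ t ∈ ({i, j} : Finset (Fin n)), 0 < c t) ∧
        X = ∑ t ∈ ({i, j} : Finset (Fin n)), c t • g t) ↔
      (∃ c1 c2 : F, 0 < c1 ∧ 0 < c2 ∧ X = c1 • g i + c2 • g j) := by
  constructor
  · rintro ⟨c, hc, hX⟩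
    refine ⟨c i, c j, hc i (by simp), hc j (by simp), ?_⟩
    rwa [Finset.sum_pair hij] at hX
  · rintro ⟨c1, c2, hc1, hc2, hX⟩
    refine ⟨fun t => if t = i then c1 else c2, ?_, ?_⟩
    · intro t ht
      rcases Finset.mem_insert.mp ht with rfl | ht
      · simpa
      · rw [Finset.mem_singleton] at ht
        subst ht
        simpa [if_neg (Ne.symm hij)]
    · rw [Finset.sum_pair hij]
      simpa [if_neg (Ne.symm hij)] using hX

lemma pos_iff_of_sign_eq {x y : F} (h : sign x = sign y) : 0 < x ↔ 0 < y := by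
  rw [← sign_eq_one_iff, ← sign_eq_one_iff, h]

lemma sign_eq_of_pos_iff {x y : F} (hx : x ≠ 0) (hy : y ≠ 0) (h : 0 < x ↔ 0 < y) :
    sign x = sign y := by
  rcases lt_trichotomy 0 x with h1 | h1 | h1
  · rw [sign_pos h1, sign_pos (h.mp h1)]
  · exact absurd h1.symm hx
  · have h2 : y < 0 := by
      rcases lt_trichotomy 0 y with h2 | h2 | h2
      · exact absurd (h.mpr h2) (not_lt.mpr h1.le)
      · exact absurd h2.symm hy
      · exact h2
    rw [sign_neg h1, sign_neg h2]


end CPB2aux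

def IsCPB {F : Type*} [Field F] [LinearOrder F] [IsStrictOrderedRing F] {m n : ℕ}
    (v w : Fin n → Fin m → F) (σ : Equiv.Perm (Fin n)) (η : Fin n → F) : Prop :=
  (∀ i, η i = 1 ∨ η i = -1) ∧
  ∀ T : Finset (Fin n), T.card = m →
    ∀ ζ : Fin n → F, (∀ i, ζ i = 1 ∨ ζ i = -1) →
      LinearIndependent F (fun i : {x // x ∈ T} => ζ i.1 • v i.1) →
      ∀ (k : Fin n) (ξ : F), ξ = 1 ∨ ξ = -1 →
        ((∃ c : Fin n → F, (∀ i ∈ T, 0 < c i) ∧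
            ξ • v k = ∑ i ∈ T, c i • (ζ i • v i)) ↔
          (∃ c : Fin n → F, (∀ i ∈ T, 0 < c i) ∧
            (ξ * η k) • w (σ k) = ∑ i ∈ T, c i • ((ζ i * η i) • w (σ i))))

open CPB2aux in
/-- Any two normal systems of the same cardinality `n` in the plane `F^2` are
isomorphic: for any two families `{± v i}`, `{± w i}` of antipodal pairs of nonzero
vectors lying on `n` pairwise distinct lines through the origin, there is a convex
positive bijection between them. -/
theorem two_dimensional_normal_systems_isomorphic {F : Type*} [Field F] [LinearOrder F] [IsStrictOrderedRing F]
    {n : ℕ} (v w : Fin n → Fin 2 → F)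
    (hv0 : ∀ i, v i ≠ 0) (hw0 : ∀ i, w i ≠ 0)
    (hv : ∀ i j : Fin n, i ≠ j → Submodule.span F {v i} ≠ Submodule.span F {v j})
    (hw : ∀ i j : Fin n, i ≠ j → Submodule.span F {w i} ≠ Submodule.span F {w j}) :
    ∃ (σ : Equiv.Perm (Fin n)) (η : Fin n → F), IsCPB v w σ η := by
  classical
  choose sv hsv1 hsva using fun i => exists_sign_up (hv0 i)
  choose sw hsw1 hswb using fun i => exists_sign_up (hw0 i)
  have hva : ∀ i j : Fin n, i ≠ j → det2 (v i) (v j) ≠ 0 :=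
    fun i j hij => det2_ne_zero (hv0 i) (hv0 j) (hv i j hij)
  have hwa : ∀ i j : Fin n, i ≠ j → det2 (w i) (w j) ≠ 0 :=
    fun i j hij => det2_ne_zero (hw0 i) (hw0 j) (hw i j hij)
  have hsvne : ∀ i, sv i ≠ 0 := fun i => by
    rcases hsv1 i with h | h <;> rw [h] <;> norm_num
  have hswne : ∀ i, sw i ≠ 0 := fun i => by
    rcases hsw1 i with h | h <;> rw [h] <;> norm_num
  set A : Fin n → WithBot F := fun i => kappa (sv i • v i) with hAdef
  set B : Fin n → WithBot F := fun i => kappa (sw i • w i) with hBdef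
  have hdetA : ∀ i j : Fin n, i ≠ j → det2 (sv i • v i) (sv j • v j) ≠ 0 := by
    intro i j hij
    rw [det2_smul_smul]
    exact mul_ne_zero (mul_ne_zero (hsvne i) (hsvne j)) (hva i j hij)
  have hdetB : ∀ i j : Fin n, i ≠ j → det2 (sw i • w i) (sw j • w j) ≠ 0 := by
    intro i j hij
    rw [det2_smul_smul]
    exact mul_ne_zero (mul_ne_zero (hswne i) (hswne j)) (hwa i j hij)
  have hAinj : Function.Injective A := by
    intro i j hAij
    by_contra hij
    have h1 : ¬ (0 < det2 (sv i • v i) (sv j • v j)) := by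
      rw [← kappa_lt_iff (hsva i) (hsva j)]
      exact fun hc => absurd hAij (ne_of_lt hc)
    have h2 : ¬ (0 < det2 (sv j • v j) (sv i • v i)) := by
      rw [← kappa_lt_iff (hsva j) (hsva i)]
      exact fun hc => absurd hAij.symm (ne_of_lt hc)
    rw [det2_swap] at h2
    exact hdetA i j hij (by push_neg at h1 h2; linarith)
  have hBinj : Function.Injective B := by
    intro i j hBij
    by_contra hij
    have h1 : ¬ (0 < det2 (sw i • w i) (sw j • w j)) := by
      rw [← kappa_lt_iff (hswb i) (hswb j)]
      exact fun hc => absurd hBij (ne_of_lt hc)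
    have h2 : ¬ (0 < det2 (sw j • w j) (sw i • w i)) := by
      rw [← kappa_lt_iff (hswb j) (hswb i)]
      exact fun hc => absurd hBij.symm (ne_of_lt hc)
    rw [det2_swap] at h2
    exact hdetB i j hij (by push_neg at h1 h2; linarith)
  set σ : Equiv.Perm (Fin n) := Tuple.sort B * (Tuple.sort A)⁻¹ with hσdef
  have hgm : StrictMono (A ∘ Tuple.sort A) :=
    (Tuple.monotone_sort A).strictMono_of_injective
      (hAinj.comp (Tuple.sort A).injective)
  have hhm : StrictMono (B ∘ Tuple.sort B) :=
    (Tuple.monotone_sort B).strictMono_of_injective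
      (hBinj.comp (Tuple.sort B).injective)
  have hσlt : ∀ i j, A i < A j ↔ B (σ i) < B (σ j) := by
    intro i j
    have e : ∀ t, A t = (A ∘ Tuple.sort A) ((Tuple.sort A)⁻¹ t) := fun t => by simp
    have e2 : ∀ t, B (σ t) = (B ∘ Tuple.sort B) ((Tuple.sort A)⁻¹ t) := fun t => by
      simp [hσdef, Equiv.Perm.mul_apply]
    rw [e i, e j, hgm.lt_iff_lt, e2 i, e2 j, hhm.lt_iff_lt]
  set η : Fin n → F := fun i => sv i * sw (σ i) with hηdef
  have hη1 : ∀ i, η i = 1 ∨ η i = -1 := fun i => by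
    rcases hsv1 i with h | h <;> rcases hsw1 (σ i) with h' | h' <;>
      simp [hηdef, h, h']
  have key : ∀ i j, sign (det2 (v i) (v j)) =
      sign (η i * η j * det2 (w (σ i)) (w (σ j))) := by
    intro i j
    rcases eq_or_ne i j with rfl | hij
    · rw [det2_self, det2_self, mul_zero]
    · have hσij : σ i ≠ σ j := fun hc => hij (σ.injective hc)
      have h1 := hdetA i j hij
      have h2 := hdetB (σ i) (σ j) hσij
      have hpos : 0 < det2 (sv i • v i) (sv j • v j) ↔
          0 < det2 (sw (σ i) • w (σ i)) (sw (σ j) • w (σ j)) := by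
        rw [← kappa_lt_iff (hsva i) (hsva j), ← kappa_lt_iff (hswb (σ i)) (hswb (σ j))]
        exact hσlt i j
      have hs := sign_eq_of_pos_iff h1 h2 hpos
      have e1 : det2 (v i) (v j) =
          sv i * sv j * det2 (sv i • v i) (sv j • v j) := by
        rw [det2_smul_smul]
        rcases hsv1 i with h | h <;> rcases hsv1 j with h' | h' <;>
          rw [h, h'] <;> ring
      have e2 : η i * η j * det2 (w (σ i)) (w (σ j)) =
          sv i * sv j * det2 (sw (σ i) • w (σ i)) (sw (σ j) • w (σ j)) := by
        simp only [hηdef, det2_smul_smul]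
        rcases hsw1 (σ i) with h | h <;> rcases hsw1 (σ j) with h' | h' <;>
          rw [h, h'] <;> ring
      simp only [e1, e2, sign_mul, hs]
  refine ⟨σ, η, hη1, ?_⟩
  intro T hT ζ hζ _ k ξ hξ
  obtain ⟨i, j, hij, rfl⟩ := Finset.card_eq_two.mp hT
  have hζne : ∀ t, ζ t ≠ 0 := fun t => by
    rcases hζ t with h | h <;> rw [h] <;> norm_num
  have hηne : ∀ t, η t ≠ 0 := fun t => by
    rcases hη1 t with h | h <;> rw [h] <;> norm_num
  have hσij : σ i ≠ σ j := fun hc => hij (σ.injective hc)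
  have hd : det2 (ζ i • v i) (ζ j • v j) ≠ 0 := by
    rw [det2_smul_smul]
    exact mul_ne_zero (mul_ne_zero (hζne i) (hζne j)) (hva i j hij)
  have hd' : det2 ((ζ i * η i) • w (σ i)) ((ζ j * η j) • w (σ j)) ≠ 0 := by
    rw [det2_smul_smul]
    exact mul_ne_zero (mul_ne_zero (mul_ne_zero (hζne i) (hηne i))
      (mul_ne_zero (hζne j) (hηne j))) (hwa (σ i) (σ j) hσij)
  have hζi2 : ζ i * ζ i = 1 := by rcases hζ i with h | h <;> rw [h] <;> norm_num
  have hζj2 : ζ j * ζ j = 1 := by rcases hζ j with h | h <;> rw [h] <;> norm_num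
  have k1 : sign (det2 (v i) (v j)) =
      sign (η i) * sign (η j) * sign (det2 (w (σ i)) (w (σ j))) := by
    rw [key i j, sign_mul, sign_mul]
  have k2 : sign (det2 (v k) (v j)) =
      sign (η k) * sign (η j) * sign (det2 (w (σ k)) (w (σ j))) := by
    rw [key k j, sign_mul, sign_mul]
  have k3 : sign (det2 (v i) (v k)) =
      sign (η i) * sign (η k) * sign (det2 (w (σ i)) (w (σ k))) := by
    rw [key i k, sign_mul, sign_mul]
  have C1 : (0 < ζ i * ζ j * det2 (v i) (v j) * (ξ * ζ j * det2 (v k) (v j))) ↔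
      (0 < ζ i * η i * (ζ j * η j) * det2 (w (σ i)) (w (σ j)) *
        (ξ * η k * (ζ j * η j) * det2 (w (σ k)) (w (σ j)))) := by
    rw [show ζ i * ζ j * det2 (v i) (v j) * (ξ * ζ j * det2 (v k) (v j)) =
        ζ i * ξ * (det2 (v i) (v j) * det2 (v k) (v j)) from by
      linear_combination (ζ i * ξ * det2 (v i) (v j) * det2 (v k) (v j)) * hζj2]
    rw [show ζ i * η i * (ζ j * η j) * det2 (w (σ i)) (w (σ j)) *
        (ξ * η k * (ζ j * η j) * det2 (w (σ k)) (w (σ j))) =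
        ζ i * ξ * ((η i * η j * det2 (w (σ i)) (w (σ j))) *
          (η k * η j * det2 (w (σ k)) (w (σ j)))) from by
      linear_combination (ζ i * ξ * η i * η j * η k * η j *
        det2 (w (σ i)) (w (σ j)) * det2 (w (σ k)) (w (σ j))) * hζj2]
    apply pos_iff_of_sign_eq
    simp only [sign_mul]
    rw [← sign_mul (η i) (η j), ← sign_mul (η k) (η j)]
    rw [show sign (η i * η j) * sign (det2 (w (σ i)) (w (σ j))) =
      sign (η i) * sign (η j) * sign (det2 (w (σ i)) (w (σ j))) from by rw [sign_mul]]
    rw [show sign (η k * η j) * sign (det2 (w (σ k)) (w (σ j))) =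
      sign (η k) * sign (η j) * sign (det2 (w (σ k)) (w (σ j))) from by rw [sign_mul]]
    rw [k1, k2]
  have C2 : (0 < ζ i * ζ j * det2 (v i) (v j) * (ζ i * ξ * det2 (v i) (v k))) ↔
      (0 < ζ i * η i * (ζ j * η j) * det2 (w (σ i)) (w (σ j)) *
        (ζ i * η i * (ξ * η k) * det2 (w (σ i)) (w (σ k)))) := by
    rw [show ζ i * ζ j * det2 (v i) (v j) * (ζ i * ξ * det2 (v i) (v k)) =
        ζ j * ξ * (det2 (v i) (v j) * det2 (v i) (v k)) from by
      linear_combination (ζ j * ξ * det2 (v i) (v j) * det2 (v i) (v k)) * hζi2]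
    rw [show ζ i * η i * (ζ j * η j) * det2 (w (σ i)) (w (σ j)) *
        (ζ i * η i * (ξ * η k) * det2 (w (σ i)) (w (σ k))) =
        ζ j * ξ * ((η i * η j * det2 (w (σ i)) (w (σ j))) *
          (η i * η k * det2 (w (σ i)) (w (σ k)))) from by
      linear_combination (ζ j * ξ * η i * η i * η j * η k *
        det2 (w (σ i)) (w (σ j)) * det2 (w (σ i)) (w (σ k))) * hζi2]
    apply pos_iff_of_sign_eq
    simp only [sign_mul]
    rw [k1, k3]
  refine Iff.trans (pair_comb_iff hij _ _) (Iff.trans ?_ (pair_comb_iff hij _ _).symm)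
  refine Iff.trans (cramer _ _ _ hd) (Iff.trans ?_ (cramer _ _ _ hd').symm)
  simp only [det2_smul_smul]
  exact and_congr C1 C2
end

section
/- (Observation on the central point of intersection.) Let 𝔽 be an ordered field and let L_1, L_2, L_3, L_4 be four lines in general position in 𝔽^2 (pairwise non-parallel, no three concurrent) such that the three points L_1 ∩ L_2, L_1 ∩ L_3, L_2 ∩ L_3 all lie strictly on one side of L_4. Fix nonzero normal vectors n_1, n_2, n_3, n_4 of L_1, L_2, L_3, L_4 respectively, and for each pair 1 ≤ i < j ≤ 3 write n_4 = α_{ij} n_i + β_{ij} n_j (these coefficients exist, are unique, and are nonzero). Each of n_1, n_2, n_3 occurs in exactly two of these three expressions; then there is exactly one index k ∈ {1, 2, 3} whose two coefficients (in its two occurrences) have opposite signs, and this k is precisely the index for which the point L_k ∩ L_4 lies strictly between the other two of the three points L_1 ∩ L_4, L_2 ∩ L_4, L_3 ∩ L_4 on L_4. -/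
open Finset

/-- The affine hyperplane in `F^m` with equation `∑ j, a j * x j = b`. -/
def hypSet {F : Type*} [Field F] {m : ℕ} (a : Fin m → F) (b : F) :
    Set (Fin m → F) :=
  {x | ∑ j, a j * x j = b}

/-- A family of `n` affine hyperplanes (given by normal vectors `a i` and constants
`b i`) in `F^m` is a hyperplane arrangement in general position: every nonempty
subfamily of `r ≤ m` of the hyperplanes meets in a nonempty affine subspace of
dimension `m - r`, and any more than `m` of the hyperplanes have empty intersection. -/
def IsArrangement {F : Type*} [Field F] {m n : ℕ}
    (a : Fin n → Fin m → F) (b : Fin n → F) : Prop :=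
  (∀ i, a i ≠ 0) ∧
  (∀ T : Finset (Fin n), T.Nonempty → T.card ≤ m →
    ∃ A : AffineSubspace F (Fin m → F),
      (A : Set (Fin m → F)) = ⋂ i ∈ T, hypSet (a i) (b i) ∧
      (A : Set (Fin m → F)).Nonempty ∧
      Module.finrank F A.direction = m - T.card) ∧
  (∀ T : Finset (Fin n), m < T.card → ⋂ i ∈ T, hypSet (a i) (b i) = ∅)

private lemma key_id {F : Type*} [Field F]
    (a0 a1 a3 : Fin 2 → F) (b0 b1 b3 c0 c1 : F)
    (hE0 : a3 0 = c0 * a0 0 + c1 * a1 0)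
    (hE1 : a3 1 = c0 * a0 1 + c1 * a1 1)
    (p q : Fin 2 → F)
    (hp0 : a0 0 * p 0 + a0 1 * p 1 = b0)
    (hp1 : a1 0 * p 0 + a1 1 * p 1 = b1)
    (hq0 : a0 0 * q 0 + a0 1 * q 1 = b0)
    (hq3 : a3 0 * q 0 + a3 1 * q 1 = b3) :
    c1 * (a1 0 * q 0 + a1 1 * q 1 - b1) = -(a3 0 * p 0 + a3 1 * p 1 - b3) := by
  linear_combination (p 0 - q 0) * hE0 + (p 1 - q 1) * hE1 + hq3 - c0 * hq0 + c0 * hp0 + c1 * hp1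

private lemma seg0 {F : Type*} [Field F] [LinearOrder F] [IsStrictOrderedRing F]
    (q0 q1 q2 : Fin 2 → F) (t : F)
    (ht0 : q2 0 - q0 0 = t * (q1 0 - q0 0))
    (ht1 : q2 1 - q0 1 = t * (q1 1 - q0 1))
    (n : Fin 2 → F) (d : F)
    (h0 : n 0 * q0 0 + n 1 * q0 1 = d)
    (h1 : n 0 * q1 0 + n 1 * q1 1 ≠ d) :
    q0 ∈ openSegment F q1 q2 ↔ t < 0 := by
  constructor
  · rintro ⟨α, β, hα, hβ, hαβ, heq⟩
    have e0 : α * q1 0 + β * q2 0 = q0 0 := by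
      have := congrFun heq 0; simpa using this
    have e1 : α * q1 1 + β * q2 1 = q0 1 := by
      have := congrFun heq 1; simpa using this
    have key : (α + β * t) * (n 0 * q1 0 + n 1 * q1 1 - d) = 0 := by
      linear_combination (n 0) * e0 + (n 1) * e1 - β * ((n 0) * ht0 + (n 1) * ht1)
        + (1 - β + β * t) * h0 - d * hαβ
    rcases mul_eq_zero.mp key with h | h
    · nlinarith
    · exact absurd (by linarith [sub_eq_zero.mp h]) h1
  · intro ht
    have h1t : (0 : F) < 1 - t := by linarith
    refine ⟨-t / (1 - t), 1 / (1 - t), div_pos (by linarith) h1t,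
      div_pos one_pos h1t, by rw [← add_div, div_eq_one_iff_eq h1t.ne']; ring, ?_⟩
    funext k
    fin_cases k
    · simp only [Pi.add_apply, Pi.smul_apply, smul_eq_mul, Fin.isValue, Fin.zero_eta, Fin.mk_one]
      field_simp
      linear_combination ht0
    · simp only [Pi.add_apply, Pi.smul_apply, smul_eq_mul, Fin.isValue, Fin.zero_eta, Fin.mk_one]
      field_simp
      linear_combination ht1


private lemma seg1 {F : Type*} [Field F] [LinearOrder F] [IsStrictOrderedRing F]
    (q0 q1 q2 : Fin 2 → F) (t : F)
    (ht0 : q2 0 - q0 0 = t * (q1 0 - q0 0))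
    (ht1 : q2 1 - q0 1 = t * (q1 1 - q0 1))
    (n : Fin 2 → F) (d : F)
    (h0 : n 0 * q1 0 + n 1 * q1 1 = d)
    (h1 : n 0 * q0 0 + n 1 * q0 1 ≠ d) :
    q1 ∈ openSegment F q0 q2 ↔ 1 < t := by
  constructor
  · rintro ⟨α, β, hα, hβ, hαβ, heq⟩
    have e0 : α * q0 0 + β * q2 0 = q1 0 := by
      have := congrFun heq 0; simpa using this
    have e1 : α * q0 1 + β * q2 1 = q1 1 := by
      have := congrFun heq 1; simpa using this
    have key : (α + β * (1 - t)) * (n 0 * q0 0 + n 1 * q0 1 - d) = 0 := by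
      linear_combination (n 0) * e0 + (n 1) * e1 - β * ((n 0) * ht0 + (n 1) * ht1)
        + (1 - β * t) * h0 - d * hαβ
    rcases mul_eq_zero.mp key with h | h
    · nlinarith
    · exact absurd (by linarith [sub_eq_zero.mp h]) h1
  · intro ht
    have ht0' : (0 : F) < t := by linarith
    refine ⟨(t - 1) / t, 1 / t, div_pos (by linarith) ht0',
      div_pos one_pos ht0', by rw [← add_div, div_eq_one_iff_eq ht0'.ne']; ring, ?_⟩
    funext k
    fin_cases k
    · simp only [Pi.add_apply, Pi.smul_apply, smul_eq_mul, Fin.isValue, Fin.zero_eta, Fin.mk_one]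
      field_simp
      linear_combination ht0
    · simp only [Pi.add_apply, Pi.smul_apply, smul_eq_mul, Fin.isValue, Fin.zero_eta, Fin.mk_one]
      field_simp
      linear_combination ht1

private lemma seg2 {F : Type*} [Field F] [LinearOrder F] [IsStrictOrderedRing F]
    (q0 q1 q2 : Fin 2 → F) (t : F)
    (ht0 : q2 0 - q0 0 = t * (q1 0 - q0 0))
    (ht1 : q2 1 - q0 1 = t * (q1 1 - q0 1))
    (n : Fin 2 → F) (d : F)
    (h0 : n 0 * q2 0 + n 1 * q2 1 = d)
    (h1 : n 0 * q0 0 + n 1 * q0 1 ≠ d) :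
    q2 ∈ openSegment F q0 q1 ↔ (0 < t ∧ t < 1) := by
  constructor
  · rintro ⟨α, β, hα, hβ, hαβ, heq⟩
    have e0 : α * q0 0 + β * q1 0 = q2 0 := by
      have := congrFun heq 0; simpa using this
    have e1 : α * q0 1 + β * q1 1 = q2 1 := by
      have := congrFun heq 1; simpa using this
    have key : (α * t - β * (1 - t)) * (n 0 * q0 0 + n 1 * q0 1 - d) = 0 := by
      linear_combination t * ((n 0) * e0 + (n 1) * e1) + (t - β) * h0 - t * d * hαβ
        + β * ((n 0) * ht0 + (n 1) * ht1)
    rcases mul_eq_zero.mp key with h | h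
    · have h0t : 0 < t := by nlinarith
      exact ⟨h0t, by nlinarith⟩
    · exact absurd (by linarith [sub_eq_zero.mp h]) h1
  · rintro ⟨h0t, h1t⟩
    refine ⟨1 - t, t, by linarith, h0t, by ring, ?_⟩
    funext k
    fin_cases k
    · simp only [Pi.add_apply, Pi.smul_apply, smul_eq_mul, Fin.isValue, Fin.zero_eta, Fin.mk_one]
      linear_combination -ht0
    · simp only [Pi.add_apply, Pi.smul_apply, smul_eq_mul, Fin.isValue, Fin.zero_eta, Fin.mk_one]
      linear_combination -ht1


private lemma signs {F : Type*} [Field F] [LinearOrder F] [IsStrictOrderedRing F]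
    {s u v A1 A2 B0 B2 C0 C1 t c01 c02 c10 c12 c20 c21 : F}
    (hsu : 0 < s * u) (hsv : 0 < s * v) (huv : 0 < u * v)
    (k10 : c10 * A1 = -s) (k01 : c01 * B0 = -s)
    (k20 : c20 * A2 = -u) (k02 : c02 * C0 = -u)
    (k21 : c21 * B2 = -v) (k12 : c12 * C1 = -v)
    (hC0 : C0 = t * B0) (hC1 : C1 = (1 - t) * A1)
    (hA2B2 : (1 - t) * A2 = -(t * B2)) :
    (c01 * c02 < 0 ↔ t < 0) ∧ (c10 * c12 < 0 ↔ 1 < t) ∧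
      (c20 * c21 < 0 ↔ (0 < t ∧ t < 1)) ∧ t ≠ 0 ∧ t ≠ 1 := by
  have hsne : s ≠ 0 := fun h => by rw [h] at hsu; simp at hsu
  have hune : u ≠ 0 := fun h => by rw [h] at huv; simp at huv
  have hvne : v ≠ 0 := fun h => by rw [h] at hsv; simp at hsv
  have hA1 : A1 ≠ 0 := right_ne_zero_of_mul (a := c10) (by rw [k10]; exact neg_ne_zero.mpr hsne)
  have hB0 : B0 ≠ 0 := right_ne_zero_of_mul (a := c01) (by rw [k01]; exact neg_ne_zero.mpr hsne)
  have hA2 : A2 ≠ 0 := right_ne_zero_of_mul (a := c20) (by rw [k20]; exact neg_ne_zero.mpr hune)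
  have hC0' : C0 ≠ 0 := right_ne_zero_of_mul (a := c02) (by rw [k02]; exact neg_ne_zero.mpr hune)
  have hB2 : B2 ≠ 0 := right_ne_zero_of_mul (a := c21) (by rw [k21]; exact neg_ne_zero.mpr hvne)
  have hC1' : C1 ≠ 0 := right_ne_zero_of_mul (a := c12) (by rw [k12]; exact neg_ne_zero.mpr hvne)
  have htne0 : t ≠ 0 := fun h => hC0' (by rw [hC0, h, zero_mul])
  have htne1 : t ≠ 1 := fun h => hC1' (by rw [hC1, h]; ring)
  have hB0sq : 0 < B0 * B0 := mul_self_pos.mpr hB0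
  have hA1sq : 0 < A1 * A1 := mul_self_pos.mpr hA1
  have hB2sq : 0 < B2 * B2 := mul_self_pos.mpr hB2
  have e0 : c01 * c02 * (t * (B0 * B0)) = s * u := by
    linear_combination (c02 * C0) * k01 - s * k02 - (c01 * c02 * B0) * hC0
  have e1 : c10 * c12 * ((1 - t) * (A1 * A1)) = s * v := by
    linear_combination (c12 * C1) * k10 - s * k12 - (c10 * c12 * A1) * hC1
  have e2 : c20 * c21 * (A2 * B2) = u * v := by
    linear_combination (c21 * B2) * k20 - u * k21
  have hW : (1 - t) * (A2 * B2) = -(t * (B2 * B2)) := by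
    linear_combination B2 * hA2B2
  refine ⟨⟨?_, ?_⟩, ⟨?_, ?_⟩, ⟨?_, ?_⟩, htne0, htne1⟩
  · intro h
    by_contra h'
    push_neg at h'
    have q : c01 * c02 * (t * (B0 * B0)) ≤ 0 :=
      mul_nonpos_iff.mpr (Or.inr ⟨h.le, mul_nonneg h' hB0sq.le⟩)
    linarith
  · intro h
    by_contra h'
    push_neg at h'
    have q : c01 * c02 * (t * (B0 * B0)) ≤ 0 :=
      mul_nonpos_iff.mpr (Or.inl ⟨h', (mul_neg_of_neg_of_pos h hB0sq).le⟩)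
    linarith
  · intro h
    by_contra h'
    push_neg at h'
    have q : c10 * c12 * ((1 - t) * (A1 * A1)) ≤ 0 :=
      mul_nonpos_iff.mpr (Or.inr ⟨h.le, mul_nonneg (by linarith) hA1sq.le⟩)
    linarith
  · intro h
    by_contra h'
    push_neg at h'
    have q : c10 * c12 * ((1 - t) * (A1 * A1)) ≤ 0 :=
      mul_nonpos_iff.mpr
        (Or.inl ⟨h', (mul_neg_of_neg_of_pos (by linarith : (1:F) - t < 0) hA1sq).le⟩)
    linarith
  · intro h
    have hZ : A2 * B2 < 0 := by
      by_contra h'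
      push_neg at h'
      have q : c20 * c21 * (A2 * B2) ≤ 0 := mul_nonpos_iff.mpr (Or.inr ⟨h.le, h'⟩)
      linarith
    constructor
    · rcases lt_trichotomy t 0 with h2 | h2 | h2
      · have p1 := mul_neg_of_pos_of_neg (by linarith : (0:F) < 1 - t) hZ
        have p2 := mul_neg_of_neg_of_pos h2 hB2sq
        linarith
      · exact absurd h2 htne0
      · exact h2
    · rcases lt_trichotomy t 1 with h2 | h2 | h2
      · exact h2
      · exact absurd h2 htne1
      · have p1 := mul_pos_of_neg_of_neg (by linarith : (1:F) - t < 0) hZ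
        have p2 := mul_pos (by linarith : (0:F) < t) hB2sq
        linarith
  · rintro ⟨h0t, h1t⟩
    have hZ : A2 * B2 < 0 := by
      by_contra hz
      push_neg at hz
      have p1 := mul_nonneg (by linarith : (0:F) ≤ 1 - t) hz
      have p2 := mul_pos h0t hB2sq
      linarith
    by_contra h'
    push_neg at h'
    have q : c20 * c21 * (A2 * B2) ≤ 0 := mul_nonpos_iff.mpr (Or.inl ⟨h', hZ.le⟩)
    linarith

set_option maxHeartbeats 1000000 in
/-- **Observation on the central point of intersection.** Let `L₀, L₁, L₂, L₃` be four
lines in general position in `F²` (indexed by `Fin 4`, with `L₃` playing the role of the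
"fourth line") such that the three intersection points of `L₀, L₁, L₂` lie strictly on
one side of `L₃`.  Writing the normal `a 3` of `L₃` as `a 3 = c i j • a i + c j i • a j`
for each pair `i < j` in `{0, 1, 2}`, exactly one index `k ∈ {0, 1, 2}` has its two
coefficients (in its two occurrences) of opposite signs, and `k` is precisely the index
for which `L_k ∩ L₃` lies strictly between the other two of the three points
`L₀ ∩ L₃, L₁ ∩ L₃, L₂ ∩ L₃`. -/
theorem central_point_observation {F : Type*} [Field F] [LinearOrder F] [IsStrictOrderedRing F]
    (a : Fin 4 → Fin 2 → F) (b : Fin 4 → F) (hA : IsArrangement a b)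
    (p01 p02 p12 : Fin 2 → F)
    (hp01 : p01 ∈ hypSet (a 0) (b 0) ∧ p01 ∈ hypSet (a 1) (b 1))
    (hp02 : p02 ∈ hypSet (a 0) (b 0) ∧ p02 ∈ hypSet (a 2) (b 2))
    (hp12 : p12 ∈ hypSet (a 1) (b 1) ∧ p12 ∈ hypSet (a 2) (b 2))
    (hside : (∑ j, a 3 j * p01 j < b 3 ∧ ∑ j, a 3 j * p02 j < b 3 ∧
                ∑ j, a 3 j * p12 j < b 3) ∨
             (b 3 < ∑ j, a 3 j * p01 j ∧ b 3 < ∑ j, a 3 j * p02 j ∧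
                b 3 < ∑ j, a 3 j * p12 j))
    (c : Fin 4 → Fin 4 → F)
    (hc : ∀ i j : Fin 4, i ≠ j → i ≠ 3 → j ≠ 3 → a 3 = c i j • a i + c j i • a j)
    (q : Fin 3 → Fin 2 → F)
    (hq : ∀ k : Fin 3,
      q k ∈ hypSet (a k.castSucc) (b k.castSucc) ∧ q k ∈ hypSet (a 3) (b 3)) :
    ((c 0 1 * c 0 2 < 0 ∧ ¬ (c 1 0 * c 1 2 < 0) ∧ ¬ (c 2 0 * c 2 1 < 0)) ∨
     (¬ (c 0 1 * c 0 2 < 0) ∧ c 1 0 * c 1 2 < 0 ∧ ¬ (c 2 0 * c 2 1 < 0)) ∨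
     (¬ (c 0 1 * c 0 2 < 0) ∧ ¬ (c 1 0 * c 1 2 < 0) ∧ c 2 0 * c 2 1 < 0)) ∧
    (c 0 1 * c 0 2 < 0 ↔ q 0 ∈ openSegment F (q 1) (q 2)) ∧
    (c 1 0 * c 1 2 < 0 ↔ q 1 ∈ openSegment F (q 0) (q 2)) ∧
    (c 2 0 * c 2 1 < 0 ↔ q 2 ∈ openSegment F (q 0) (q 1)) := by
  obtain ⟨hne, -, -⟩ := hA
  simp only [Fin.sum_univ_two] at hside
  have hmem : ∀ (i : Fin 4) (x : Fin 2 → F),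
      x ∈ hypSet (a i) (b i) ↔ a i 0 * x 0 + a i 1 * x 1 = b i := by
    intro i x; simp [hypSet, Fin.sum_univ_two]
  have h01a := (hmem 0 p01).1 hp01.1
  have h01b := (hmem 1 p01).1 hp01.2
  have h02a := (hmem 0 p02).1 hp02.1
  have h02c := (hmem 2 p02).1 hp02.2
  have h12b := (hmem 1 p12).1 hp12.1
  have h12c := (hmem 2 p12).1 hp12.2
  have hq00 : a 0 0 * q 0 0 + a 0 1 * q 0 1 = b 0 := (hmem 0 (q 0)).1 (hq 0).1
  have hq03 : a 3 0 * q 0 0 + a 3 1 * q 0 1 = b 3 := (hmem 3 (q 0)).1 (hq 0).2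
  have hq11 : a 1 0 * q 1 0 + a 1 1 * q 1 1 = b 1 := (hmem 1 (q 1)).1 (hq 1).1
  have hq13 : a 3 0 * q 1 0 + a 3 1 * q 1 1 = b 3 := (hmem 3 (q 1)).1 (hq 1).2
  have hq22 : a 2 0 * q 2 0 + a 2 1 * q 2 1 = b 2 := (hmem 2 (q 2)).1 (hq 2).1
  have hq23 : a 3 0 * q 2 0 + a 3 1 * q 2 1 = b 3 := (hmem 3 (q 2)).1 (hq 2).2
  have hcp : ∀ i j : Fin 4, i ≠ j → i ≠ 3 → j ≠ 3 → ∀ k : Fin 2,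
      a 3 k = c i j * a i k + c j i * a j k := by
    intro i j h1 h2 h3 k
    have := congrFun (hc i j h1 h2 h3) k
    simpa using this
  -- the six coefficient identities
  have k10 := key_id (a 0) (a 1) (a 3) (b 0) (b 1) (b 3) (c 0 1) (c 1 0)
    (hcp 0 1 (by decide) (by decide) (by decide) 0)
    (hcp 0 1 (by decide) (by decide) (by decide) 1) p01 (q 0) h01a h01b hq00 hq03
  have k01 := key_id (a 1) (a 0) (a 3) (b 1) (b 0) (b 3) (c 1 0) (c 0 1)
    (hcp 1 0 (by decide) (by decide) (by decide) 0)
    (hcp 1 0 (by decide) (by decide) (by decide) 1) p01 (q 1) h01b h01a hq11 hq13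
  have k20 := key_id (a 0) (a 2) (a 3) (b 0) (b 2) (b 3) (c 0 2) (c 2 0)
    (hcp 0 2 (by decide) (by decide) (by decide) 0)
    (hcp 0 2 (by decide) (by decide) (by decide) 1) p02 (q 0) h02a h02c hq00 hq03
  have k02 := key_id (a 2) (a 0) (a 3) (b 2) (b 0) (b 3) (c 2 0) (c 0 2)
    (hcp 2 0 (by decide) (by decide) (by decide) 0)
    (hcp 2 0 (by decide) (by decide) (by decide) 1) p02 (q 2) h02c h02a hq22 hq23
  have k21 := key_id (a 1) (a 2) (a 3) (b 1) (b 2) (b 3) (c 1 2) (c 2 1)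
    (hcp 1 2 (by decide) (by decide) (by decide) 0)
    (hcp 1 2 (by decide) (by decide) (by decide) 1) p12 (q 1) h12b h12c hq11 hq13
  have k12 := key_id (a 2) (a 1) (a 3) (b 2) (b 1) (b 3) (c 2 1) (c 1 2)
    (hcp 2 1 (by decide) (by decide) (by decide) 0)
    (hcp 2 1 (by decide) (by decide) (by decide) 1) p12 (q 2) h12c h12b hq22 hq23
  -- signs of s, u, v
  have hsu : 0 < (a 3 0 * p01 0 + a 3 1 * p01 1 - b 3) * (a 3 0 * p02 0 + a 3 1 * p02 1 - b 3) := by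
    rcases hside with ⟨h1, h2, -⟩ | ⟨h1, h2, -⟩
    · exact mul_pos_of_neg_of_neg (by linarith) (by linarith)
    · exact mul_pos (by linarith) (by linarith)
  have hsv : 0 < (a 3 0 * p01 0 + a 3 1 * p01 1 - b 3) * (a 3 0 * p12 0 + a 3 1 * p12 1 - b 3) := by
    rcases hside with ⟨h1, -, h3⟩ | ⟨h1, -, h3⟩
    · exact mul_pos_of_neg_of_neg (by linarith) (by linarith)
    · exact mul_pos (by linarith) (by linarith)
  have huv : 0 < (a 3 0 * p02 0 + a 3 1 * p02 1 - b 3) * (a 3 0 * p12 0 + a 3 1 * p12 1 - b 3) := by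
    rcases hside with ⟨-, h2, h3⟩ | ⟨-, h2, h3⟩
    · exact mul_pos_of_neg_of_neg (by linarith) (by linarith)
    · exact mul_pos (by linarith) (by linarith)
  have hsne : a 3 0 * p01 0 + a 3 1 * p01 1 - b 3 ≠ 0 := by
    intro h'; rcases hside with ⟨h, -, -⟩ | ⟨h, -, -⟩ <;> linarith
  have hune : a 3 0 * p02 0 + a 3 1 * p02 1 - b 3 ≠ 0 := by
    intro h'; rcases hside with ⟨-, h, -⟩ | ⟨-, h, -⟩ <;> linarith
  have hvne : a 3 0 * p12 0 + a 3 1 * p12 1 - b 3 ≠ 0 := by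
    intro h'; rcases hside with ⟨-, -, h⟩ | ⟨-, -, h⟩ <;> linarith
  have hA1ne : a 1 0 * q 0 0 + a 1 1 * q 0 1 - b 1 ≠ 0 :=
    right_ne_zero_of_mul (a := c 1 0) (by rw [k10]; exact neg_ne_zero.mpr hsne)
  have hB0ne : a 0 0 * q 1 0 + a 0 1 * q 1 1 - b 0 ≠ 0 :=
    right_ne_zero_of_mul (a := c 0 1) (by rw [k01]; exact neg_ne_zero.mpr hsne)
  have hA2ne : a 2 0 * q 0 0 + a 2 1 * q 0 1 - b 2 ≠ 0 :=
    right_ne_zero_of_mul (a := c 2 0) (by rw [k20]; exact neg_ne_zero.mpr hune)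
  -- existence of the parameter t on the line L₃
  have ha3 : a 3 0 ≠ 0 ∨ a 3 1 ≠ 0 := by
    by_contra h
    push_neg at h
    exact hne 3 (funext fun k => by fin_cases k <;> simp [h.1, h.2])
  have hd1 : a 3 0 * (q 1 0 - q 0 0) + a 3 1 * (q 1 1 - q 0 1) = 0 := by
    linear_combination hq13 - hq03
  have hd2 : a 3 0 * (q 2 0 - q 0 0) + a 3 1 * (q 2 1 - q 0 1) = 0 := by
    linear_combination hq23 - hq03
  have hcross : (q 1 0 - q 0 0) * (q 2 1 - q 0 1) = (q 2 0 - q 0 0) * (q 1 1 - q 0 1) := by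
    rcases ha3 with h | h
    · apply mul_left_cancel₀ h
      linear_combination (q 2 1 - q 0 1) * hd1 - (q 1 1 - q 0 1) * hd2
    · apply mul_left_cancel₀ h
      linear_combination (q 1 0 - q 0 0) * hd2 - (q 2 0 - q 0 0) * hd1
  have hx : q 1 0 - q 0 0 ≠ 0 ∨ q 1 1 - q 0 1 ≠ 0 := by
    by_contra h
    push_neg at h
    exact hA1ne (by linear_combination hq11 - a 1 0 * h.1 - a 1 1 * h.2)
  obtain ⟨t, ht0, ht1⟩ : ∃ t, q 2 0 - q 0 0 = t * (q 1 0 - q 0 0) ∧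
      q 2 1 - q 0 1 = t * (q 1 1 - q 0 1) := by
    rcases hx with h | h
    · refine ⟨(q 2 0 - q 0 0) / (q 1 0 - q 0 0), by field_simp, ?_⟩
      rw [div_mul_eq_mul_div, eq_div_iff h]
      linear_combination hcross
    · refine ⟨(q 2 1 - q 0 1) / (q 1 1 - q 0 1), ?_, by field_simp⟩
      rw [div_mul_eq_mul_div, eq_div_iff h]
      linear_combination -hcross
  -- transport identities along L₃
  have hC0t : a 0 0 * q 2 0 + a 0 1 * q 2 1 - b 0
      = t * (a 0 0 * q 1 0 + a 0 1 * q 1 1 - b 0) := by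
    linear_combination (a 0 0) * ht0 + (a 0 1) * ht1 + (1 - t) * hq00
  have hC1t : a 1 0 * q 2 0 + a 1 1 * q 2 1 - b 1
      = (1 - t) * (a 1 0 * q 0 0 + a 1 1 * q 0 1 - b 1) := by
    linear_combination (a 1 0) * ht0 + (a 1 1) * ht1 + t * hq11
  have hA2B2 : (1 - t) * (a 2 0 * q 0 0 + a 2 1 * q 0 1 - b 2)
      = -(t * (a 2 0 * q 1 0 + a 2 1 * q 1 1 - b 2)) := by
    linear_combination hq22 - (a 2 0) * ht0 - (a 2 1) * ht1
  obtain ⟨hT0, hT1, hT2, htne0, htne1⟩ :=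
    signs hsu hsv huv k10 k01 k20 k02 k21 k12 hC0t hC1t hA2B2
  have hS0 := seg0 (q 0) (q 1) (q 2) t ht0 ht1 (a 0) (b 0) hq00 (sub_ne_zero.mp hB0ne)
  have hS1 := seg1 (q 0) (q 1) (q 2) t ht0 ht1 (a 1) (b 1) hq11 (sub_ne_zero.mp hA1ne)
  have hS2 := seg2 (q 0) (q 1) (q 2) t ht0 ht1 (a 2) (b 2) hq22 (sub_ne_zero.mp hA2ne)
  refine ⟨?_, hT0.trans hS0.symm, hT1.trans hS1.symm, hT2.trans hS2.symm⟩
  rw [hT0, hT1, hT2]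
  rcases lt_trichotomy t 0 with h | h | h
  · exact Or.inl ⟨h, fun h' => by linarith, fun h' => by obtain ⟨h1, -⟩ := h'; linarith⟩
  · exact absurd h htne0
  · rcases lt_trichotomy t 1 with h1 | h1 | h1
    · exact Or.inr (Or.inr ⟨fun h' => by linarith, fun h' => by linarith, ⟨h, h1⟩⟩)
    · exact absurd h1 htne1
    · exact Or.inr (Or.inl ⟨fun h' => by linarith, h1,
        fun h' => by obtain ⟨-, h2⟩ := h'; linarith⟩)
end

section
/- Let 𝔽 be an ordered field, and let (ℋ_n^m)_1 = {H^1_i : ∑_j a^1_{ij} x_j = b_i} and (ℋ_n^m)_2 = {H^2_i : ∑_j a^2_{ij} x_j = c_i} be two hyperplane arrangements in 𝔽^m that are isomorphic by an isomorphism which is the identity on subscripts. Let 𝒞_1, 𝒞_2 ⊆ 𝔽^n be their associated concurrency arrangements, and suppose (b_1, …, b_n) and (c_1, …, c_n) lie in the interiors of cones of 𝒞_1 and 𝒞_2 respectively. Suppose indices 1 ≤ i_1 < … < i_{m+1} ≤ n give rise to an m-dimensional simplex polyhedrality of both arrangements. If (b_1, …, b_n) and (c_1, …, c_n) are moved to new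 points (b̃_1, …, b̃_n) and (c̃_1, …, c̃_n) lying in the interiors of the adjacent cones obtained by crossing exactly the single boundary hyperplane of 𝒞_1, respectively 𝒞_2, corresponding to the subset {i_1, …, i_{m+1}}, then the new hyperplane arrangements {∑_j a^1_{ij} x_j = b̃_i} and {∑_j a^2_{ij} x_j = c̃_i} are again isomorphic by an isomorphism which is the identity on subscripts. -/
open Finset

/-- `φ` is an isomorphism between the hyperplane arrangements `(a1, b1)` and `(a2, b2)`:
for every set `T` of `m - 1` indices, along the corresponding lines `⋂ i ∈ T, H¹ᵢ` and
`⋂ i ∈ T, H²_{φ i}` of the two arrangements, the linear orders of the vertices agree,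
possibly after reversal (equivalently, betweenness of corresponding triples of vertices
is preserved), under the correspondence of vertices induced by `φ`.  Here `v k`
(resp. `w k`) denotes the vertex of the first (resp. second) arrangement obtained by
intersecting the line indexed by `T` (resp. by the `φ`-image of `T`) with the
hyperplane of index `k` (resp. `φ k`). -/
def IsArrIso {F : Type*} [Field F] [LinearOrder F] [IsStrictOrderedRing F] {m n : ℕ}
    (a1 : Fin n → Fin m → F) (b1 : Fin n → F)
    (a2 : Fin n → Fin m → F) (b2 : Fin n → F)
    (φ : Equiv.Perm (Fin n)) : Prop :=
  ∀ T : Finset (Fin n), T.card = m - 1 →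
    ∀ v w : Fin n → Fin m → F,
      (∀ k ∉ T, ∀ i ∈ insert k T, v k ∈ hypSet (a1 i) (b1 i)) →
      (∀ k ∉ T, ∀ i ∈ insert k T, w k ∈ hypSet (a2 (φ i)) (b2 (φ i))) →
      ∀ k1 ∉ T, ∀ k2 ∉ T, ∀ k3 ∉ T,
        (v k2 ∈ segment F (v k1) (v k3) ↔ w k2 ∈ segment F (w k1) (w k3))

/-- The polyhedral region of the arrangement determined by a choice `ε` of one of the
two inequalities `≤` / `≥` for each hyperplane. -/
def regionOf {F : Type*} [Field F] [LinearOrder F] [IsStrictOrderedRing F] {m n : ℕ}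
    (a : Fin n → Fin m → F) (b : Fin n → F) (ε : Fin n → Bool) : Set (Fin m → F) :=
  {x | ∀ i, if ε i then ∑ j, a i j * x j ≤ b i else b i ≤ ∑ j, a i j * x j}

/-- A set `R` is unbounded if it contains distinct points `u, v` with
`v + t • (u - v) ∈ R` for all `t ≥ 0` or for all `t ≤ 0`; it is bounded otherwise. -/
def IsUnboundedSet {F : Type*} [Field F] [LinearOrder F] [IsStrictOrderedRing F] {m : ℕ} (R : Set (Fin m → F)) : Prop :=
  ∃ u v : Fin m → F, u ∈ R ∧ v ∈ R ∧ u ≠ v ∧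
    ((∀ t : F, 0 ≤ t → v + t • (u - v) ∈ R) ∨ (∀ t : F, t ≤ 0 → v + t • (u - v) ∈ R))

/-- The defining polynomial (a determinant) of the hyperplane of the concurrency
arrangement in `F^n` associated to an `(m+1)`-subset `s` of the hyperplanes of the
arrangement with coefficient matrix `a`: the rows of the matrix are
`(a i 0, …, a i (m-1), y i)` for `i` running over `s` in increasing order.
(Junk value `0` if `s` does not have cardinality `m + 1`.) -/
noncomputable def concDet {F : Type*} [Field F] {m n : ℕ}
    (a : Fin n → Fin m → F) (s : Finset (Fin n)) (y : Fin n → F) : F :=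
  if h : s.card = m + 1 then
    Matrix.det (Matrix.of fun k j : Fin (m + 1) =>
      if hj : (j : ℕ) < m then a (s.orderIsoOfFin h k).1 ⟨j, hj⟩
      else y (s.orderIsoOfFin h k).1)
  else 0

/-- The polyhedral region cut out by the subfamily `s` of the hyperplanes with the
choice of sides `ε`. -/
def subRegionOf {F : Type*} [Field F] [LinearOrder F] [IsStrictOrderedRing F] {m n : ℕ}
    (a : Fin n → Fin m → F) (b : Fin n → F) (s : Finset (Fin n)) (ε : Fin n → Bool) :
    Set (Fin m → F) :=
  {x | ∀ i ∈ s, if ε i then ∑ j, a i j * x j ≤ b i else b i ≤ ∑ j, a i j * x j}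

/-- The `m + 1` hyperplanes indexed by `s` give rise to an `m`-dimensional simplex
polyhedrality: some choice of sides of these hyperplanes cuts out a nonempty bounded
polyhedral region. -/
def IsSimplexPolyhedrality {F : Type*} [Field F] [LinearOrder F] [IsStrictOrderedRing F] {m n : ℕ}
    (a : Fin n → Fin m → F) (b : Fin n → F) (s : Finset (Fin n)) : Prop :=
  s.card = m + 1 ∧ ∃ ε : Fin n → Bool,
    (subRegionOf a b s ε).Nonempty ∧ ¬ IsUnboundedSet (subRegionOf a b s ε)

section Helpers
variable {F : Type*} [Field F] [LinearOrder F] [IsStrictOrderedRing F] {m n : ℕ}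

lemma concDet_repr (a : Fin n → Fin m → F) {s : Finset (Fin n)} (hs : s.card = m+1)
    (y : Fin n → F) :
    concDet a s y =
      (Matrix.updateRow
        (Matrix.of fun j k : Fin (m + 1) =>
          if hj : (j : ℕ) < m then a (s.orderIsoOfFin hs k).1 ⟨j, hj⟩ else 0)
        (Fin.last m) (fun k => y (s.orderIsoOfFin hs k).1)).det := by
  rw [concDet, dif_pos hs, ← Matrix.det_transpose]
  congr 1
  ext j k
  by_cases hj : (j : ℕ) < m
  · have hne : j ≠ Fin.last m := by
      intro h; rw [h, Fin.val_last] at hj; omega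
    simp [Matrix.transpose_apply, Matrix.updateRow_apply, hne, hj]
  · have heq : j = Fin.last m := by
      apply Fin.ext; rw [Fin.val_last]; have := j.isLt; omega
    simp [Matrix.transpose_apply, Matrix.updateRow_apply, heq, hj]

lemma concDet_factor (a : Fin n → Fin m → F) {s : Finset (Fin n)} (hs : s.card = m+1)
    {k2 : Fin n} (y : Fin n → F) (x : Fin m → F)
    (hx : ∀ i ∈ s, i ≠ k2 → ∑ j, a i j * x j = y i) :
    concDet a s y = (y k2 - ∑ j, a k2 j * x j) *
      concDet a s (fun i => if i = k2 then (1:F) else 0) := by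
  classical
  set e := s.orderIsoOfFin hs with he
  set M : Matrix (Fin (m+1)) (Fin (m+1)) F :=
    Matrix.of (fun j k : Fin (m+1) =>
      if hj : (j : ℕ) < m then a (e k).1 ⟨j, hj⟩ else 0) with hM
  set z : Fin n → F := fun i => y i - ∑ j, a i j * x j with hz
  -- key column (row, after transpose) operation
  have key : (M.updateRow (Fin.last m) (fun k => y (e k).1)).det
      = (M.updateRow (Fin.last m) (fun k => z (e k).1)).det := by
    set M' := M.updateRow (Fin.last m) (fun k => z (e k).1) with hM'
    have hMM' : M.updateRow (Fin.last m) (fun k => y (e k).1)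
        = M'.updateRow (Fin.last m) (fun k => y (e k).1) := by
      ext j k
      by_cases hj : j = Fin.last m
      · simp [hj, Matrix.updateRow_apply]
      · simp [Matrix.updateRow_apply, hj, hM']
    have hrow : (fun k => y (e k).1)
        = M' (Fin.last m) +
          ∑ kk ∈ Finset.univ.erase (Fin.last m),
            (if hk : ((kk : Fin (m+1)):ℕ) < m then x ⟨kk, hk⟩ else 0) • M' kk := by
      funext k
      simp only [Pi.add_apply, Pi.smul_apply, smul_eq_mul, one_mul, Finset.sum_apply]
      have hMlast : M' (Fin.last m) k = z (e k).1 := by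
        simp [hM', Matrix.updateRow_self]
      have h0 : (if hk : ((Fin.last m : Fin (m+1)):ℕ) < m then x ⟨(Fin.last m : Fin (m+1)), hk⟩ else 0) * M' (Fin.last m) k = 0 := by
        simp [Fin.val_last]
      have herase : ∑ kk ∈ Finset.univ.erase (Fin.last m),
            (if hk : ((kk : Fin (m+1)):ℕ) < m then x ⟨kk, hk⟩ else 0) * M' kk k
          = ∑ kk : Fin (m+1), (if hk : ((kk : Fin (m+1)):ℕ) < m then x ⟨kk, hk⟩ else 0) * M' kk k := by
        apply Finset.sum_subset (Finset.subset_univ _)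
        intro kk _ hkk
        have hkl : kk = Fin.last m := by
          by_contra hne; exact hkk (Finset.mem_erase.mpr ⟨hne, Finset.mem_univ _⟩)
        rw [hkl]; exact h0
      rw [hMlast, herase, Fin.sum_univ_castSucc]
      have hterm : ∀ j : Fin m, (if hk : ((Fin.castSucc j : Fin (m+1)):ℕ) < m then x ⟨(Fin.castSucc j : Fin (m+1)), hk⟩ else 0) * M' (Fin.castSucc j) k = x j * a (e k).1 j := by
        intro j
        have hjlt : ((Fin.castSucc j : Fin (m+1)) : ℕ) < m := by
          simp [Fin.coe_castSucc, j.isLt]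
        have hne : (Fin.castSucc j : Fin (m+1)) ≠ Fin.last m := by
          intro h
          have := congrArg Fin.val h
          simp [Fin.coe_castSucc, Fin.val_last] at this
          omega
        rw [dif_pos hjlt]
        have h1 : (⟨((Fin.castSucc j : Fin (m+1)):ℕ), hjlt⟩ : Fin m) = j := Fin.ext rfl
        have h2 : M' (Fin.castSucc j) k = a (e k).1 j := by
          rw [hM', Matrix.updateRow_ne hne, hM]
          show (if hj : ((Fin.castSucc j : Fin (m+1)):ℕ) < m then a (e k).1 ⟨((Fin.castSucc j : Fin (m+1)):ℕ), hj⟩ else 0) = a (e k).1 j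
          rw [dif_pos hjlt, h1]
        rw [h1, h2]
      rw [Finset.sum_congr rfl (fun j (_ : j ∈ Finset.univ) => hterm j), h0, add_zero]
      simp only [hz]
      rw [Finset.sum_congr rfl (fun j (_ : j ∈ Finset.univ) => (mul_comm (x j) (a (e k).1 j)))]
      ring
    rw [hMM', hrow]
    have haux := Matrix.det_updateRow_sum_aux M' (Finset.univ.erase (Fin.last m))
      (Finset.notMem_erase _ _)
      (fun k : Fin (m+1) => if hk : ((k : Fin (m+1)):ℕ) < m then x ⟨k, hk⟩ else 0) 1
    simp only [one_smul] at haux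
    exact haux
  -- z restricted to s is (z k2) • indicator
  have hzind : (fun k : Fin (m+1) => z (e k).1)
      = z k2 • (fun k : Fin (m+1) => if (e k).1 = k2 then (1:F) else 0) := by
    funext k
    by_cases hek : (e k).1 = k2
    · simp [hek, smul_eq_mul]
    · have : z (e k).1 = 0 := by
        simp only [hz]
        rw [hx (e k).1 (e k).2 hek]; ring
      simp [hek, this, smul_eq_mul]
  rw [concDet_repr a hs y, key, hzind, Matrix.det_updateRow_smul,
    ← concDet_repr a hs (fun i => if i = k2 then (1:F) else 0)]

lemma arr_exists {a : Fin n → Fin m → F} {b : Fin n → F} (hA : IsArrangement a b)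
    {S : Finset (Fin n)} (hS : S.Nonempty) (hcard : S.card ≤ m) :
    ∃ p : Fin m → F, ∀ i ∈ S, p ∈ hypSet (a i) (b i) := by
  obtain ⟨A, hcar, ⟨p, hp⟩, -⟩ := hA.2.1 S hS hcard
  exact ⟨p, fun i hi => Set.mem_iInter₂.mp (hcar ▸ hp) i hi⟩

lemma arr_unique {a : Fin n → Fin m → F} {b : Fin n → F} (hA : IsArrangement a b)
    {S : Finset (Fin n)} (hS : S.Nonempty) (hcard : S.card = m)
    {x z : Fin m → F} (h : ∀ i ∈ S, ∑ j, a i j * x j = ∑ j, a i j * z j) : x = z := by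
  obtain ⟨A, hcar, ⟨p, hp⟩, hrank⟩ := hA.2.1 S hS hcard.le
  have hpmem : ∀ i ∈ S, ∑ j, a i j * p j = b i := by
    intro i hi
    exact Set.mem_iInter₂.mp (hcar ▸ hp) i hi
  have hq : p + (x - z) ∈ (A : Set (Fin m → F)) := by
    rw [hcar]
    refine Set.mem_iInter₂.mpr fun i hi => ?_
    show ∑ j, a i j * (p + (x - z)) j = b i
    have h1 := h i hi
    have h2 := hpmem i hi
    have hterm : ∀ j : Fin m, a i j * (p + (x - z)) j
        = a i j * p j + (a i j * x j - a i j * z j) := by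
      intro j; simp only [Pi.add_apply, Pi.sub_apply]; ring
    rw [Finset.sum_congr rfl fun j _ => hterm j, Finset.sum_add_distrib,
      Finset.sum_sub_distrib, h1]
    rw [h2]; ring
  have hdir : (p + (x - z)) -ᵥ p ∈ A.direction := AffineSubspace.vsub_mem_direction hq hp
  have hsub : Subsingleton A.direction := by
    refine Module.finrank_zero_iff (R := F).mp ?_
    rw [hrank, hcard]; omega
  have h0 : ((p + (x - z)) -ᵥ p : Fin m → F) = 0 := by
    have := Subsingleton.elim (⟨_, hdir⟩ : A.direction) 0
    exact congrArg Subtype.val this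
  have hxz : x - z = 0 := by
    rw [vsub_eq_sub, add_sub_cancel_left] at h0
    exact h0
  exact sub_eq_zero.mp hxz

lemma sgn_mul_pos {x y : F} (hx : x ≠ 0) (hy : y ≠ 0) :
    0 < x * y ↔ (x < 0 ↔ y < 0) := by
  rcases hx.lt_or_gt with h | h <;> rcases hy.lt_or_gt with h' | h'
  · exact iff_of_true (mul_pos_of_neg_of_neg h h') ⟨fun _ => h', fun _ => h⟩
  · exact iff_of_false (by nlinarith) (fun hiff => absurd (hiff.mp h) (not_lt.mpr h'.le))
  · exact iff_of_false (by nlinarith) (fun hiff => absurd (hiff.mpr h') (not_lt.mpr h.le))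
  · exact iff_of_true (mul_pos h h')
      ⟨fun hc => absurd hc (not_lt.mpr h.le), fun hc => absurd hc (not_lt.mpr h'.le)⟩


lemma pos_of_mul_sq {F : Type*} [Field F] [LinearOrder F] [IsStrictOrderedRing F] {x y e : F}
    (h : 0 < (x * e) * (y * e)) : 0 < x * y := by
  have hid : (x * e) * (y * e) = (x * y) * (e * e) := by ring
  rw [hid] at h
  by_contra hle
  push_neg at hle
  exact absurd h (not_lt.mpr (mul_nonpos_iff.mpr (Or.inr ⟨hle, mul_self_nonneg e⟩)))

lemma neg_of_mul_sq {F : Type*} [Field F] [LinearOrder F] [IsStrictOrderedRing F] {x y e : F}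
    (h : (x * e) * (y * e) < 0) : x * y < 0 := by
  have hid : (x * e) * (y * e) = (x * y) * (e * e) := by ring
  rw [hid] at h
  by_contra hle
  push_neg at hle
  exact absurd h (not_lt.mpr (mul_nonneg hle (mul_self_nonneg e)))

lemma segment_crit {a : Fin n → Fin m → F} {b : Fin n → F} (hA : IsArrangement a b)
    (hm : 1 ≤ m) {T : Finset (Fin n)} (hT : T.card = m - 1)
    {k1 k2 k3 : Fin n} (h1 : k1 ∉ T) (h2 : k2 ∉ T) (h3 : k3 ∉ T)
    (h21 : k2 ≠ k1) (h23 : k2 ≠ k3) (y : Fin n → F)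
    {v : Fin n → Fin m → F}
    (hv : ∀ k ∉ T, ∀ i ∈ insert k T, v k ∈ hypSet (a i) (y i))
    (hd1 : concDet a (insert k2 (insert k1 T)) y ≠ 0)
    (hd3 : concDet a (insert k2 (insert k3 T)) y ≠ 0) :
    (v k2 ∈ segment F (v k1) (v k3) ↔
      (y k2 - ∑ j, a k2 j * v k1 j) * (y k2 - ∑ j, a k2 j * v k3 j) < 0) := by
  have hmem : ∀ k, ∀ (_ : k ∉ T), ∀ i ∈ insert k T, ∑ j, a i j * v k j = y i :=
    fun k hk i hi => hv k hk i hi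
  have c12 : (insert k2 (insert k1 T)).card = m + 1 := by
    rw [card_insert_of_notMem (by simp [Finset.mem_insert, h21, h2]),
        card_insert_of_notMem h1, hT]; omega
  have c32 : (insert k2 (insert k3 T)).card = m + 1 := by
    rw [card_insert_of_notMem (by simp [Finset.mem_insert, h23, h2]),
        card_insert_of_notMem h3, hT]; omega
  have hfac1 : concDet a (insert k2 (insert k1 T)) y
      = (y k2 - ∑ j, a k2 j * v k1 j) *
        concDet a (insert k2 (insert k1 T)) (fun i => if i = k2 then 1 else 0) :=
    concDet_factor a c12 y (v k1) (fun i hi hik2 => by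
      rcases Finset.mem_insert.mp hi with h | h
      · exact absurd h hik2
      · exact hmem k1 h1 i h)
  have hfac3 : concDet a (insert k2 (insert k3 T)) y
      = (y k2 - ∑ j, a k2 j * v k3 j) *
        concDet a (insert k2 (insert k3 T)) (fun i => if i = k2 then 1 else 0) :=
    concDet_factor a c32 y (v k3) (fun i hi hik2 => by
      rcases Finset.mem_insert.mp hi with h | h
      · exact absurd h hik2
      · exact hmem k3 h3 i h)
  have hδ1 : y k2 - ∑ j, a k2 j * v k1 j ≠ 0 := left_ne_zero_of_mul (hfac1 ▸ hd1)
  have hδ3 : y k2 - ∑ j, a k2 j * v k3 j ≠ 0 := left_ne_zero_of_mul (hfac3 ▸ hd3)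
  have hv2 : ∑ j, a k2 j * v k2 j = y k2 := hmem k2 h2 k2 (mem_insert_self _ _)
  have expand : ∀ (i : Fin n) (α β : F) (u w : Fin m → F),
      ∑ j, a i j * (α • u + β • w) j
        = α * (∑ j, a i j * u j) + β * (∑ j, a i j * w j) := by
    intro i α β u w
    rw [Finset.mul_sum, Finset.mul_sum, ← Finset.sum_add_distrib]
    refine Finset.sum_congr rfl fun j _ => ?_
    simp only [Pi.add_apply, Pi.smul_apply, smul_eq_mul]; ring
  set ℓ1 := ∑ j, a k2 j * v k1 j with hℓ1
  set ℓ3 := ∑ j, a k2 j * v k3 j with hℓ3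
  constructor
  · rintro ⟨α, β, hα, hβ, hαβ, hzz⟩
    have hy2 : y k2 = α * ℓ1 + β * ℓ3 := by
      have hh := hv2
      rw [← hzz, expand k2 α β (v k1) (v k3)] at hh
      exact hh.symm
    have hne : (y k2 - ℓ1) * (y k2 - ℓ3) ≠ 0 := mul_ne_zero hδ1 hδ3
    have hβ1 : β = 1 - α := by linarith
    have hid : (y k2 - ℓ1) * (y k2 - ℓ3) = -(α * β * (ℓ1 - ℓ3)^2) := by
      rw [hy2, hβ1]; ring
    have hle : (y k2 - ℓ1) * (y k2 - ℓ3) ≤ 0 := by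
      rw [hid]
      have := mul_nonneg (mul_nonneg hα hβ) (sq_nonneg (ℓ1 - ℓ3))
      linarith
    exact lt_of_le_of_ne hle hne
  · intro hlt
    have hd : ℓ1 - ℓ3 ≠ 0 := by
      intro h
      have hh : ℓ1 = ℓ3 := by linarith [sub_eq_zero.mp h]
      rw [hh] at hlt
      nlinarith [sq_nonneg (y k2 - ℓ3)]
    set α := (y k2 - ℓ3) / (ℓ1 - ℓ3) with hα'
    set β := (ℓ1 - y k2) / (ℓ1 - ℓ3) with hβ'
    have hαβ : α + β = 1 := by rw [hα', hβ']; field_simp; ring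
    have hprod : 0 < α * β := by
      rw [hα', hβ', div_mul_div_comm]
      exact div_pos (by nlinarith) (mul_self_pos.mpr hd)
    have hα0 : 0 ≤ α := by nlinarith
    have hβ0 : 0 ≤ β := by nlinarith
    refine ⟨α, β, hα0, hβ0, hαβ, ?_⟩
    apply arr_unique hA (S := insert k2 T) (insert_nonempty _ _)
      (by rw [card_insert_of_notMem h2, hT]; omega)
    intro i hi
    rw [expand i α β (v k1) (v k3)]
    rcases Finset.mem_insert.mp hi with rfl | hiT
    · rw [hv2, ← hℓ1, ← hℓ3]
      rw [hα', hβ']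
      field_simp
      ring
    · have e1 : ∑ j, a i j * v k1 j = y i := hmem k1 h1 i (mem_insert_of_mem hiT)
      have e3 : ∑ j, a i j * v k3 j = y i := hmem k3 h3 i (mem_insert_of_mem hiT)
      have e2 : ∑ j, a i j * v k2 j = y i := hmem k2 h2 i (mem_insert_of_mem hiT)
      rw [e1, e3, e2]
      linear_combination (y i) * hαβ

end Helpers

/-- **Theorem (moving through a wall of the concurrency arrangement).** Let `(a1, b)`
and `(a2, c)` be two hyperplane arrangements in `F^m`, isomorphic by an isomorphism
which is the identity on subscripts, whose constant vectors `b` and `c` lie in the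
interiors of cones of the respective concurrency arrangements (all concurrency
determinants are nonzero).  Suppose the indices `s0` (an `(m+1)`-subset) give rise to an
`m`-dimensional simplex polyhedrality of both arrangements, and move `b` and `c` to
points `bt` and `ct` lying in the interiors of the adjacent cones obtained by crossing
exactly the single boundary hyperplane of the concurrency arrangement corresponding to
`s0` (the sign of the `s0`-determinant flips while all other signs are preserved).
Then the new arrangements `(a1, bt)` and `(a2, ct)` are again isomorphic by an
isomorphism which is the identity on subscripts. -/
theorem concurrency_wall_crossing {F : Type*} [Field F] [LinearOrder F] [IsStrictOrderedRing F] {m n : ℕ}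
    (a1 a2 : Fin n → Fin m → F) (b c bt ct : Fin n → F)
    (hA1 : IsArrangement a1 b) (hA2 : IsArrangement a2 c)
    (hiso : IsArrIso a1 b a2 c (Equiv.refl (Fin n)))
    (hbint : ∀ s : Finset (Fin n), s.card = m + 1 → concDet a1 s b ≠ 0)
    (hcint : ∀ s : Finset (Fin n), s.card = m + 1 → concDet a2 s c ≠ 0)
    (s0 : Finset (Fin n)) (hs0 : s0.card = m + 1)
    (hsp1 : IsSimplexPolyhedrality a1 b s0) (hsp2 : IsSimplexPolyhedrality a2 c s0)
    (hbt : ∀ s : Finset (Fin n), s.card = m + 1 → s ≠ s0 →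
      0 < concDet a1 s bt * concDet a1 s b)
    (hbt0 : concDet a1 s0 bt * concDet a1 s0 b < 0)
    (hct : ∀ s : Finset (Fin n), s.card = m + 1 → s ≠ s0 →
      0 < concDet a2 s ct * concDet a2 s c)
    (hct0 : concDet a2 s0 ct * concDet a2 s0 c < 0) :
    IsArrIso a1 bt a2 ct (Equiv.refl (Fin n)) := by
  classical
  rcases Nat.eq_zero_or_pos m with hm0 | hm
  · exfalso
    have hne : s0.Nonempty := Finset.card_pos.mp (by rw [hs0]; omega)
    obtain ⟨i, -⟩ := hne
    apply hA1.1 i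
    subst hm0
    funext j
    exact j.elim0
  intro T hT v w hv hw k1 hk1 k2 hk2 k3 hk3
  simp only [Equiv.refl_apply] at hw
  by_cases h21 : k2 = k1
  · subst h21
    exact iff_of_true (left_mem_segment F _ _) (left_mem_segment F _ _)
  by_cases h23 : k2 = k3
  · subst h23
    exact iff_of_true (right_mem_segment F _ _) (right_mem_segment F _ _)
  have hm' : 1 ≤ m := hm
  have c12 : (insert k2 (insert k1 T)).card = m + 1 := by
    rw [card_insert_of_notMem (by simp [Finset.mem_insert, h21, hk2]),
      card_insert_of_notMem hk1, hT]; omega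
  have c32 : (insert k2 (insert k3 T)).card = m + 1 := by
    rw [card_insert_of_notMem (by simp [Finset.mem_insert, h23, hk2]),
      card_insert_of_notMem hk3, hT]; omega
  have hbtne : ∀ s : Finset (Fin n), s.card = m + 1 → concDet a1 s bt ≠ 0 := by
    intro s hs h0
    by_cases hss : s = s0
    · rw [hss] at h0; rw [h0, zero_mul] at hbt0; exact lt_irrefl 0 hbt0
    · have hpos := hbt s hs hss; rw [h0, zero_mul] at hpos; exact lt_irrefl 0 hpos
  have hctne : ∀ s : Finset (Fin n), s.card = m + 1 → concDet a2 s ct ≠ 0 := by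
    intro s hs h0
    by_cases hss : s = s0
    · rw [hss] at h0; rw [h0, zero_mul] at hct0; exact lt_irrefl 0 hct0
    · have hpos := hct s hs hss; rw [h0, zero_mul] at hpos; exact lt_irrefl 0 hpos
  have hex1 := fun k (hk : k ∉ T) => arr_exists hA1 (S := insert k T)
      (insert_nonempty _ _) (by rw [card_insert_of_notMem hk, hT]; omega)
  have hex2 := fun k (hk : k ∉ T) => arr_exists hA2 (S := insert k T)
      (insert_nonempty _ _) (by rw [card_insert_of_notMem hk, hT]; omega)
  set v0 : Fin n → Fin m → F := fun k => if hk : k ∈ T then 0 else (hex1 k hk).choose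
    with hv0def
  set w0 : Fin n → Fin m → F := fun k => if hk : k ∈ T then 0 else (hex2 k hk).choose
    with hw0def
  have hv0 : ∀ k ∉ T, ∀ i ∈ insert k T, v0 k ∈ hypSet (a1 i) (b i) := by
    intro k hk i hi
    simp only [hv0def, dif_neg hk]
    exact (hex1 k hk).choose_spec i hi
  have hw0 : ∀ k ∉ T, ∀ i ∈ insert k T, w0 k ∈ hypSet (a2 i) (c i) := by
    intro k hk i hi
    simp only [hw0def, dif_neg hk]
    exact (hex2 k hk).choose_spec i hi
  clear_value v0 w0
  have hold := hiso T hT v0 w0 hv0 hw0 k1 hk1 k2 hk2 k3 hk3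
  have hcritv := segment_crit hA1 hm' hT hk1 hk2 hk3 h21 h23 bt hv
    (hbtne _ c12) (hbtne _ c32)
  have hcritw := segment_crit hA2 hm' hT hk1 hk2 hk3 h21 h23 ct hw
    (hctne _ c12) (hctne _ c32)
  have hcritv0 := segment_crit hA1 hm' hT hk1 hk2 hk3 h21 h23 b hv0
    (hbint _ c12) (hbint _ c32)
  have hcritw0 := segment_crit hA2 hm' hT hk1 hk2 hk3 h21 h23 c hw0
    (hcint _ c12) (hcint _ c32)
  rw [hcritv, hcritw]
  rw [hcritv0, hcritw0] at hold
  -- factorizations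
  have hfact : ∀ (a' : Fin n → Fin m → F) (y : Fin n → F) (v' : Fin n → Fin m → F),
      (∀ k ∉ T, ∀ i ∈ insert k T, v' k ∈ hypSet (a' i) (y i)) →
      ∀ kk, kk ∉ T → k2 ≠ kk → (insert k2 (insert kk T)).card = m + 1 →
      concDet a' (insert k2 (insert kk T)) y
        = (y k2 - ∑ j, a' k2 j * v' kk j) *
          concDet a' (insert k2 (insert kk T)) (fun i => if i = k2 then 1 else 0) := by
    intro a' y v' hv' kk hkk hkkne hc
    refine concDet_factor a' hc y (v' kk) (fun i hi hik2 => ?_)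
    rcases Finset.mem_insert.mp hi with h | h
    · exact absurd h hik2
    · exact hv' kk hkk i h
  have hfv1 := hfact a1 bt v hv k1 hk1 h21 c12
  have hfv3 := hfact a1 bt v hv k3 hk3 h23 c32
  have hfv01 := hfact a1 b v0 hv0 k1 hk1 h21 c12
  have hfv03 := hfact a1 b v0 hv0 k3 hk3 h23 c32
  have hfw1 := hfact a2 ct w hw k1 hk1 h21 c12
  have hfw3 := hfact a2 ct w hw k3 hk3 h23 c32
  have hfw01 := hfact a2 c w0 hw0 k1 hk1 h21 c12
  have hfw03 := hfact a2 c w0 hw0 k3 hk3 h23 c32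
  set p1 := bt k2 - ∑ j, a1 k2 j * v k1 j
  set p3 := bt k2 - ∑ j, a1 k2 j * v k3 j
  set p2 := b k2 - ∑ j, a1 k2 j * v0 k1 j
  set p4 := b k2 - ∑ j, a1 k2 j * v0 k3 j
  set q1 := ct k2 - ∑ j, a2 k2 j * w k1 j
  set q3 := ct k2 - ∑ j, a2 k2 j * w k3 j
  set q2 := c k2 - ∑ j, a2 k2 j * w0 k1 j
  set q4 := c k2 - ∑ j, a2 k2 j * w0 k3 j
  set E1 := concDet a1 (insert k2 (insert k1 T)) (fun i => if i = k2 then (1:F) else 0)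
  set E3 := concDet a1 (insert k2 (insert k3 T)) (fun i => if i = k2 then (1:F) else 0)
  set G1 := concDet a2 (insert k2 (insert k1 T)) (fun i => if i = k2 then (1:F) else 0)
  set G3 := concDet a2 (insert k2 (insert k3 T)) (fun i => if i = k2 then (1:F) else 0)
  clear_value p1 p3 p2 p4 q1 q3 q2 q4 E1 E3 G1 G3
  have hp1 : p1 ≠ 0 := left_ne_zero_of_mul (hfv1 ▸ hbtne _ c12)
  have hp3 : p3 ≠ 0 := left_ne_zero_of_mul (hfv3 ▸ hbtne _ c32)
  have hp2 : p2 ≠ 0 := left_ne_zero_of_mul (hfv01 ▸ hbint _ c12)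
  have hp4 : p4 ≠ 0 := left_ne_zero_of_mul (hfv03 ▸ hbint _ c32)
  have hq1 : q1 ≠ 0 := left_ne_zero_of_mul (hfw1 ▸ hctne _ c12)
  have hq3 : q3 ≠ 0 := left_ne_zero_of_mul (hfw3 ▸ hctne _ c32)
  have hq2 : q2 ≠ 0 := left_ne_zero_of_mul (hfw01 ▸ hcint _ c12)
  have hq4 : q4 ≠ 0 := left_ne_zero_of_mul (hfw03 ▸ hcint _ c32)
  have St1 : 0 < (p1 * p2) * (q1 * q2) := by
    by_cases hss : insert k2 (insert k1 T) = s0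
    · have hb' := hbt0; rw [← hss, hfv1, hfv01] at hb'
      have hc' := hct0; rw [← hss, hfw1, hfw01] at hc'
      have hp : p1 * p2 < 0 := neg_of_mul_sq hb'
      have hq : q1 * q2 < 0 := neg_of_mul_sq hc' 
      exact mul_pos_of_neg_of_neg hp hq
    · have hb' := hbt _ c12 hss; rw [hfv1, hfv01] at hb'
      have hc' := hct _ c12 hss; rw [hfw1, hfw01] at hc'
      have hp : 0 < p1 * p2 := pos_of_mul_sq hb'
      have hq : 0 < q1 * q2 := pos_of_mul_sq hc' 
      exact mul_pos hp hq
  have St3 : 0 < (p3 * p4) * (q3 * q4) := by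
    by_cases hss : insert k2 (insert k3 T) = s0
    · have hb' := hbt0; rw [← hss, hfv3, hfv03] at hb'
      have hc' := hct0; rw [← hss, hfw3, hfw03] at hc'
      have hp : p3 * p4 < 0 := neg_of_mul_sq hb'
      have hq : q3 * q4 < 0 := neg_of_mul_sq hc' 
      exact mul_pos_of_neg_of_neg hp hq
    · have hb' := hbt _ c32 hss; rw [hfv3, hfv03] at hb'
      have hc' := hct _ c32 hss; rw [hfw3, hfw03] at hc'
      have hp : 0 < p3 * p4 := pos_of_mul_sq hb'
      have hq : 0 < q3 * q4 := pos_of_mul_sq hc' 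
      exact mul_pos hp hq
  have hA0 : 0 < (p2 * p4) * (q2 * q4) :=
    (sgn_mul_pos (mul_ne_zero hp2 hp4) (mul_ne_zero hq2 hq4)).mpr hold
  have hbig : 0 < ((p1 * p3) * (q1 * q3)) * ((p2 * p4) * (q2 * q4)) := by
    have hid : ((p1 * p3) * (q1 * q3)) * ((p2 * p4) * (q2 * q4))
        = ((p1 * p2) * (q1 * q2)) * ((p3 * p4) * (q3 * q4)) := by ring
    rw [hid]
    exact mul_pos St1 St3
  have hAB : 0 < (p1 * p3) * (q1 * q3) := by
    rcases mul_pos_iff.mp hbig with ⟨h, _⟩ | ⟨_, hneg⟩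
    · exact h
    · linarith
  exact (sgn_mul_pos (mul_ne_zero hp1 hp3) (mul_ne_zero hq1 hq3)).mp hAB
end

section
/- Let 𝔽 be an ordered field, let L_1, L_2, L_3 be three lines in general position in 𝔽^2 (pairwise non-parallel, not concurrent), and let L_4 and L_4' be two parallel lines such that the three points L_1 ∩ L_2, L_2 ∩ L_3, L_1 ∩ L_3 all lie strictly between L_4 and L_4' (so each of L_4, L_4' is a line at infinity with respect to {L_1, L_2, L_3}, with the intersection points on opposite sides). Then for each i ∈ {1, 2, 3}: the point L_i ∩ L_4 lies strictly between the other two of the three points L_1 ∩ L_4, L_2 ∩ L_4, L_3 ∩ L_4 on L_4 if and only if L_i ∩ L_4' lies strictly between the other two of the three points L_1 ∩ L_4', L_2 ∩ L_4', L_3 ∩ L_4' on L_4'. -/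
set_option maxHeartbeats 1000000


open Finset

section helpers
variable {F : Type*} [Field F] [LinearOrder F] [IsStrictOrderedRing F]

lemma two_ne_zero_iff' (v : Fin 2 → F) : v ≠ 0 ↔ v 0 ≠ 0 ∨ v 1 ≠ 0 := by
  constructor
  · intro h
    by_contra hc
    push_neg at hc
    exact h (funext fun j => by fin_cases j <;> simp [hc.1, hc.2])
  · rintro (h | h) rfl <;> simp at h

lemma normsq_pos {v : Fin 2 → F} (hv : v ≠ 0) : 0 < v 0 ^ 2 + v 1 ^ 2 := by
  rcases (two_ne_zero_iff' v).1 hv with h | h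
  · have : 0 < v 0 ^ 2 := lt_of_le_of_ne (sq_nonneg _) (Ne.symm (pow_ne_zero 2 h))
    nlinarith [sq_nonneg (v 1)]
  · have : 0 < v 1 ^ 2 := lt_of_le_of_ne (sq_nonneg _) (Ne.symm (pow_ne_zero 2 h))
    nlinarith [sq_nonneg (v 0)]

lemma pt_eq {a4 : Fin 2 → F} (ha4 : a4 ≠ 0) {x y : Fin 2 → F}
    (h1 : a4 0 * x 0 + a4 1 * x 1 = a4 0 * y 0 + a4 1 * y 1)
    (h2 : a4 1 * x 0 - a4 0 * x 1 = a4 1 * y 0 - a4 0 * y 1) : x = y := by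
  have hN := normsq_pos ha4
  have e0 : x 0 = y 0 := by
    have h : (a4 0 ^ 2 + a4 1 ^ 2) * (x 0 - y 0) = 0 := by
      linear_combination a4 0 * h1 + a4 1 * h2
    rcases mul_eq_zero.1 h with h | h
    · exact absurd h hN.ne'
    · linarith
  have e1 : x 1 = y 1 := by
    have h : (a4 0 ^ 2 + a4 1 ^ 2) * (x 1 - y 1) = 0 := by
      linear_combination a4 1 * h1 - a4 0 * h2
    rcases mul_eq_zero.1 h with h | h
    · exact absurd h hN.ne'
    · linarith
  funext j; fin_cases j <;> simpa using by first | exact e0 | exact e1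

lemma seg_char {a4 : Fin 2 → F} (ha4 : a4 ≠ 0) {b4 : F} {x y z : Fin 2 → F}
    (hx : a4 0 * x 0 + a4 1 * x 1 = b4) (hy : a4 0 * y 0 + a4 1 * y 1 = b4)
    (hz : a4 0 * z 0 + a4 1 * z 1 = b4) (hxy : x ≠ y) :
    z ∈ openSegment F x y ↔
      ((a4 1 * z 0 - a4 0 * z 1) - (a4 1 * x 0 - a4 0 * x 1)) *
        ((a4 1 * z 0 - a4 0 * z 1) - (a4 1 * y 0 - a4 0 * y 1)) < 0 := by
  have hT : a4 1 * x 0 - a4 0 * x 1 ≠ a4 1 * y 0 - a4 0 * y 1 := by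
    intro h; exact hxy (pt_eq ha4 (hx.trans hy.symm) h)
  constructor
  · rintro ⟨s, u, hs, hu, hsu, rfl⟩
    have huu : u = 1 - s := by linarith
    subst huu
    have h0 : (s • x + (1 - s) • y) 0 = s * x 0 + (1 - s) * y 0 := rfl
    have h1 : (s • x + (1 - s) • y) 1 = s * x 1 + (1 - s) * y 1 := rfl
    rw [h0, h1]
    have hTne : (a4 1 * x 0 - a4 0 * x 1) - (a4 1 * y 0 - a4 0 * y 1) ≠ 0 :=
      sub_ne_zero.2 hT
    have hd : 0 < ((a4 1 * x 0 - a4 0 * x 1) - (a4 1 * y 0 - a4 0 * y 1)) ^ 2 :=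
      lt_of_le_of_ne (sq_nonneg _) (Ne.symm (pow_ne_zero 2 hTne))
    nlinarith [mul_pos (mul_pos hs hu) hd]
  · intro h
    set Tx := a4 1 * x 0 - a4 0 * x 1 with hTxdef
    set Ty := a4 1 * y 0 - a4 0 * y 1 with hTydef
    set Tz := a4 1 * z 0 - a4 0 * z 1 with hTzdef
    have hne : Ty - Tx ≠ 0 := sub_ne_zero.2 (Ne.symm hT)
    have hb : 0 < (Tz - Tx) / (Ty - Tx) ∧ 0 < (Ty - Tz) / (Ty - Tx) := by
      rcases mul_neg_iff.1 h with ⟨h1, h2⟩ | ⟨h1, h2⟩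
      · constructor <;> [exact div_pos (by linarith) (by linarith);
          exact div_pos (by linarith) (by linarith)]
      · constructor <;> [exact div_pos_iff.2 (Or.inr ⟨by linarith, by linarith⟩);
          exact div_pos_iff.2 (Or.inr ⟨by linarith, by linarith⟩)]
    refine ⟨(Ty - Tz) / (Ty - Tx), (Tz - Tx) / (Ty - Tx), hb.2, hb.1, by field_simp; ring, ?_⟩
    set A := (Ty - Tz) / (Ty - Tx)
    set B := (Tz - Tx) / (Ty - Tx)
    have hAB : A + B = 1 := by
      show (Ty - Tz) / (Ty - Tx) + (Tz - Tx) / (Ty - Tx) = 1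
      rw [← add_div, div_eq_one_iff_eq hne]; ring
    have c0 : (A • x + B • y) 0 = A * x 0 + B * y 0 := rfl
    have c1 : (A • x + B • y) 1 = A * x 1 + B * y 1 := rfl
    refine pt_eq ha4 ?_ ?_
    · rw [c0, c1]
      linear_combination A * hx + B * hy - hz + b4 * hAB
    · rw [c0, c1]
      have key : A * Tx + B * Ty = Tz := by
        show (Ty - Tz) / (Ty - Tx) * Tx + (Tz - Tx) / (Ty - Tx) * Ty = Tz
        rw [div_mul_eq_mul_div, div_mul_eq_mul_div, ← add_div, div_eq_iff hne]
        ring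
      linear_combination key - A * hTxdef - B * hTydef

/-- If a line `ai ⬝ x = bi` meets both of two distinct parallel lines with normal
`a4`, then it is not parallel to them. -/
lemma Dne {a4 ai : Fin 2 → F} {b4 b4' bi : F} (hai : ai ≠ 0) (hbb : b4 ≠ b4')
    {p p' : Fin 2 → F}
    (hp4 : a4 0 * p 0 + a4 1 * p 1 = b4) (hp4' : a4 0 * p' 0 + a4 1 * p' 1 = b4')
    (hpi : ai 0 * p 0 + ai 1 * p 1 = bi) (hpi' : ai 0 * p' 0 + ai 1 * p' 1 = bi) :
    ai 0 * a4 1 - ai 1 * a4 0 ≠ 0 := by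
  intro hD
  have hD' : ai 0 * a4 1 - ai 1 * a4 0 = 0 := hD
  have h0 : (b4 - b4') * ai 0 = 0 := by
    linear_combination (-(ai 0)) * hp4 + ai 0 * hp4' + a4 0 * hpi - a4 0 * hpi'
      + (p 1 - p' 1) * hD'
  have h1 : (b4 - b4') * ai 1 = 0 := by
    linear_combination (-(ai 1)) * hp4 + ai 1 * hp4' + a4 1 * hpi - a4 1 * hpi'
      - (p 0 - p' 0) * hD'
  have hb : b4 - b4' ≠ 0 := sub_ne_zero.2 hbb
  rcases (two_ne_zero_iff' ai).1 hai with h | h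
  · exact h ((mul_eq_zero.1 h0).resolve_left hb)
  · exact h ((mul_eq_zero.1 h1).resolve_left hb)

/-- Two lines whose intersection is a single point are not parallel. -/
lemma Gne {ai ak : Fin 2 → F} {bi bk : F} (hak : ak ≠ 0)
    (hU : ∀ x y : Fin 2 → F, ai 0 * x 0 + ai 1 * x 1 = bi →
      ak 0 * x 0 + ak 1 * x 1 = bk → ai 0 * y 0 + ai 1 * y 1 = bi →
      ak 0 * y 0 + ak 1 * y 1 = bk → x = y)
    {p : Fin 2 → F} (hpi : ai 0 * p 0 + ai 1 * p 1 = bi)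
    (hpk : ak 0 * p 0 + ak 1 * p 1 = bk) :
    ai 0 * ak 1 - ai 1 * ak 0 ≠ 0 := by
  intro hG
  set p' : Fin 2 → F := ![p 0 + ak 1, p 1 - ak 0] with hp'def
  have hc0 : p' 0 = p 0 + ak 1 := rfl
  have hc1 : p' 1 = p 1 - ak 0 := rfl
  have h1 : ai 0 * p' 0 + ai 1 * p' 1 = bi := by
    rw [hc0, hc1]; linear_combination hpi + hG
  have h2 : ak 0 * p' 0 + ak 1 * p' 1 = bk := by
    rw [hc0, hc1]; linear_combination hpk
  have hpp := hU p p' hpi hpk h1 h2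
  have e0 : p 0 = p 0 + ak 1 := (congrFun hpp 0).trans hc0
  have e1 : p 1 = p 1 - ak 0 := (congrFun hpp 1).trans hc1
  have hk0 : ak 0 = 0 := by linarith
  have hk1 : ak 1 = 0 := by linarith
  rcases (two_ne_zero_iff' ak).1 hak with h | h
  · exact h hk0
  · exact h hk1

/-- Values of the affine functional of one line at points of another line. -/
lemma lineF4 {a4 ai : Fin 2 → F} {b4 bi : F} {qk qi : Fin 2 → F}
    (hk4 : a4 0 * qk 0 + a4 1 * qk 1 = b4) (hi4 : a4 0 * qi 0 + a4 1 * qi 1 = b4)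
    (hii : ai 0 * qi 0 + ai 1 * qi 1 = bi) :
    (a4 0 ^ 2 + a4 1 ^ 2) * (ai 0 * qk 0 + ai 1 * qk 1 - bi)
      = (ai 0 * a4 1 - ai 1 * a4 0) *
        ((a4 1 * qk 0 - a4 0 * qk 1) - (a4 1 * qi 0 - a4 0 * qi 1)) := by
  linear_combination (a4 0 * ai 0 + a4 1 * ai 1) * hk4
    - (a4 0 * ai 0 + a4 1 * ai 1) * hi4 + (a4 0 ^ 2 + a4 1 ^ 2) * hii


lemma sgn_aux1 {N A B : F} (hN : 0 < N) (h : A * B < 0) : (N * A) * (N * B) < 0 := by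
  nlinarith [mul_pos hN hN]

lemma sgn_aux2 {N A B : F} (hN : 0 < N) (h : (N * A) * (N * B) < 0) : A * B < 0 := by
  by_contra hc
  push_neg at hc
  nlinarith [mul_nonneg (le_of_lt (mul_pos hN hN)) hc]

lemma sgn_aux3 {E X Y : F} (h : (E * X) * (E * Y) < 0) : X * Y < 0 := by
  by_contra hc
  push_neg at hc
  nlinarith [mul_nonneg (sq_nonneg E) hc]

lemma sgn_aux4 {G X Y : F} (hG : G ≠ 0) (h : X * Y < 0) : (G * X) * (G * Y) < 0 := by
  have h2 : 0 < G ^ 2 := lt_of_le_of_ne (sq_nonneg _) (Ne.symm (pow_ne_zero 2 hG))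
  nlinarith [mul_neg_of_pos_of_neg h2 h]

/-- If the intersection point `p` of lines `i` and `k` lies strictly between the two
parallel lines, then the functional of line `i` changes sign between `L_k ∩ L₄` and
`L_k ∩ L₄'`. -/
lemma side_flip {a4 ai ak : Fin 2 → F} {b4 b4' bi bk : F} (hak : ak ≠ 0)
    (hG : ai 0 * ak 1 - ai 1 * ak 0 ≠ 0) {p qk qk' : Fin 2 → F}
    (h1 : ak 0 * p 0 + ak 1 * p 1 = bk)
    (h2 : ak 0 * qk 0 + ak 1 * qk 1 = bk)
    (h3 : ak 0 * qk' 0 + ak 1 * qk' 1 = bk)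
    (h4 : a4 0 * qk 0 + a4 1 * qk 1 = b4)
    (h5 : a4 0 * qk' 0 + a4 1 * qk' 1 = b4')
    (h6 : ai 0 * p 0 + ai 1 * p 1 = bi)
    (hb : (a4 0 * p 0 + a4 1 * p 1 - b4) * (a4 0 * p 0 + a4 1 * p 1 - b4') < 0) :
    (ai 0 * qk 0 + ai 1 * qk 1 - bi) * (ai 0 * qk' 0 + ai 1 * qk' 1 - bi) < 0 := by
  have hNk : 0 < ak 0 ^ 2 + ak 1 ^ 2 := normsq_pos hak
  have I1 := lineF4 (a4 := ak) (ai := a4) (b4 := bk) (bi := b4) h1 h2 h4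
  have I2 := lineF4 (a4 := ak) (ai := a4) (b4 := bk) (bi := b4') h1 h3 h5
  have I3 := lineF4 (a4 := ak) (ai := ai) (b4 := bk) (bi := bi) h2 h1 h6
  have I4 := lineF4 (a4 := ak) (ai := ai) (b4 := bk) (bi := bi) h3 h1 h6
  have h7 := sgn_aux1 hNk hb
  rw [I1, I2] at h7
  have h8 := sgn_aux3 h7
  have h8' : ((ak 1 * qk 0 - ak 0 * qk 1) - (ak 1 * p 0 - ak 0 * p 1)) *
      ((ak 1 * qk' 0 - ak 0 * qk' 1) - (ak 1 * p 0 - ak 0 * p 1)) < 0 := by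
    linarith [h8]
  have h9' := sgn_aux4 hG h8'
  rw [← I3, ← I4] at h9'
  exact sgn_aux2 hNk h9'

end helpers

lemma sgn_aux5 {F : Type*} [Field F] [LinearOrder F] [IsStrictOrderedRing F] {C D X Y : F}
    (hC : C ≠ 0) (hD : D ≠ 0) (h : X * Y < 0) :
    ((C * X) * (D * Y)) * (C * D) < 0 := by
  have h2 : 0 < (C * D) ^ 2 := lt_of_le_of_ne (sq_nonneg _)
    (Ne.symm (pow_ne_zero 2 (mul_ne_zero hC hD)))
  nlinarith [mul_neg_of_pos_of_neg h2 h]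

lemma sgn_aux6 {F : Type*} [Field F] [LinearOrder F] [IsStrictOrderedRing F] {N A B C : F}
    (hN : 0 < N) (h : ((N * A) * (N * B)) * C < 0) : (A * B) * C < 0 := by
  by_contra hc
  push_neg at hc
  nlinarith [mul_nonneg (le_of_lt (mul_pos hN hN)) hc]

lemma sgn_aux7 {F : Type*} [Field F] [LinearOrder F] [IsStrictOrderedRing F] {P Q P' Q' C : F}
    (h1 : (P * Q) * C < 0) (h2 : P * P' < 0) (h3 : Q * Q' < 0) :
    (P' * Q') * C < 0 := by
  by_contra hc
  push_neg at hc
  nlinarith [mul_neg_of_neg_of_pos h1 (mul_pos_of_neg_of_neg h2 h3),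
    mul_nonneg (sq_nonneg (P * Q)) hc]

lemma sgn_aux8 {F : Type*} [Field F] [LinearOrder F] [IsStrictOrderedRing F] {C D X Y : F}
    (hC : C ≠ 0) (hD : D ≠ 0) (h : ((C * X) * (D * Y)) * (C * D) < 0) : X * Y < 0 := by
  by_contra hc
  push_neg at hc
  nlinarith [mul_nonneg (sq_nonneg (C * D)) hc]

lemma sgn_aux9 {F : Type*} [Field F] [LinearOrder F] [IsStrictOrderedRing F] {N A B C : F}
    (hN : 0 < N) (h : (A * B) * C < 0) : ((N * A) * (N * B)) * C < 0 := by
  nlinarith [mul_pos hN hN]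

/-- Main one-directional transfer lemma, in scalar form. -/
lemma central_aux {F : Type*} [Field F] [LinearOrder F] [IsStrictOrderedRing F]
    {a4 : Fin 2 → F} (ha4 : a4 ≠ 0) {b4 b4' : F} (hbb : b4 ≠ b4')
    {ai aj ak : Fin 2 → F} {bi bj bk : F}
    (haiv : ai ≠ 0) (hajv : aj ≠ 0) (hakv : ak ≠ 0)
    (hUij : ∀ x y : Fin 2 → F, ai 0 * x 0 + ai 1 * x 1 = bi →
      aj 0 * x 0 + aj 1 * x 1 = bj → ai 0 * y 0 + ai 1 * y 1 = bi →
      aj 0 * y 0 + aj 1 * y 1 = bj → x = y)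
    (hUik : ∀ x y : Fin 2 → F, ai 0 * x 0 + ai 1 * x 1 = bi →
      ak 0 * x 0 + ak 1 * x 1 = bk → ai 0 * y 0 + ai 1 * y 1 = bi →
      ak 0 * y 0 + ak 1 * y 1 = bk → x = y)
    (hUjk : ∀ x y : Fin 2 → F, aj 0 * x 0 + aj 1 * x 1 = bj →
      ak 0 * x 0 + ak 1 * x 1 = bk → aj 0 * y 0 + aj 1 * y 1 = bj →
      ak 0 * y 0 + ak 1 * y 1 = bk → x = y)
    {pij pik pjk : Fin 2 → F}
    (hpij1 : ai 0 * pij 0 + ai 1 * pij 1 = bi)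
    (hpij2 : aj 0 * pij 0 + aj 1 * pij 1 = bj)
    (hpik1 : ai 0 * pik 0 + ai 1 * pik 1 = bi)
    (hpik2 : ak 0 * pik 0 + ak 1 * pik 1 = bk)
    (hpjk1 : aj 0 * pjk 0 + aj 1 * pjk 1 = bj)
    (hpjk2 : ak 0 * pjk 0 + ak 1 * pjk 1 = bk)
    (hbij : (a4 0 * pij 0 + a4 1 * pij 1 - b4) * (a4 0 * pij 0 + a4 1 * pij 1 - b4') < 0)
    (hbik : (a4 0 * pik 0 + a4 1 * pik 1 - b4) * (a4 0 * pik 0 + a4 1 * pik 1 - b4') < 0)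
    (hbjk : (a4 0 * pjk 0 + a4 1 * pjk 1 - b4) * (a4 0 * pjk 0 + a4 1 * pjk 1 - b4') < 0)
    {qi qj qk qi' qj' qk' : Fin 2 → F}
    (hqi : ai 0 * qi 0 + ai 1 * qi 1 = bi) (hqi4 : a4 0 * qi 0 + a4 1 * qi 1 = b4)
    (hqj : aj 0 * qj 0 + aj 1 * qj 1 = bj) (hqj4 : a4 0 * qj 0 + a4 1 * qj 1 = b4)
    (hqk : ak 0 * qk 0 + ak 1 * qk 1 = bk) (hqk4 : a4 0 * qk 0 + a4 1 * qk 1 = b4)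
    (hqi' : ai 0 * qi' 0 + ai 1 * qi' 1 = bi) (hqi4' : a4 0 * qi' 0 + a4 1 * qi' 1 = b4')
    (hqj' : aj 0 * qj' 0 + aj 1 * qj' 1 = bj) (hqj4' : a4 0 * qj' 0 + a4 1 * qj' 1 = b4')
    (hqk' : ak 0 * qk' 0 + ak 1 * qk' 1 = bk) (hqk4' : a4 0 * qk' 0 + a4 1 * qk' 1 = b4')
    (hseg : qk ∈ openSegment F qi qj) : qk' ∈ openSegment F qi' qj' := by
  have hN : 0 < a4 0 ^ 2 + a4 1 ^ 2 := normsq_pos ha4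
  have hDi : ai 0 * a4 1 - ai 1 * a4 0 ≠ 0 := Dne haiv hbb hqi4 hqi4' hqi hqi'
  have hDj : aj 0 * a4 1 - aj 1 * a4 0 ≠ 0 := Dne hajv hbb hqj4 hqj4' hqj hqj'
  have hqiqj : qi ≠ qj := by
    intro h
    have heq : qi = pij := hUij qi pij hqi (by rw [h]; exact hqj) hpij1 hpij2
    have h0 : a4 0 * pij 0 + a4 1 * pij 1 = b4 := by rw [← heq]; exact hqi4
    rw [h0] at hbij
    simp at hbij
  have hqiqj' : qi' ≠ qj' := by
    intro h
    have heq : qi' = pij := hUij qi' pij hqi' (by rw [h]; exact hqj') hpij1 hpij2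
    have h0 : a4 0 * pij 0 + a4 1 * pij 1 = b4' := by rw [← heq]; exact hqi4'
    rw [h0] at hbij
    simp at hbij
  have hGik : ai 0 * ak 1 - ai 1 * ak 0 ≠ 0 := Gne hakv hUik hpik1 hpik2
  have hGjk : aj 0 * ak 1 - aj 1 * ak 0 ≠ 0 := Gne hakv hUjk hpjk1 hpjk2
  have hflipi := side_flip hakv hGik hpik2 hqk hqk' hqk4 hqk4' hpik1 hbik
  have hflipj := side_flip hakv hGjk hpjk2 hqk hqk' hqk4 hqk4' hpjk1 hbjk
  have Ii := lineF4 (a4 := a4) (ai := ai) hqk4 hqi4 hqi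
  have Ij := lineF4 (a4 := a4) (ai := aj) hqk4 hqj4 hqj
  have Ii' := lineF4 (a4 := a4) (ai := ai) hqk4' hqi4' hqi'
  have Ij' := lineF4 (a4 := a4) (ai := aj) hqk4' hqj4' hqj'
  have hTprod := (seg_char ha4 hqi4 hqj4 hqk4 hqiqj).1 hseg
  have hA := sgn_aux5 hDi hDj hTprod
  rw [← Ii, ← Ij] at hA
  have hB := sgn_aux6 hN hA
  have hC' := sgn_aux7 hB hflipi hflipj
  have hE := sgn_aux9 hN hC'
  rw [Ii', Ij'] at hE
  have hTprod' := sgn_aux8 hDi hDj hE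
  exact (seg_char ha4 hqi4' hqj4' hqk4' hqiqj').2 hTprod'


/-- Let `L₀, L₁, L₂` be three lines in general position in `F²` and let `L₃ : a4 ⬝ x = b4`
and `L₃' : a4 ⬝ x = b4'` be two parallel lines such that the three pairwise intersection
points of `L₀, L₁, L₂` lie strictly between `L₃` and `L₃'`.  Then for each `k`, the point
`L_k ∩ L₃` lies strictly between the other two of the points `L₀ ∩ L₃, L₁ ∩ L₃, L₂ ∩ L₃`
if and only if `L_k ∩ L₃'` lies strictly between the other two of the points
`L₀ ∩ L₃', L₁ ∩ L₃', L₂ ∩ L₃'`. -/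
theorem central_point_on_either_infinity {F : Type*} [Field F] [LinearOrder F] [IsStrictOrderedRing F]
    (a : Fin 3 → Fin 2 → F) (b : Fin 3 → F) (hA : IsArrangement a b)
    (a4 : Fin 2 → F) (ha4 : a4 ≠ 0) (b4 b4' : F) (hbb : b4 ≠ b4')
    (p01 p02 p12 : Fin 2 → F)
    (hp01 : p01 ∈ hypSet (a 0) (b 0) ∧ p01 ∈ hypSet (a 1) (b 1))
    (hp02 : p02 ∈ hypSet (a 0) (b 0) ∧ p02 ∈ hypSet (a 2) (b 2))
    (hp12 : p12 ∈ hypSet (a 1) (b 1) ∧ p12 ∈ hypSet (a 2) (b 2))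
    (hbetween : ∀ p ∈ ({p01, p02, p12} : Set (Fin 2 → F)),
      (∑ j, a4 j * p j - b4) * (∑ j, a4 j * p j - b4') < 0)
    (q q' : Fin 3 → Fin 2 → F)
    (hq : ∀ k, q k ∈ hypSet (a k) (b k) ∧ q k ∈ hypSet a4 b4)
    (hq' : ∀ k, q' k ∈ hypSet (a k) (b k) ∧ q' k ∈ hypSet a4 b4') :
    ∀ k i j : Fin 3, i ≠ j → i ≠ k → j ≠ k →
      (q k ∈ openSegment F (q i) (q j) ↔ q' k ∈ openSegment F (q' i) (q' j)) := by
  obtain ⟨hne0, hpair, -⟩ := hA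
  -- uniqueness of pairwise intersections, in scalar form
  have hU : ∀ i k : Fin 3, i ≠ k → ∀ x y : Fin 2 → F,
      a i 0 * x 0 + a i 1 * x 1 = b i → a k 0 * x 0 + a k 1 * x 1 = b k →
      a i 0 * y 0 + a i 1 * y 1 = b i → a k 0 * y 0 + a k 1 * y 1 = b k → x = y := by
    intro i k hik x y hxi hxk hyi hyk
    have hcard : ({i, k} : Finset (Fin 3)).card = 2 := by
      rw [Finset.card_insert_of_notMem (by simp [hik]), Finset.card_singleton]
    obtain ⟨A, hcar, -, hrank⟩ := hpair {i, k} ⟨i, by simp⟩ (by rw [hcard])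
    have hmem : ∀ z : Fin 2 → F, a i 0 * z 0 + a i 1 * z 1 = b i →
        a k 0 * z 0 + a k 1 * z 1 = b k → z ∈ A := by
      intro z h1 h2
      have : z ∈ (A : Set (Fin 2 → F)) := by
        rw [hcar]
        simp only [Set.mem_iInter]
        intro m hm
        rcases Finset.mem_insert.mp hm with rfl | hm
        · simpa [hypSet, Fin.sum_univ_two] using h1
        · rcases Finset.mem_singleton.mp hm with rfl
          simpa [hypSet, Fin.sum_univ_two] using h2
      exact this
    have hx := hmem x hxi hxk
    have hy := hmem y hyi hyk
    have hd : A.direction = ⊥ := by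
      refine Submodule.finrank_eq_zero.mp ?_
      rw [hrank, hcard]
    have hv := AffineSubspace.vsub_mem_direction hx hy
    rw [hd, Submodule.mem_bot] at hv
    rw [vsub_eq_sub] at hv
    exact sub_eq_zero.1 hv
  -- intersection points of each pair of lines, strictly between the parallels
  simp only [Fin.sum_univ_two] at hbetween
  have hP : ∀ i j : Fin 3, i ≠ j → ∃ p : Fin 2 → F,
      (a i 0 * p 0 + a i 1 * p 1 = b i) ∧ (a j 0 * p 0 + a j 1 * p 1 = b j) ∧
      (a4 0 * p 0 + a4 1 * p 1 - b4) * (a4 0 * p 0 + a4 1 * p 1 - b4') < 0 := by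
    have c01a : a 0 0 * p01 0 + a 0 1 * p01 1 = b 0 := by
      simpa [hypSet, Fin.sum_univ_two] using hp01.1
    have c01b : a 1 0 * p01 0 + a 1 1 * p01 1 = b 1 := by
      simpa [hypSet, Fin.sum_univ_two] using hp01.2
    have c02a : a 0 0 * p02 0 + a 0 1 * p02 1 = b 0 := by
      simpa [hypSet, Fin.sum_univ_two] using hp02.1
    have c02b : a 2 0 * p02 0 + a 2 1 * p02 1 = b 2 := by
      simpa [hypSet, Fin.sum_univ_two] using hp02.2
    have c12a : a 1 0 * p12 0 + a 1 1 * p12 1 = b 1 := by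
      simpa [hypSet, Fin.sum_univ_two] using hp12.1
    have c12b : a 2 0 * p12 0 + a 2 1 * p12 1 = b 2 := by
      simpa [hypSet, Fin.sum_univ_two] using hp12.2
    have hb01 := hbetween p01 (by simp)
    have hb02 := hbetween p02 (by simp)
    have hb12 := hbetween p12 (by simp)
    intro i j hij
    fin_cases i <;> fin_cases j <;>
      first
        | exact absurd rfl hij
        | exact ⟨p01, c01a, c01b, hb01⟩
        | exact ⟨p01, c01b, c01a, hb01⟩
        | exact ⟨p02, c02a, c02b, hb02⟩
        | exact ⟨p02, c02b, c02a, hb02⟩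
        | exact ⟨p12, c12a, c12b, hb12⟩
        | exact ⟨p12, c12b, c12a, hb12⟩
  have hqL : ∀ k, a k 0 * q k 0 + a k 1 * q k 1 = b k := fun k => by
    simpa [hypSet, Fin.sum_univ_two] using (hq k).1
  have hq4 : ∀ k, a4 0 * q k 0 + a4 1 * q k 1 = b4 := fun k => by
    simpa [hypSet, Fin.sum_univ_two] using (hq k).2
  have hqL' : ∀ k, a k 0 * q' k 0 + a k 1 * q' k 1 = b k := fun k => by
    simpa [hypSet, Fin.sum_univ_two] using (hq' k).1
  have hq4' : ∀ k, a4 0 * q' k 0 + a4 1 * q' k 1 = b4' := fun k => by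
    simpa [hypSet, Fin.sum_univ_two] using (hq' k).2
  intro k i j hij hik hjk
  obtain ⟨pij, hpij1, hpij2, hbij⟩ := hP i j hij
  obtain ⟨pik, hpik1, hpik2, hbik⟩ := hP i k hik
  obtain ⟨pjk, hpjk1, hpjk2, hbjk⟩ := hP j k hjk
  have hbij' : (a4 0 * pij 0 + a4 1 * pij 1 - b4') *
      (a4 0 * pij 0 + a4 1 * pij 1 - b4) < 0 := by rw [mul_comm]; exact hbij
  have hbik' : (a4 0 * pik 0 + a4 1 * pik 1 - b4') *
      (a4 0 * pik 0 + a4 1 * pik 1 - b4) < 0 := by rw [mul_comm]; exact hbik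
  have hbjk' : (a4 0 * pjk 0 + a4 1 * pjk 1 - b4') *
      (a4 0 * pjk 0 + a4 1 * pjk 1 - b4) < 0 := by rw [mul_comm]; exact hbjk
  constructor
  · exact central_aux ha4 hbb (hne0 i) (hne0 j) (hne0 k)
      (hU i j hij) (hU i k hik) (hU j k hjk)
      hpij1 hpij2 hpik1 hpik2 hpjk1 hpjk2 hbij hbik hbjk
      (hqL i) (hq4 i) (hqL j) (hq4 j) (hqL k) (hq4 k)
      (hqL' i) (hq4' i) (hqL' j) (hq4' j) (hqL' k) (hq4' k)
  · exact central_aux ha4 hbb.symm (hne0 i) (hne0 j) (hne0 k)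
      (hU i j hij) (hU i k hik) (hU j k hjk)
      hpij1 hpij2 hpik1 hpik2 hpjk1 hpjk2 hbij' hbik' hbjk'
      (hqL' i) (hq4' i) (hqL' j) (hq4' j) (hqL' k) (hq4' k)
      (hqL i) (hq4 i) (hqL j) (hq4 j) (hqL k) (hq4 k)
end

section
/- Let 𝔽 be an ordered field and let 𝒩_1, 𝒩_2 be two normal systems in 𝔽^3 with sets 𝒰_1, 𝒰_2 of antipodal pairs of vectors. For i = 1, 2 let G_i be the graph of compatible pairs of 𝒩_i. If δ : 𝒰_1 → 𝒰_2 is a convex positive bijection, then δ induces an isomorphism of graphs G_1 ≅ G_2 (sending the vertex {x, y} to {δ(x), δ(y)}). Conversely, if δ : 𝒰_1 → 𝒰_2 is a bijection with δ(−u) = −δ(u) for all u ∈ 𝒰_1 such that the induced map on vertices is an isomorphism of the graphs G_1 and G_2, then δ is a convex positive bijection. -/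
/-- `v` enumerates (one vector from each antipodal pair of) a normal system of
cardinality `n` in `F^m`: the vectors are nonzero, span pairwise distinct lines through
the origin, and every subfamily of cardinality at most `m` is linearly independent. -/
def IsNormalFamily {F : Type*} [Field F] {m n : ℕ} (v : Fin n → Fin m → F) : Prop :=
  (∀ i, v i ≠ 0) ∧
  (∀ i j : Fin n, i ≠ j → Submodule.span F {v i} ≠ Submodule.span F {v j}) ∧
  (∀ T : Finset (Fin n), T.card ≤ m →
    LinearIndependent F (fun i : {x // x ∈ T} => v i.1))

/-- The map on the vertices of the graphs of compatible pairs induced by the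
antipode-preserving bijection `δ (ζ • v i) = (ζ * η i) • w (σ i)` is an isomorphism of
graphs: two distinct vertices `{ζ1 • v i1, ξ1 • v j1}` and `{ζ2 • v i2, ξ2 • v j2}` are
compatible (joined by an edge, i.e. some positive combinations of the two pairs agree)
if and only if their images are. -/
def InducesCompatGraphIso {F : Type*} [Field F] [LinearOrder F] [IsStrictOrderedRing F] {n : ℕ}
    (v w : Fin n → Fin 3 → F) (σ : Equiv.Perm (Fin n)) (η : Fin n → F) : Prop :=
  ∀ (i1 j1 i2 j2 : Fin n) (ζ1 ξ1 ζ2 ξ2 : F),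
    (ζ1 = 1 ∨ ζ1 = -1) → (ξ1 = 1 ∨ ξ1 = -1) →
    (ζ2 = 1 ∨ ζ2 = -1) → (ξ2 = 1 ∨ ξ2 = -1) →
    i1 ≠ j1 → i2 ≠ j2 →
    ({ζ1 • v i1, ξ1 • v j1} : Set (Fin 3 → F)) ≠ {ζ2 • v i2, ξ2 • v j2} →
    ((∃ p q r s : F, 0 < p ∧ 0 < q ∧ 0 < r ∧ 0 < s ∧
        p • (ζ1 • v i1) + q • (ξ1 • v j1) = r • (ζ2 • v i2) + s • (ξ2 • v j2)) ↔
      (∃ p q r s : F, 0 < p ∧ 0 < q ∧ 0 < r ∧ 0 < s ∧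
        p • ((ζ1 * η i1) • w (σ i1)) + q • ((ξ1 * η j1) • w (σ j1)) =
          r • ((ζ2 * η i2) • w (σ i2)) + s • ((ξ2 * η j2) • w (σ j2))))

namespace GCP

variable {F : Type*} [Field F] [LinearOrder F] [IsStrictOrderedRing F] {n : ℕ}

/-- Compatibility of two pairs of vectors. -/
def Cp {M : Type*} [AddCommGroup M] [Module F M] (x y z t : M) : Prop :=
  ∃ p q r s : F, 0 < p ∧ 0 < q ∧ 0 < r ∧ 0 < s ∧ p • x + q • y = r • z + s • t

section General
variable {M : Type*} [AddCommGroup M] [Module F M]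

lemma cp_swap1 {x y z t : M} (h : Cp (F := F) x y z t) : Cp (F := F) y x z t := by
  obtain ⟨p, q, r, s, hp, hq, hr, hs, h⟩ := h
  exact ⟨q, p, r, s, hq, hp, hr, hs, by linear_combination (norm := module) h⟩

lemma cp_swap2 {x y z t : M} (h : Cp (F := F) x y z t) : Cp (F := F) x y t z := by
  obtain ⟨p, q, r, s, hp, hq, hr, hs, h⟩ := h
  exact ⟨p, q, s, r, hp, hq, hs, hr, by linear_combination (norm := module) h⟩

lemma sign_ne_zero' {a : F} (h : a = 1 ∨ a = -1) : a ≠ 0 := by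
  rcases h with h | h <;> simp [h]

lemma sign_mul' {a b : F} (ha : a = 1 ∨ a = -1) (hb : b = 1 ∨ b = -1) :
    a * b = 1 ∨ a * b = -1 := by
  rcases ha with h | h <;> rcases hb with h' | h' <;> simp [h, h']

lemma sign_neg' {a : F} (ha : a = 1 ∨ a = -1) : -a = 1 ∨ -a = -1 := by
  rcases ha with h | h <;> simp [h]

lemma sign_eq_of_pos {a b p r : F} (ha : a = 1 ∨ a = -1) (hb : b = 1 ∨ b = -1)
    (hp : 0 < p) (hr : 0 < r) (h : p * a = r * b) : a = b := by
  rcases ha with h1 | h1 <;> rcases hb with h2 | h2 <;> subst h1 <;> subst h2 <;>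
    first | rfl | (simp only [mul_one, mul_neg_one] at h; linarith)

lemma not_cp_shared {A B C : M}
    (hind : ∀ x y z : F, x • A + y • B + z • C = 0 → x = 0 ∧ y = 0 ∧ z = 0)
    {α β γ δ : F} (hβ0 : β ≠ 0) : ¬ Cp (F := F) (α • A) (β • B) (γ • A) (δ • C) := by
  rintro ⟨p, q, r, s, hp, hq, hr, hs, h⟩
  have h0 : (p * α - r * γ) • A + (q * β) • B + (-(s * δ)) • C = 0 := by
    linear_combination (norm := module) h
  have h1 := (hind _ _ _ h0).2.1
  rcases mul_eq_zero.mp h1 with h' | h'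
  · exact hq.ne' h'
  · exact hβ0 h'

lemma cp_pair_aligned {A B : M}
    (hind : ∀ x y : F, x • A + y • B = 0 → x = 0 ∧ y = 0)
    {α β γ δ : F} (hα : α = 1 ∨ α = -1) (hβ : β = 1 ∨ β = -1)
    (hγ : γ = 1 ∨ γ = -1) (hδ : δ = 1 ∨ δ = -1)
    (h : Cp (F := F) (α • A) (β • B) (γ • A) (δ • B)) : α = γ ∧ β = δ := by
  obtain ⟨p, q, r, s, hp, hq, hr, hs, h⟩ := h
  have h0 : (p * α - r * γ) • A + (q * β - s * δ) • B = 0 := by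
    linear_combination (norm := module) h
  obtain ⟨h1, h2⟩ := hind _ _ h0
  exact ⟨sign_eq_of_pos hα hγ hp hr (by linarith),
    sign_eq_of_pos hβ hδ hq hs (by linarith)⟩

lemma card_three {a b c : Fin n} (hab : a ≠ b) (hac : a ≠ c) (hbc : b ≠ c) :
    ({a, b, c} : Finset (Fin n)).card = 3 := by
  rw [Finset.card_insert_of_notMem (by simp [hab, hac]),
    Finset.card_insert_of_notMem (by simp [hbc]), Finset.card_singleton]

lemma card_le_two {a b : Fin n} : ({a, b} : Finset (Fin n)).card ≤ 2 := by
  apply le_trans (Finset.card_insert_le _ _); simp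

lemma card_le_three {a b c : Fin n} : ({a, b, c} : Finset (Fin n)).card ≤ 3 := by
  apply le_trans (Finset.card_insert_le _ _)
  have := card_le_two (a := b) (b := c) (n := n); omega

lemma sum_three {a b c : Fin n} (hab : a ≠ b) (hac : a ≠ c) (hbc : b ≠ c)
    (f : Fin n → M) : ∑ i ∈ ({a, b, c} : Finset (Fin n)), f i = f a + f b + f c := by
  rw [Finset.sum_insert (by simp [hab, hac]), Finset.sum_insert (by simp [hbc]),
    Finset.sum_singleton, add_assoc]

lemma indep_smul {ι : Type*} {f : ι → M} (h : LinearIndependent F f)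
    (ζ : ι → F) (hζ : ∀ i, ζ i ≠ 0) : LinearIndependent F fun i => ζ i • f i := by
  have hfun : (fun i => ζ i • f i) = (fun i => Units.mk0 (ζ i) (hζ i)) • f := by
    funext i; simp [Pi.smul_apply', Units.smul_def]
  rw [hfun]; exact h.units_smul _

lemma comb_iff_cp {a b c : Fin n} (hab : a ≠ b) (hac : a ≠ c) (hbc : b ≠ c)
    (x y z t : M) (u : Fin n → M)
    (ha : u a = -y) (hb : u b = z) (hc : u c = t) :
    (∃ d : Fin n → F, (∀ i ∈ ({a, b, c} : Finset (Fin n)), 0 < d i) ∧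
        x = ∑ i ∈ ({a, b, c} : Finset (Fin n)), d i • u i) ↔ Cp (F := F) x y z t := by
  have hba : ¬(b = a) := fun h => hab h.symm
  have hca : ¬(c = a) := fun h => hac h.symm
  have hcb : ¬(c = b) := fun h => hbc h.symm
  simp only [sum_three hab hac hbc, ha, hb, hc]
  constructor
  · rintro ⟨d, hd, heq⟩
    exact ⟨1, d a, d b, d c, one_pos, hd a (by simp), hd b (by simp), hd c (by simp),
      by linear_combination (norm := module) heq⟩
  · rintro ⟨p, q, r, s, hp, hq, hr, hs, h⟩
    refine ⟨fun i => if i = a then q / p else if i = b then r / p else s / p, ?_, ?_⟩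
    · intro i hi
      show 0 < if i = a then q / p else if i = b then r / p else s / p
      split_ifs
      · exact div_pos hq hp
      · exact div_pos hr hp
      · exact div_pos hs hp
    · simp only [if_pos rfl, if_neg hba, if_neg hca, if_neg hcb, ↓reduceIte]
      linear_combination (norm := match_scalars <;> field_simp <;> ring) p⁻¹ • h

lemma no_pos_comb_mem {T : Finset (Fin n)} (hcard : 3 ≤ T.card)
    {u : Fin n → M} (hind : LinearIndependent F (fun i : {x // x ∈ T} => u i.1))
    {k : Fin n} (hk : k ∈ T) (e : F) (x : M) (hx : x = e • u k) :
    ¬ ∃ c : Fin n → F, (∀ i ∈ T, 0 < c i) ∧ x = ∑ i ∈ T, c i • u i := by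
  rintro ⟨c, hc, heq⟩
  rw [Fintype.linearIndependent_iff] at hind
  have key := hind (fun i => c i.1 - if i.1 = k then e else 0) ?_
  · obtain ⟨j, hjT, hjk⟩ := Finset.exists_mem_ne (s := T) (by omega) k
    have := key ⟨j, hjT⟩
    simp [hjk] at this
    exact (hc j hjT).ne' this
  · have hs : ∑ i : {x // x ∈ T}, (c i.1 - if i.1 = k then e else 0) • u i.1
        = ∑ i ∈ T, (c i - if i = k then e else 0) • u i :=
      Finset.sum_coe_sort _ (fun j => (c j - if j = k then e else 0) • u j)
    rw [hs]
    have h1 : ∑ i ∈ T, (c i - if i = k then e else 0) • u i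
        = (∑ i ∈ T, c i • u i) - ∑ i ∈ T, (if i = k then e else 0) • u i := by
      rw [← Finset.sum_sub_distrib]
      exact Finset.sum_congr rfl fun i _ => by rw [sub_smul]
    have h2 : ∑ i ∈ T, (if i = k then e else 0) • u i = e • u k := by
      rw [Finset.sum_congr rfl (fun i _ => show (if i = k then e else 0) • u i
          = if i = k then e • u i else 0 by split_ifs <;> simp)]
      rw [Finset.sum_ite_eq' T k (fun i => e • u i), if_pos hk]
    rw [h1, h2, ← heq, hx, sub_self]

end General

lemma indep2 {v : Fin n → Fin 3 → F} (hv : IsNormalFamily v) {a b : Fin n} (hab : a ≠ b) :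
    ∀ x y : F, x • v a + y • v b = 0 → x = 0 ∧ y = 0 := by
  intro x y h
  have hT := hv.2.2 {a, b} (le_trans card_le_two (by norm_num))
  rw [Fintype.linearIndependent_iff] at hT
  have ha : a ∈ ({a, b} : Finset (Fin n)) := by simp
  have hb : b ∈ ({a, b} : Finset (Fin n)) := by simp
  have key := hT (fun i => if i.1 = a then x else y) ?_
  · constructor
    · have := key ⟨a, ha⟩; simpa using this
    · have := key ⟨b, hb⟩; simpa [hab.symm] using this
  · have hs : ∑ i : {x // x ∈ ({a, b} : Finset (Fin n))},
        (if i.1 = a then x else y) • v i.1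
        = ∑ i ∈ ({a, b} : Finset (Fin n)), (if i = a then x else y) • v i :=
      Finset.sum_coe_sort _ (fun j => (if j = a then x else y) • v j)
    rw [hs, Finset.sum_insert (by simp [hab]), Finset.sum_singleton]
    simpa [hab.symm] using h

lemma indep3 {v : Fin n → Fin 3 → F} (hv : IsNormalFamily v) {a b c : Fin n}
    (hab : a ≠ b) (hac : a ≠ c) (hbc : b ≠ c) :
    ∀ x y z : F, x • v a + y • v b + z • v c = 0 → x = 0 ∧ y = 0 ∧ z = 0 := by
  intro x y z h
  have hT := hv.2.2 {a, b, c} card_le_three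
  rw [Fintype.linearIndependent_iff] at hT
  have ha : a ∈ ({a, b, c} : Finset (Fin n)) := by simp
  have hb : b ∈ ({a, b, c} : Finset (Fin n)) := by simp
  have hc : c ∈ ({a, b, c} : Finset (Fin n)) := by simp
  have key := hT (fun i => if i.1 = a then x else if i.1 = b then y else z) ?_
  · refine ⟨?_, ?_, ?_⟩
    · have := key ⟨a, ha⟩; simpa using this
    · have := key ⟨b, hb⟩; simpa [hab.symm] using this
    · have := key ⟨c, hc⟩; simpa [hac.symm, hbc.symm] using this
  · have hs : ∑ i : {x // x ∈ ({a, b, c} : Finset (Fin n))},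
        (if i.1 = a then x else if i.1 = b then y else z) • v i.1
        = ∑ i ∈ ({a, b, c} : Finset (Fin n)),
            (if i = a then x else if i = b then y else z) • v i :=
      Finset.sum_coe_sort _ (fun j => (if j = a then x else if j = b then y else z) • v j)
    rw [hs, Finset.sum_insert (by simp [hab, hac]), Finset.sum_insert (by simp [hbc]),
      Finset.sum_singleton]
    simpa [hab.symm, hac.symm, hbc.symm, add_assoc] using h

lemma indep_sigma {w : Fin n → Fin 3 → F} (hw : IsNormalFamily w) (σ : Equiv.Perm (Fin n))
    {T : Finset (Fin n)} (hT : T.card ≤ 3) :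
    LinearIndependent F (fun i : {x // x ∈ T} => w (σ i.1)) := by
  have hcard : (T.map σ.toEmbedding).card ≤ 3 := by rwa [Finset.card_map]
  have h := hw.2.2 _ hcard
  have hinj : Function.Injective
      (fun i : {x // x ∈ T} =>
        (⟨σ i.1, Finset.mem_map_of_mem _ i.2⟩ : {x // x ∈ T.map σ.toEmbedding})) := by
    intro i j hij
    exact Subtype.ext (σ.injective (congrArg Subtype.val hij))
  exact h.comp _ hinj

end GCP

open GCP

/-- **Theorem (graphs of compatible pairs in dimension three).** For two normal systems
in `F^3`, a convex positive bijection between their sets of antipodal pairs induces an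
isomorphism of the associated graphs of compatible pairs; conversely, an
antipode-preserving bijection inducing an isomorphism of the graphs of compatible pairs
is a convex positive bijection. -/
theorem graph_of_compatible_pairs {F : Type*} [Field F] [LinearOrder F] [IsStrictOrderedRing F] {n : ℕ}
    (v w : Fin n → Fin 3 → F) (hv : IsNormalFamily v) (hw : IsNormalFamily w)
    (σ : Equiv.Perm (Fin n)) (η : Fin n → F) (hη : ∀ i, η i = 1 ∨ η i = -1) :
    (IsCPB v w σ η → InducesCompatGraphIso v w σ η) ∧
    (InducesCompatGraphIso v w σ η → IsCPB v w σ η) := by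
  constructor
  · rintro ⟨-, hcpb⟩
    intro i1 j1 i2 j2 ζ1 ξ1 ζ2 ξ2 hζ1 hξ1 hζ2 hξ2 hij1 hij2 hne
    by_cases h1 : i1 = i2
    · subst h1
      by_cases h2 : j1 = j2
      · -- aligned doubled pair
        subst h2
        refine iff_of_false ?_ ?_
        · intro hcp
          obtain ⟨e1, e2⟩ := cp_pair_aligned (indep2 hv hij1) hζ1 hξ1 hζ2 hξ2 hcp
          exact hne (by rw [e1, e2])
        · intro hcp
          obtain ⟨e1, e2⟩ := cp_pair_aligned (indep2 hw (σ.injective.ne hij1))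
            (sign_mul' hζ1 (hη i1)) (sign_mul' hξ1 (hη j1))
            (sign_mul' hζ2 (hη i1)) (sign_mul' hξ2 (hη j1)) hcp
          have e1' : ζ1 = ζ2 := mul_right_cancel₀ (sign_ne_zero' (hη i1)) e1
          have e2' : ξ1 = ξ2 := mul_right_cancel₀ (sign_ne_zero' (hη j1)) e2
          exact hne (by rw [e1', e2'])
      · -- shared index i1 = i2 only
        refine iff_of_false ?_ ?_
        · exact not_cp_shared (indep3 hv hij1 hij2 h2) (sign_ne_zero' hξ1)
        · exact not_cp_shared
            (indep3 hw (σ.injective.ne hij1) (σ.injective.ne hij2) (σ.injective.ne h2))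
            (mul_ne_zero (sign_ne_zero' hξ1) (sign_ne_zero' (hη j1)))
    · by_cases h2 : i1 = j2
      · subst h2
        by_cases h3 : j1 = i2
        · -- crossed doubled pair
          subst h3
          refine iff_of_false ?_ ?_
          · intro hcp
            obtain ⟨e1, e2⟩ := cp_pair_aligned (indep2 hv hij1) hζ1 hξ1 hξ2 hζ2
              (cp_swap2 hcp)
            exact hne (by rw [e1, e2]; exact Set.pair_comm _ _)
          · intro hcp
            obtain ⟨e1, e2⟩ := cp_pair_aligned (indep2 hw (σ.injective.ne hij1))
              (sign_mul' hζ1 (hη i1)) (sign_mul' hξ1 (hη j1))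
              (sign_mul' hξ2 (hη i1)) (sign_mul' hζ2 (hη j1)) (cp_swap2 hcp)
            have e1' : ζ1 = ξ2 := mul_right_cancel₀ (sign_ne_zero' (hη i1)) e1
            have e2' : ξ1 = ζ2 := mul_right_cancel₀ (sign_ne_zero' (hη j1)) e2
            exact hne (by rw [e1', e2']; exact Set.pair_comm _ _)
        · -- shared index i1 = j2 only
          refine iff_of_false ?_ ?_
          · intro hcp
            exact not_cp_shared (indep3 hv hij1 h1 h3) (sign_ne_zero' hξ1) (cp_swap2 hcp)
          · intro hcp
            exact not_cp_shared
              (indep3 hw (σ.injective.ne hij1) (σ.injective.ne h1) (σ.injective.ne h3))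
              (mul_ne_zero (sign_ne_zero' hξ1) (sign_ne_zero' (hη j1))) (cp_swap2 hcp)
      · by_cases h3 : j1 = i2
        · -- shared index j1 = i2 only
          subst h3
          refine iff_of_false ?_ ?_
          · intro hcp
            exact not_cp_shared (indep3 hv (Ne.symm hij1) hij2 h2) (sign_ne_zero' hζ1)
              (cp_swap1 hcp)
          · intro hcp
            exact not_cp_shared
              (indep3 hw (σ.injective.ne (Ne.symm hij1)) (σ.injective.ne hij2)
                (σ.injective.ne h2))
              (mul_ne_zero (sign_ne_zero' hζ1) (sign_ne_zero' (hη i1))) (cp_swap1 hcp)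
        · by_cases h4 : j1 = j2
          · -- shared index j1 = j2 only
            subst h4
            refine iff_of_false ?_ ?_
            · intro hcp
              exact not_cp_shared (indep3 hv (Ne.symm hij1) h3 h1) (sign_ne_zero' hζ1)
                (cp_swap2 (cp_swap1 hcp))
            · intro hcp
              exact not_cp_shared
                (indep3 hw (σ.injective.ne (Ne.symm hij1)) (σ.injective.ne h3)
                  (σ.injective.ne h1))
                (mul_ne_zero (sign_ne_zero' hζ1) (sign_ne_zero' (hη i1)))
                (cp_swap2 (cp_swap1 hcp))
          · -- all four indices distinct
            have hζfs : ∀ i : Fin n,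
                (if i = j1 then -ξ1 else if i = i2 then ζ2 else if i = j2 then ξ2 else 1) = 1 ∨
                (if i = j1 then -ξ1 else if i = i2 then ζ2 else if i = j2 then ξ2 else 1) = -1 := by
              intro i
              split_ifs
              · exact sign_neg' hξ1
              · exact hζ2
              · exact hξ2
              · exact Or.inl rfl
            have hTcard : ({j1, i2, j2} : Finset (Fin n)).card = 3 := card_three h3 h4 hij2
            have hind : LinearIndependent F
                (fun i : {x // x ∈ ({j1, i2, j2} : Finset (Fin n))} =>
                  (if i.1 = j1 then -ξ1 else if i.1 = i2 then ζ2 else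
                    if i.1 = j2 then ξ2 else 1) • v i.1) :=
              indep_smul (hv.2.2 _ card_le_three) _ (fun i => sign_ne_zero' (hζfs i.1))
            have hiff := hcpb {j1, i2, j2} hTcard
              (fun i => if i = j1 then -ξ1 else if i = i2 then ζ2 else if i = j2 then ξ2 else 1)
              hζfs hind i1 ζ1 hζ1
            have ej1 : (if j1 = j1 then -ξ1 else if j1 = i2 then ζ2 else
                if j1 = j2 then ξ2 else (1:F)) = -ξ1 := by simp
            have ei2 : (if i2 = j1 then -ξ1 else if i2 = i2 then ζ2 else
                if i2 = j2 then ξ2 else (1:F)) = ζ2 := by simp [Ne.symm h3]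
            have ej2 : (if j2 = j1 then -ξ1 else if j2 = i2 then ζ2 else
                if j2 = j2 then ξ2 else (1:F)) = ξ2 := by
              simp [Ne.symm h4, Ne.symm hij2]
            have combv := comb_iff_cp (F := F) (M := Fin 3 → F) h3 h4 hij2 (ζ1 • v i1) (ξ1 • v j1)
              (ζ2 • v i2) (ξ2 • v j2)
              (fun i => (if i = j1 then -ξ1 else if i = i2 then ζ2 else
                if i = j2 then ξ2 else 1) • v i)
              (by show _ • v j1 = -(ξ1 • v j1); rw [ej1, neg_smul])
              (by show _ • v i2 = ζ2 • v i2; rw [ei2])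
              (by show _ • v j2 = ξ2 • v j2; rw [ej2])
            have combw := comb_iff_cp (F := F) (M := Fin 3 → F) h3 h4 hij2
              ((ζ1 * η i1) • w (σ i1)) ((ξ1 * η j1) • w (σ j1))
              ((ζ2 * η i2) • w (σ i2)) ((ξ2 * η j2) • w (σ j2))
              (fun i => ((if i = j1 then -ξ1 else if i = i2 then ζ2 else
                if i = j2 then ξ2 else 1) * η i) • w (σ i))
              (by show (_ * η j1) • w (σ j1) = -((ξ1 * η j1) • w (σ j1)); rw [ej1]; module)
              (by show (_ * η i2) • w (σ i2) = (ζ2 * η i2) • w (σ i2); rw [ei2])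
              (by show (_ * η j2) • w (σ j2) = (ξ2 * η j2) • w (σ j2); rw [ej2])
            exact combv.symm.trans (hiff.trans combw)
  · intro hiso
    refine ⟨hη, ?_⟩
    intro T hT ζ hζ hind k ξ hξ
    by_cases hk : k ∈ T
    · refine iff_of_false ?_ ?_
      · exact no_pos_comb_mem (u := fun i => ζ i • v i) (by omega) hind hk (ξ * ζ k)
          (ξ • v k)
          (by rw [smul_smul]; congr 1; rcases hζ k with h | h <;> rw [h] <;> ring)
      · have hindw : LinearIndependent F
            (fun i : {x // x ∈ T} => (ζ i.1 * η i.1) • w (σ i.1)) :=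
          indep_smul (indep_sigma hw σ (le_of_eq hT)) _
            (fun i => mul_ne_zero (sign_ne_zero' (hζ i.1)) (sign_ne_zero' (hη i.1)))
        exact no_pos_comb_mem (u := fun i => (ζ i * η i) • w (σ i)) (by omega) hindw hk
          (ξ * ζ k) ((ξ * η k) • w (σ k))
          (by rw [smul_smul]; congr 1; rcases hζ k with h | h <;> rw [h] <;> ring)
    · obtain ⟨a, b, c, hab, hac, hbc, rfl⟩ := Finset.card_eq_three.mp hT
      have hka : k ≠ a := fun h => hk (by simp [h])
      have hkb : k ≠ b := fun h => hk (by simp [h])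
      have hkc : k ≠ c := fun h => hk (by simp [h])
      have hsetne : ({ξ • v k, (-ζ a) • v a} : Set (Fin 3 → F)) ≠ {ζ b • v b, ζ c • v c} := by
        intro hset
        rcases Set.pair_eq_pair_iff.mp hset with ⟨h', -⟩ | ⟨h', -⟩
        · have h0 : ξ • v k + (-ζ b) • v b = 0 := by rw [h']; module
          exact sign_ne_zero' hξ (indep2 hv hkb _ _ h0).1
        · have h0 : ξ • v k + (-ζ c) • v c = 0 := by rw [h']; module
          exact sign_ne_zero' hξ (indep2 hv hkc _ _ h0).1
      have hiso' := hiso k a b c ξ (-ζ a) (ζ b) (ζ c) hξ (sign_neg' (hζ a)) (hζ b) (hζ c)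
        hka hbc hsetne
      have combv := comb_iff_cp (F := F) (M := Fin 3 → F) hab hac hbc (ξ • v k) ((-ζ a) • v a)
          (ζ b • v b) (ζ c • v c) (fun i => ζ i • v i)
          (by show ζ a • v a = -((-ζ a) • v a); rw [neg_smul, neg_neg]) rfl rfl
      have combw := comb_iff_cp (F := F) (M := Fin 3 → F) hab hac hbc
          ((ξ * η k) • w (σ k)) ((-ζ a * η a) • w (σ a))
          ((ζ b * η b) • w (σ b)) ((ζ c * η c) • w (σ c))
          (fun i => (ζ i * η i) • w (σ i))
          (by show (ζ a * η a) • w (σ a) = -((-ζ a * η a) • w (σ a)); module) rfl rfl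
      exact combv.trans (hiso'.trans combw.symm)
end

section
/- In ℚ^3 let u_1 = (1,0,0), u_2 = (0,1,0), u_3 = (0,0,1), u_4 = (1,2,2), u_5 = (1,4,8), u_6 = (6,6,7), and let v_i = u_i for 1 ≤ i ≤ 5 and v_6 = (2,6,9). Then each of {u_1, …, u_6} and {v_1, …, v_6} has every subset of cardinality at most 3 linearly independent (so the sets 𝒰_1 = {±u_1, …, ±u_6} and 𝒰_2 = {±v_1, …, ±v_6} are sets of antipodal pairs of vectors of normal systems of cardinality 6 in ℚ^3), and there exists no convex positive bijection from 𝒰_1 to 𝒰_2; hence these two normal systems are not isomorphic. In particular, not all normal systems of the same cardinality in dimension three are isomorphic. -/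
/-- The vectors `u₁, …, u₆` spanning the first normal system `𝒩₁` in `ℚ³`. -/
def uVecs : Fin 6 → Fin 3 → ℚ :=
  ![![1, 0, 0], ![0, 1, 0], ![0, 0, 1], ![1, 2, 2], ![1, 4, 8], ![6, 6, 7]]

/-- The vectors `v₁, …, v₆` spanning the second normal system `𝒩₂` in `ℚ³`; only the
last vector differs from `uVecs`. -/
def vVecs : Fin 6 → Fin 3 → ℚ :=
  ![![1, 0, 0], ![0, 1, 0], ![0, 0, 1], ![1, 2, 2], ![1, 4, 8], ![2, 6, 9]]

/-! ### Integer models of the two vector families -/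

def uZ : Fin 6 → Fin 3 → ℤ :=
  ![![1, 0, 0], ![0, 1, 0], ![0, 0, 1], ![1, 2, 2], ![1, 4, 8], ![6, 6, 7]]

def vZ : Fin 6 → Fin 3 → ℤ :=
  ![![1, 0, 0], ![0, 1, 0], ![0, 0, 1], ![1, 2, 2], ![1, 4, 8], ![2, 6, 9]]

def detZ (x y z : Fin 3 → ℤ) : ℤ :=
  x 0 * (y 1 * z 2 - y 2 * z 1) - x 1 * (y 0 * z 2 - y 2 * z 0) + x 2 * (y 0 * z 1 - y 1 * z 0)

def castVec (x : Fin 3 → ℤ) : Fin 3 → ℚ := fun j => (x j : ℚ)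

def det3 (x y z : Fin 3 → ℚ) : ℚ :=
  x 0 * (y 1 * z 2 - y 2 * z 1) - x 1 * (y 0 * z 2 - y 2 * z 0) + x 2 * (y 0 * z 1 - y 1 * z 0)

lemma det3_cast (x y z : Fin 3 → ℤ) :
    det3 (castVec x) (castVec y) (castVec z) = (detZ x y z : ℚ) := by
  simp only [det3, detZ, castVec]
  push_cast
  ring

lemma uVecs_cast : ∀ i, uVecs i = castVec (uZ i) := by
  intro i
  funext j
  fin_cases i <;> fin_cases j <;> norm_num [uVecs, uZ, castVec]

lemma vVecs_cast : ∀ i, vVecs i = castVec (vZ i) := by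
  intro i
  funext j
  fin_cases i <;> fin_cases j <;> norm_num [vVecs, vZ, castVec]

/-! ### Finite checks over the integers -/

theorem udetZ_ne : ∀ a b c : Fin 6, a ≠ b → a ≠ c → b ≠ c →
    detZ (uZ a) (uZ b) (uZ c) ≠ 0 := by decide

theorem vdetZ_ne : ∀ a b c : Fin 6, a ≠ b → a ≠ c → b ≠ c →
    detZ (vZ a) (vZ b) (vZ c) ≠ 0 := by decide

theorem u_nonprop : ∀ i j : Fin 6, i ≠ j →
    ∃ p q : Fin 3, uZ i p * uZ j q ≠ uZ i q * uZ j p := by decide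

theorem v_nonprop : ∀ i j : Fin 6, i ≠ j →
    ∃ p q : Fin 3, vZ i p * vZ j q ≠ vZ i q * vZ j p := by decide

theorem uZ_ne_zero : ∀ i : Fin 6, ∃ p : Fin 3, uZ i p ≠ 0 := by decide
theorem vZ_ne_zero : ∀ i : Fin 6, ∃ p : Fin 3, vZ i p ≠ 0 := by decide

/-- The pair products for the second system. -/
def PV (x y b c : Fin 6) : ℤ :=
  detZ (vZ x) (vZ b) (vZ c) * detZ (vZ y) (vZ b) (vZ c)

/-- The decisive finite check: in the second system no pair of elements has, with
respect to the six pairs from the remaining four elements, the side-pattern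
`(-,-,-,-,+,-)` (nor its negation) that the pair `(u₁, u₂)` has in the first system. -/
def SmallBody (x y p q r s : Fin 6) : Prop :=
    (x ≠ y ∧ x ≠ p ∧ x ≠ q ∧ x ≠ r ∧ x ≠ s ∧ y ≠ p ∧ y ≠ q ∧ y ≠ r ∧ y ≠ s ∧
     p ≠ q ∧ p ≠ r ∧ p ≠ s ∧ q ≠ r ∧ q ≠ s ∧ r ≠ s) →
    ¬ (PV x y p q < 0 ∧ PV x y p r < 0 ∧ PV x y p s < 0 ∧
       PV x y q r < 0 ∧ 0 < PV x y q s ∧ PV x y r s < 0) ∧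
    ¬ (0 < PV x y p q ∧ 0 < PV x y p r ∧ 0 < PV x y p s ∧
       0 < PV x y q r ∧ PV x y q s < 0 ∧ 0 < PV x y r s)

instance SmallBody.dec (x y p q r s : Fin 6) : Decidable (SmallBody x y p q r s) := by
  unfold SmallBody; infer_instance

set_option maxHeartbeats 4000000 in
theorem smallV : ∀ x y p q r s : Fin 6, SmallBody x y p q r s := by decide

/-- Sign pattern of the pair `(u₁,u₂)` in the first system. -/
theorem uPattern :
    detZ (uZ 1) (uZ 2) (uZ 3) * detZ (uZ 0) (uZ 2) (uZ 3) < 0 ∧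
    detZ (uZ 1) (uZ 2) (uZ 4) * detZ (uZ 0) (uZ 2) (uZ 4) < 0 ∧
    detZ (uZ 1) (uZ 2) (uZ 5) * detZ (uZ 0) (uZ 2) (uZ 5) < 0 ∧
    detZ (uZ 1) (uZ 3) (uZ 4) * detZ (uZ 0) (uZ 3) (uZ 4) < 0 ∧
    0 < detZ (uZ 1) (uZ 3) (uZ 5) * detZ (uZ 0) (uZ 3) (uZ 5) ∧
    detZ (uZ 1) (uZ 4) (uZ 5) * detZ (uZ 0) (uZ 4) (uZ 5) < 0 := by decide

/-! ### Determinant identities -/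

lemma det3_smul (p q r : ℚ) (x y z : Fin 3 → ℚ) :
    det3 (p • x) (q • y) (r • z) = p * q * r * det3 x y z := by
  simp only [det3, Pi.smul_apply, smul_eq_mul]; ring

lemma det3_zero1 (y z : Fin 3 → ℚ) : det3 0 y z = 0 := by simp [det3]
lemma det3_zero2 (y z : Fin 3 → ℚ) : det3 y 0 z = 0 := by simp [det3]
lemma det3_zero3 (y z : Fin 3 → ℚ) : det3 y z 0 = 0 := by simp [det3]

lemma cramer3 (a b c x : Fin 3 → ℚ) (i : Fin 3) :
    det3 x b c * a i + det3 a x c * b i + det3 a b x * c i = det3 a b c * x i := by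
  have h0 : det3 x b c * a 0 + det3 a x c * b 0 + det3 a b x * c 0 = det3 a b c * x 0 := by
    simp only [det3]; ring
  have h1 : det3 x b c * a 1 + det3 a x c * b 1 + det3 a b x * c 1 = det3 a b c * x 1 := by
    simp only [det3]; ring
  have h2 : det3 x b c * a 2 + det3 a x c * b 2 + det3 a b x * c 2 = det3 a b c * x 2 := by
    simp only [det3]; ring
  fin_cases i
  · exact h0
  · exact h1
  · exact h2

lemma det3_comb1 (p q r : ℚ) (a b c : Fin 3 → ℚ) :
    det3 (p • a + q • b + r • c) b c = p * det3 a b c := by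
  simp only [det3, Pi.add_apply, Pi.smul_apply, smul_eq_mul]; ring
lemma det3_comb2 (p q r : ℚ) (a b c : Fin 3 → ℚ) :
    det3 a (p • a + q • b + r • c) c = q * det3 a b c := by
  simp only [det3, Pi.add_apply, Pi.smul_apply, smul_eq_mul]; ring
lemma det3_comb3 (p q r : ℚ) (a b c : Fin 3 → ℚ) :
    det3 a b (p • a + q • b + r • c) = r * det3 a b c := by
  simp only [det3, Pi.add_apply, Pi.smul_apply, smul_eq_mul]; ring

/-! ### Positive combinations and Cramer's rule -/

lemma posCombo (a b c x : Fin 3 → ℚ) (hd : det3 a b c ≠ 0) :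
    (∃ p q r : ℚ, 0 < p ∧ 0 < q ∧ 0 < r ∧ x = p • a + q • b + r • c) ↔
      (0 < det3 x b c * det3 a b c ∧ 0 < det3 a x c * det3 a b c ∧
        0 < det3 a b x * det3 a b c) := by
  constructor
  · rintro ⟨p, q, r, hp, hq, hr, rfl⟩
    rw [det3_comb1 p q r a b c, det3_comb2 p q r a b c, det3_comb3 p q r a b c]
    have h2 : 0 < det3 a b c * det3 a b c := mul_self_pos.2 hd
    exact ⟨by nlinarith, by nlinarith, by nlinarith⟩
  · rintro ⟨h1, h2, h3⟩
    refine ⟨det3 x b c / det3 a b c, det3 a x c / det3 a b c, det3 a b x / det3 a b c,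
      ?_, ?_, ?_, ?_⟩
    · rcases lt_or_gt_of_ne hd with h | h
      · exact div_pos_of_neg_of_neg (by nlinarith) h
      · exact div_pos (by nlinarith) h
    · rcases lt_or_gt_of_ne hd with h | h
      · exact div_pos_of_neg_of_neg (by nlinarith) h
      · exact div_pos (by nlinarith) h
    · rcases lt_or_gt_of_ne hd with h | h
      · exact div_pos_of_neg_of_neg (by nlinarith) h
      · exact div_pos (by nlinarith) h
    · funext i
      have key := cramer3 a b c x i
      simp only [Pi.add_apply, Pi.smul_apply, smul_eq_mul]
      field_simp
      linarith [key]

lemma posComboScaled (a b c x : Fin 3 → ℚ) (sa sb sc ξ : ℚ)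
    (hsa : sa = 1 ∨ sa = -1) (hsb : sb = 1 ∨ sb = -1) (hsc : sc = 1 ∨ sc = -1)
    (hd : det3 a b c ≠ 0) :
    (∃ p q r : ℚ, 0 < p ∧ 0 < q ∧ 0 < r ∧
        ξ • x = p • (sa • a) + q • (sb • b) + r • (sc • c)) ↔
      (0 < ξ * sa * (det3 x b c * det3 a b c) ∧
       0 < ξ * sb * (det3 a x c * det3 a b c) ∧
       0 < ξ * sc * (det3 a b x * det3 a b c)) := by
  have ha2 : sa * sa = 1 := by rcases hsa with h | h <;> rw [h] <;> norm_num
  have hb2 : sb * sb = 1 := by rcases hsb with h | h <;> rw [h] <;> norm_num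
  have hc2 : sc * sc = 1 := by rcases hsc with h | h <;> rw [h] <;> norm_num
  have ha0 : sa ≠ 0 := by rcases hsa with h | h <;> rw [h] <;> norm_num
  have hb0 : sb ≠ 0 := by rcases hsb with h | h <;> rw [h] <;> norm_num
  have hc0 : sc ≠ 0 := by rcases hsc with h | h <;> rw [h] <;> norm_num
  have hd' : det3 (sa • a) (sb • b) (sc • c) ≠ 0 := by
    rw [det3_smul]
    exact mul_ne_zero (mul_ne_zero (mul_ne_zero ha0 hb0) hc0) hd
  rw [posCombo (sa • a) (sb • b) (sc • c) (ξ • x) hd']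
  have e1 : det3 (ξ • x) (sb • b) (sc • c) * det3 (sa • a) (sb • b) (sc • c)
      = ξ * sa * (det3 x b c * det3 a b c) := by
    rw [det3_smul, det3_smul]
    linear_combination (ξ * sa * det3 x b c * det3 a b c * sc * sc) * hb2 +
      (ξ * sa * det3 x b c * det3 a b c) * hc2
  have e2 : det3 (sa • a) (ξ • x) (sc • c) * det3 (sa • a) (sb • b) (sc • c)
      = ξ * sb * (det3 a x c * det3 a b c) := by
    rw [det3_smul, det3_smul]
    linear_combination (ξ * sb * det3 a x c * det3 a b c * sc * sc) * ha2 +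
      (ξ * sb * det3 a x c * det3 a b c) * hc2
  have e3 : det3 (sa • a) (sb • b) (ξ • x) * det3 (sa • a) (sb • b) (sc • c)
      = ξ * sc * (det3 a b x * det3 a b c) := by
    rw [det3_smul, det3_smul]
    linear_combination (ξ * sc * det3 a b x * det3 a b c * sb * sb) * ha2 +
      (ξ * sc * det3 a b x * det3 a b c) * hb2
  rw [e1, e2, e3]

/-! ### Linear independence of triples with nonzero determinant -/

lemma li_of_det3 (a b c : Fin 3 → ℚ) (hd : det3 a b c ≠ 0) :
    LinearIndependent ℚ ![a, b, c] := by
  rw [Fintype.linearIndependent_iff]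
  intro g hg
  have hsum : g 0 • a + g 1 • b + g 2 • c = 0 := by
    rwa [Fin.sum_univ_three] at hg
  have h1 : g 0 * det3 a b c = 0 := by
    rw [← det3_comb1 (g 0) (g 1) (g 2) a b c, hsum, det3_zero1]
  have h2 : g 1 * det3 a b c = 0 := by
    rw [← det3_comb2 (g 0) (g 1) (g 2) a b c, hsum, det3_zero2]
  have h3 : g 2 * det3 a b c = 0 := by
    rw [← det3_comb3 (g 0) (g 1) (g 2) a b c, hsum, det3_zero3]
  intro i
  fin_cases i
  · exact (mul_eq_zero.1 h1).resolve_right hd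
  · exact (mul_eq_zero.1 h2).resolve_right hd
  · exact (mul_eq_zero.1 h3).resolve_right hd

lemma li_triple {a b c : Fin 6} (hab : a ≠ b) (hac : a ≠ c) (hbc : b ≠ c)
    (w : Fin 6 → Fin 3 → ℚ) (hd : det3 (w a) (w b) (w c) ≠ 0) :
    LinearIndependent ℚ (fun i : {x // x ∈ ({a, b, c} : Finset (Fin 6))} => w i.1) := by
  have li3 : LinearIndependent ℚ ![w a, w b, w c] := li_of_det3 _ _ _ hd
  have hmem : ∀ i : {x // x ∈ ({a, b, c} : Finset (Fin 6))},
      i.1 = a ∨ i.1 = b ∨ i.1 = c := by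
    intro i
    have h := i.2
    simp only [Finset.mem_insert, Finset.mem_singleton] at h
    exact h
  have hcomp : (fun i : {x // x ∈ ({a, b, c} : Finset (Fin 6))} => w i.1) =
      ![w a, w b, w c] ∘ (fun i => if i.1 = a then (0 : Fin 3) else if i.1 = b then 1 else 2) := by
    funext i
    rcases hmem i with h | h | h
    · simp [Function.comp, h]
    · simp [Function.comp, h, (hab.symm : b ≠ a)]
    · simp [Function.comp, h, (hac.symm : c ≠ a), (hbc.symm : c ≠ b)]
  have hinj : Function.Injective
      (fun i : {x // x ∈ ({a, b, c} : Finset (Fin 6))} =>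
        if i.1 = a then (0 : Fin 3) else if i.1 = b then 1 else 2) := by
    intro i j hij
    apply Subtype.ext
    rcases hmem i with hi | hi | hi <;> rcases hmem j with hj | hj | hj <;>
      simp only [hi, hj, if_pos, if_neg, (hab.symm : b ≠ a), (hac.symm : c ≠ a),
        (hbc.symm : c ≠ b), if_true, ite_true, ite_false] at hij ⊢ <;>
      first
        | rfl
        | (exfalso; revert hij; simp [(hab.symm : b ≠ a), (hac.symm : c ≠ a),
            (hbc.symm : c ≠ b)])
  rw [hcomp]
  exact li3.comp _ hinj

/-! ### Finset triple conversions -/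

lemma card_triple {a b c : Fin 6} (hab : a ≠ b) (hac : a ≠ c) (hbc : b ≠ c) :
    ({a, b, c} : Finset (Fin 6)).card = 3 :=
  Finset.card_eq_three.2 ⟨a, b, c, hab, hac, hbc, rfl⟩

lemma sum_triple {M : Type*} [AddCommMonoid M] {a b c : Fin 6} (hab : a ≠ b) (hac : a ≠ c)
    (hbc : b ≠ c) (g : Fin 6 → M) :
    ∑ i ∈ ({a, b, c} : Finset (Fin 6)), g i = g a + g b + g c := by
  rw [show ({a, b, c} : Finset (Fin 6)) = insert a (insert b {c}) from rfl,
    Finset.sum_insert (by simp [hab, hac]), Finset.sum_insert (by simp [hbc]),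
    Finset.sum_singleton, add_assoc]

lemma exists_c_iff {a b c : Fin 6} (hab : a ≠ b) (hac : a ≠ c) (hbc : b ≠ c)
    (g : Fin 6 → Fin 3 → ℚ) (x : Fin 3 → ℚ) :
    (∃ cf : Fin 6 → ℚ, (∀ i ∈ ({a, b, c} : Finset (Fin 6)), 0 < cf i) ∧
        x = ∑ i ∈ ({a, b, c} : Finset (Fin 6)), cf i • g i) ↔
      (∃ p q r : ℚ, 0 < p ∧ 0 < q ∧ 0 < r ∧ x = p • g a + q • g b + r • g c) := by
  constructor
  · rintro ⟨cf, hpos, hsum⟩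
    refine ⟨cf a, cf b, cf c, hpos a (by simp), hpos b (by simp), hpos c (by simp), ?_⟩
    rwa [sum_triple hab hac hbc (fun i => cf i • g i)] at hsum
  · rintro ⟨p, q, r, hp, hq, hr, hsum⟩
    refine ⟨fun i => if i = a then p else if i = b then q else r, ?_, ?_⟩
    · intro i hi
      simp only [Finset.mem_insert, Finset.mem_singleton] at hi
      rcases hi with rfl | rfl | rfl
      · simpa using hp
      · simp only [if_neg hab.symm, if_pos rfl]; exact hq
      · simp only [if_neg hac.symm, if_neg hbc.symm]; exact hr
    · rw [sum_triple hab hac hbc]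
      simp only [if_pos rfl, if_neg hab.symm, if_neg hac.symm, if_neg hbc.symm]
      exact hsum

/-! ### The key consequence of a convex positive bijection -/

lemma sign_mul_pos {x : ℚ} (hx : x ≠ 0) : 0 < (if 0 < x then (1 : ℚ) else -1) * x := by
  split_ifs with h
  · linarith
  · have hneg : x < 0 := lt_of_le_of_ne (not_lt.1 h) hx
    nlinarith

set_option maxHeartbeats 1000000 in
lemma star_derive {σ : Equiv.Perm (Fin 6)} {η : Fin 6 → ℚ}
    (hcpb : IsCPB uVecs vVecs σ η) {a b c k : Fin 6}
    (hab : a ≠ b) (hac : a ≠ c) (hak : a ≠ k) (hbc : b ≠ c) (hbk : b ≠ k) (hck : c ≠ k) :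
    0 < η k * η a *
      (det3 (uVecs k) (uVecs b) (uVecs c) * det3 (uVecs a) (uVecs b) (uVecs c)) *
      (det3 (vVecs (σ k)) (vVecs (σ b)) (vVecs (σ c)) *
        det3 (vVecs (σ a)) (vVecs (σ b)) (vVecs (σ c))) := by
  obtain ⟨hη, hmain⟩ := hcpb
  -- nonvanishing of the relevant determinants
  have hU : ∀ {x y z : Fin 6}, x ≠ y → x ≠ z → y ≠ z → det3 (uVecs x) (uVecs y) (uVecs z) ≠ 0 := by
    intro x y z h1 h2 h3
    rw [uVecs_cast, uVecs_cast, uVecs_cast, det3_cast]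
    exact_mod_cast udetZ_ne x y z h1 h2 h3
  have hV : ∀ {x y z : Fin 6}, x ≠ y → x ≠ z → y ≠ z → det3 (vVecs x) (vVecs y) (vVecs z) ≠ 0 := by
    intro x y z h1 h2 h3
    rw [vVecs_cast, vVecs_cast, vVecs_cast, det3_cast]
    exact_mod_cast vdetZ_ne x y z h1 h2 h3
  have hDa : det3 (uVecs a) (uVecs b) (uVecs c) ≠ 0 := hU hab hac hbc
  have hD1 : det3 (uVecs k) (uVecs b) (uVecs c) ≠ 0 := hU hbk.symm hck.symm hbc
  have hD2 : det3 (uVecs a) (uVecs k) (uVecs c) ≠ 0 := hU hak hac hck.symm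
  have hD3 : det3 (uVecs a) (uVecs b) (uVecs k) ≠ 0 := hU hab hak hbk
  have hVa : det3 (vVecs (σ a)) (vVecs (σ b)) (vVecs (σ c)) ≠ 0 :=
    hV (fun h => hab (σ.injective h)) (fun h => hac (σ.injective h))
      (fun h => hbc (σ.injective h))
  -- the sign choices
  set X1 := det3 (uVecs k) (uVecs b) (uVecs c) * det3 (uVecs a) (uVecs b) (uVecs c) with hX1
  set X2 := det3 (uVecs a) (uVecs k) (uVecs c) * det3 (uVecs a) (uVecs b) (uVecs c) with hX2
  set X3 := det3 (uVecs a) (uVecs b) (uVecs k) * det3 (uVecs a) (uVecs b) (uVecs c) with hX3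
  have hX1ne : X1 ≠ 0 := mul_ne_zero hD1 hDa
  have hX2ne : X2 ≠ 0 := mul_ne_zero hD2 hDa
  have hX3ne : X3 ≠ 0 := mul_ne_zero hD3 hDa
  set sa : ℚ := if 0 < X1 then 1 else -1 with hsa_def
  set sb : ℚ := if 0 < X2 then 1 else -1 with hsb_def
  set sc : ℚ := if 0 < X3 then 1 else -1 with hsc_def
  have hsa : sa = 1 ∨ sa = -1 := by rw [hsa_def]; split_ifs <;> simp
  have hsb : sb = 1 ∨ sb = -1 := by rw [hsb_def]; split_ifs <;> simp
  have hsc : sc = 1 ∨ sc = -1 := by rw [hsc_def]; split_ifs <;> simp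
  set ζ : Fin 6 → ℚ := fun i => if i = a then sa else if i = b then sb else
      if i = c then sc else 1 with hζ_def
  have hζ : ∀ i, ζ i = 1 ∨ ζ i = -1 := by
    intro i
    simp only [hζ_def]
    split_ifs
    · exact hsa
    · exact hsb
    · exact hsc
    · left; rfl
  have hζa : ζ a = sa := by rw [hζ_def]; simp
  have hζb : ζ b = sb := by rw [hζ_def]; simp [hab.symm]
  have hζc : ζ c = sc := by rw [hζ_def]; simp [hac.symm, hbc.symm]
  have hζ0 : ∀ i, ζ i ≠ 0 := by
    intro i
    rcases hζ i with h | h <;> rw [h] <;> norm_num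
  -- linear independence of the scaled basis
  have hli : LinearIndependent ℚ
      (fun i : {x // x ∈ ({a, b, c} : Finset (Fin 6))} => ζ i.1 • uVecs i.1) := by
    have := li_triple hab hac hbc (fun i => ζ i • uVecs i)
      (by rw [det3_smul]
          exact mul_ne_zero (mul_ne_zero (mul_ne_zero (hζ0 a) (hζ0 b)) (hζ0 c)) hDa)
    exact this
  have hk_not : k ∉ ({a, b, c} : Finset (Fin 6)) := by
    simp [hak.symm, hbk.symm, hck.symm, Finset.mem_insert]
  -- apply the CPB property
  have key := hmain ({a, b, c} : Finset (Fin 6)) (card_triple hab hac hbc) ζ hζ hli k 1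
    (Or.inl rfl)
  -- the left-hand side holds by the choice of signs
  have hLHS : ∃ cf : Fin 6 → ℚ, (∀ i ∈ ({a, b, c} : Finset (Fin 6)), 0 < cf i) ∧
      (1 : ℚ) • uVecs k = ∑ i ∈ ({a, b, c} : Finset (Fin 6)), cf i • (ζ i • uVecs i) := by
    rw [exists_c_iff hab hac hbc (fun i => ζ i • uVecs i) ((1 : ℚ) • uVecs k)]
    rw [hζa, hζb, hζc]
    rw [posComboScaled (uVecs a) (uVecs b) (uVecs c) (uVecs k) sa sb sc 1 hsa hsb hsc hDa]
    refine ⟨?_, ?_, ?_⟩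
    · rw [one_mul, ← hX1, hsa_def]; exact sign_mul_pos hX1ne
    · rw [one_mul, ← hX2, hsb_def]; exact sign_mul_pos hX2ne
    · rw [one_mul, ← hX3, hsc_def]; exact sign_mul_pos hX3ne
  have hRHS := key.1 hLHS
  -- convert the right-hand side back to sign conditions
  rw [exists_c_iff hab hac hbc (fun i => (ζ i * η i) • vVecs (σ i))
    ((1 * η k) • vVecs (σ k))] at hRHS
  rw [posComboScaled (vVecs (σ a)) (vVecs (σ b)) (vVecs (σ c)) (vVecs (σ k))
    (ζ a * η a) (ζ b * η b) (ζ c * η c) (1 * η k)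
    (by rcases hζ a with h | h <;> rcases hη a with h' | h' <;>
          rw [h, h'] <;> norm_num)
    (by rcases hζ b with h | h <;> rcases hη b with h' | h' <;>
          rw [h, h'] <;> norm_num)
    (by rcases hζ c with h | h <;> rcases hη c with h' | h' <;>
          rw [h, h'] <;> norm_num)
    hVa] at hRHS
  obtain ⟨hfirst, -, -⟩ := hRHS
  -- combine the first components
  have hA : 0 < sa * X1 := by rw [hsa_def]; exact sign_mul_pos hX1ne
  rw [hζa] at hfirst
  have hsa2 : sa * sa = 1 := by rcases hsa with h | h <;> rw [h] <;> norm_num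
  have hprod := mul_pos hA hfirst
  have hEq : sa * X1 *
      (1 * η k * (sa * η a) *
        (det3 (vVecs (σ k)) (vVecs (σ b)) (vVecs (σ c)) *
          det3 (vVecs (σ a)) (vVecs (σ b)) (vVecs (σ c)))) =
      η k * η a * X1 *
        (det3 (vVecs (σ k)) (vVecs (σ b)) (vVecs (σ c)) *
          det3 (vVecs (σ a)) (vVecs (σ b)) (vVecs (σ c))) := by
    linear_combination (η k * η a * X1 *
      (det3 (vVecs (σ k)) (vVecs (σ b)) (vVecs (σ c)) *
        det3 (vVecs (σ a)) (vVecs (σ b)) (vVecs (σ c)))) * hsa2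
  rw [hEq] at hprod
  exact hprod

/-! ### The normal family properties -/

lemma isNormal_of (w : Fin 6 → Fin 3 → ℚ) (wz : Fin 6 → Fin 3 → ℤ)
    (hcast : ∀ i, w i = castVec (wz i))
    (hnz : ∀ i : Fin 6, ∃ p : Fin 3, wz i p ≠ 0)
    (hnp : ∀ i j : Fin 6, i ≠ j → ∃ p q : Fin 3, wz i p * wz j q ≠ wz i q * wz j p)
    (hdet : ∀ a b c : Fin 6, a ≠ b → a ≠ c → b ≠ c → detZ (wz a) (wz b) (wz c) ≠ 0) :
    IsNormalFamily w := by
  refine ⟨?_, ?_, ?_⟩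
  · intro i h
    obtain ⟨p, hp⟩ := hnz i
    apply hp
    have := congrFun h p
    rw [hcast i] at this
    simp only [castVec, Pi.zero_apply] at this
    exact_mod_cast this
  · intro i j hij h
    have hmem : w i ∈ Submodule.span ℚ {w j} := by
      rw [← h]
      exact Submodule.mem_span_singleton_self _
    obtain ⟨t, ht⟩ := Submodule.mem_span_singleton.1 hmem
    obtain ⟨p, q, hpq⟩ := hnp i j hij
    apply hpq
    have hp := congrFun ht p
    have hq := congrFun ht q
    rw [hcast i, hcast j] at hp hq
    simp only [castVec, Pi.smul_apply, smul_eq_mul] at hp hq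
    have : (wz i p * wz j q : ℚ) = (wz i q * wz j p : ℚ) := by
      push_cast
      rw [← hp, ← hq]
      ring
    exact_mod_cast this
  · intro T hT
    obtain ⟨T', hsub, hcard⟩ := Finset.exists_superset_card_eq hT (by simp)
    obtain ⟨a, b, c, hab, hac, hbc, rfl⟩ := Finset.card_eq_three.1 hcard
    have hli : LinearIndependent ℚ
        (fun i : {x // x ∈ ({a, b, c} : Finset (Fin 6))} => w i.1) := by
      apply li_triple hab hac hbc
      rw [hcast a, hcast b, hcast c, det3_cast]
      exact_mod_cast hdet a b c hab hac hbc
    have hinj : Function.Injective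
        (fun i : {x // x ∈ T} => (⟨i.1, hsub i.2⟩ :
          {x // x ∈ ({a, b, c} : Finset (Fin 6))})) := by
      intro i j hij
      have h2 : (i.1 : Fin 6) = j.1 := by
        simpa using congrArg Subtype.val hij
      exact Subtype.ext h2
    exact hli.comp _ hinj

set_option maxHeartbeats 1000000 in
/-- **Two non-isomorphic normal systems of cardinality six in dimension three.**  Both
families `uVecs` and `vVecs` are normal families (every subset of cardinality at most
`3` is linearly independent), but there is no convex positive bijection from
`𝒰₁ = {± uVecs i}` to `𝒰₂ = {± vVecs i}`; hence the two normal systems are not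
isomorphic, and in particular not all normal systems of the same cardinality in
dimension three are isomorphic. -/
theorem nonisomorphic_normal_systems_dim_three :
    IsNormalFamily uVecs ∧ IsNormalFamily vVecs ∧
    ¬ ∃ (σ : Equiv.Perm (Fin 6)) (η : Fin 6 → ℚ), IsCPB uVecs vVecs σ η := by
  refine ⟨isNormal_of uVecs uZ uVecs_cast uZ_ne_zero u_nonprop udetZ_ne,
    isNormal_of vVecs vZ vVecs_cast vZ_ne_zero v_nonprop vdetZ_ne, ?_⟩
  rintro ⟨σ, η, hcpb⟩
  have hη := hcpb.1
  -- the six inequalities derived from the convex positive bijection, for the pair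
  -- (a, k) = (0, 1) and the six pairs (b, c) from {2, 3, 4, 5}
  have F : ∀ b c : Fin 6, (0 : Fin 6) ≠ b → (0 : Fin 6) ≠ c → (1 : Fin 6) ≠ b →
      (1 : Fin 6) ≠ c → b ≠ c →
      0 < η 1 * η 0 *
        (det3 (uVecs 1) (uVecs b) (uVecs c) * det3 (uVecs 0) (uVecs b) (uVecs c)) *
        (det3 (vVecs (σ 1)) (vVecs (σ b)) (vVecs (σ c)) *
          det3 (vVecs (σ 0)) (vVecs (σ b)) (vVecs (σ c))) := by
    intro b c h0b h0c h1b h1c hbc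
    exact star_derive hcpb h0b h0c (by decide) hbc h1b.symm h1c.symm
  -- rewrite everything over the integers
  have bridge : ∀ b c : Fin 6,
      det3 (uVecs 1) (uVecs b) (uVecs c) * det3 (uVecs 0) (uVecs b) (uVecs c) =
        ((detZ (uZ 1) (uZ b) (uZ c) * detZ (uZ 0) (uZ b) (uZ c) : ℤ) : ℚ) := by
    intro b c
    rw [uVecs_cast, uVecs_cast, uVecs_cast, uVecs_cast, det3_cast, det3_cast]
    push_cast
    ring
  have bridgeV : ∀ x y b c : Fin 6,
      det3 (vVecs x) (vVecs b) (vVecs c) * det3 (vVecs y) (vVecs b) (vVecs c) =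
        ((PV x y b c : ℤ) : ℚ) := by
    intro x y b c
    rw [vVecs_cast, vVecs_cast, vVecs_cast, vVecs_cast, det3_cast, det3_cast, PV]
    push_cast
    ring
  -- the sign of η 1 * η 0
  obtain ⟨hu23, hu24, hu25, hu34, hu35, hu45⟩ := uPattern
  -- σ applied to 0..5 gives six distinct values
  have hdis : σ 1 ≠ σ 0 ∧ σ 1 ≠ σ 2 ∧ σ 1 ≠ σ 3 ∧ σ 1 ≠ σ 4 ∧ σ 1 ≠ σ 5 ∧
      σ 0 ≠ σ 2 ∧ σ 0 ≠ σ 3 ∧ σ 0 ≠ σ 4 ∧ σ 0 ≠ σ 5 ∧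
      σ 2 ≠ σ 3 ∧ σ 2 ≠ σ 4 ∧ σ 2 ≠ σ 5 ∧ σ 3 ≠ σ 4 ∧ σ 3 ≠ σ 5 ∧ σ 4 ≠ σ 5 := by
    refine ⟨?_, ?_, ?_, ?_, ?_, ?_, ?_, ?_, ?_, ?_, ?_, ?_, ?_, ?_, ?_⟩ <;>
      (intro h; have := σ.injective h; revert this; decide)
  obtain ⟨d10, d12, d13, d14, d15, d02, d03, d04, d05, d23, d24, d25, d34, d35, d45⟩ := hdis
  have hsmall' := smallV (σ 1) (σ 0) (σ 2) (σ 3) (σ 4) (σ 5)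
  unfold SmallBody at hsmall'
  have hsmall := hsmall'
    ⟨d10, d12, d13, d14, d15, d02, d03, d04, d05, d23, d24, d25, d34, d35, d45⟩
  -- specialize the six inequalities
  have F23 := F 2 3 (by decide) (by decide) (by decide) (by decide) (by decide)
  have F24 := F 2 4 (by decide) (by decide) (by decide) (by decide) (by decide)
  have F25 := F 2 5 (by decide) (by decide) (by decide) (by decide) (by decide)
  have F34 := F 3 4 (by decide) (by decide) (by decide) (by decide) (by decide)
  have F35 := F 3 5 (by decide) (by decide) (by decide) (by decide) (by decide)
  have F45 := F 4 5 (by decide) (by decide) (by decide) (by decide) (by decide)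
  rw [bridge 2 3, bridgeV (σ 1) (σ 0) (σ 2) (σ 3)] at F23
  rw [bridge 2 4, bridgeV (σ 1) (σ 0) (σ 2) (σ 4)] at F24
  rw [bridge 2 5, bridgeV (σ 1) (σ 0) (σ 2) (σ 5)] at F25
  rw [bridge 3 4, bridgeV (σ 1) (σ 0) (σ 3) (σ 4)] at F34
  rw [bridge 3 5, bridgeV (σ 1) (σ 0) (σ 3) (σ 5)] at F35
  rw [bridge 4 5, bridgeV (σ 1) (σ 0) (σ 4) (σ 5)] at F45
  -- case on the sign of η 0 and η 1
  have hQ23 : ((detZ (uZ 1) (uZ 2) (uZ 3) * detZ (uZ 0) (uZ 2) (uZ 3) : ℤ) : ℚ) < 0 := by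
    exact_mod_cast hu23
  have hQ24 : ((detZ (uZ 1) (uZ 2) (uZ 4) * detZ (uZ 0) (uZ 2) (uZ 4) : ℤ) : ℚ) < 0 := by
    exact_mod_cast hu24
  have hQ25 : ((detZ (uZ 1) (uZ 2) (uZ 5) * detZ (uZ 0) (uZ 2) (uZ 5) : ℤ) : ℚ) < 0 := by
    exact_mod_cast hu25
  have hQ34 : ((detZ (uZ 1) (uZ 3) (uZ 4) * detZ (uZ 0) (uZ 3) (uZ 4) : ℤ) : ℚ) < 0 := by
    exact_mod_cast hu34
  have hQ35 : (0 : ℚ) < ((detZ (uZ 1) (uZ 3) (uZ 5) * detZ (uZ 0) (uZ 3) (uZ 5) : ℤ) : ℚ) := by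
    exact_mod_cast hu35
  have hQ45 : ((detZ (uZ 1) (uZ 4) (uZ 5) * detZ (uZ 0) (uZ 4) (uZ 5) : ℤ) : ℚ) < 0 := by
    exact_mod_cast hu45
  have he : η 1 * η 0 = 1 ∨ η 1 * η 0 = -1 := by
    rcases hη 1 with h1 | h1 <;> rcases hη 0 with h0 | h0 <;> rw [h1, h0] <;> norm_num
  rcases he with he | he <;> rw [he] at F23 F24 F25 F34 F35 F45
  · -- η 1 * η 0 = 1 : the pattern of the pair (σ 1, σ 0) equals that of (1, 0)
    refine hsmall.1 ⟨?_, ?_, ?_, ?_, ?_, ?_⟩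
    · exact_mod_cast (show ((PV (σ 1) (σ 0) (σ 2) (σ 3) : ℤ) : ℚ) < 0 by nlinarith [F23, hQ23])
    · exact_mod_cast (show ((PV (σ 1) (σ 0) (σ 2) (σ 4) : ℤ) : ℚ) < 0 by nlinarith [F24, hQ24])
    · exact_mod_cast (show ((PV (σ 1) (σ 0) (σ 2) (σ 5) : ℤ) : ℚ) < 0 by nlinarith [F25, hQ25])
    · exact_mod_cast (show ((PV (σ 1) (σ 0) (σ 3) (σ 4) : ℤ) : ℚ) < 0 by nlinarith [F34, hQ34])
    · exact_mod_cast (show (0 : ℚ) < ((PV (σ 1) (σ 0) (σ 3) (σ 5) : ℤ) : ℚ) by nlinarith [F35, hQ35])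
    · exact_mod_cast (show ((PV (σ 1) (σ 0) (σ 4) (σ 5) : ℤ) : ℚ) < 0 by nlinarith [F45, hQ45])
  · -- η 1 * η 0 = -1 : the pattern is reversed
    refine hsmall.2 ⟨?_, ?_, ?_, ?_, ?_, ?_⟩
    · exact_mod_cast (show (0 : ℚ) < ((PV (σ 1) (σ 0) (σ 2) (σ 3) : ℤ) : ℚ) by nlinarith [F23, hQ23])
    · exact_mod_cast (show (0 : ℚ) < ((PV (σ 1) (σ 0) (σ 2) (σ 4) : ℤ) : ℚ) by nlinarith [F24, hQ24])
    · exact_mod_cast (show (0 : ℚ) < ((PV (σ 1) (σ 0) (σ 2) (σ 5) : ℤ) : ℚ) by nlinarith [F25, hQ25])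
    · exact_mod_cast (show (0 : ℚ) < ((PV (σ 1) (σ 0) (σ 3) (σ 4) : ℤ) : ℚ) by nlinarith [F34, hQ34])
    · exact_mod_cast (show ((PV (σ 1) (σ 0) (σ 3) (σ 5) : ℤ) : ℚ) < 0 by nlinarith [F35, hQ35])
    · exact_mod_cast (show (0 : ℚ) < ((PV (σ 1) (σ 0) (σ 4) (σ 5) : ℤ) : ℚ) by nlinarith [F45, hQ45])
end

section
/- (Zariski connectedness of positive dimensional skeletons.) Let 𝔽 be an infinite field and let (ℋ_n^m) = {H_1, …, H_n} be a hyperplane arrangement in 𝔽^m in general position. Then for every k with 1 ≤ k ≤ m − 1, the skeleton S_k of k-dimensional planes of the arrangement, namely the union over all (m−k)-element subsets {i_1 < … < i_{m−k}} of {1, …, n} of the affine subspaces H_{i_1} ∩ … ∩ H_{i_{m−k}}, is a connected subset of 𝔽^m in the Zariski topology. -/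
open Finset

/-- The Zariski topology on the affine space `F^m`: the topology whose closed sets are
exactly the common zero loci of sets of polynomials in `m` variables over `F`. -/
def zariski (F : Type*) [CommRing F] (m : ℕ) : TopologicalSpace (Fin m → F) :=
  TopologicalSpace.generateFrom
    {U | ∃ S : Set (MvPolynomial (Fin m) F),
      U = {x : Fin m → F | ∀ p ∈ S, MvPolynomial.eval x p = 0}ᶜ}

open Topology

/-- Evaluating a multivariate polynomial along a parametrized line is evaluation of a
one-variable polynomial. -/
lemma eval_line_aux {F : Type*} [CommRing F] {m : ℕ} (x v : Fin m → F)
    (q : MvPolynomial (Fin m) F) (t : F) :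
    Polynomial.eval t (MvPolynomial.aeval
      (fun j => Polynomial.C (x j) + Polynomial.C (v j) * Polynomial.X) q)
      = MvPolynomial.eval (fun j => x j + t * v j) q := by
  rw [← Polynomial.coe_aeval_eq_eval, MvPolynomial.comp_aeval_apply]
  simp only [map_add, map_mul, Polynomial.aeval_C, Polynomial.aeval_X,
    Algebra.algebraMap_self, RingHom.id_apply]
  have : (fun i => x i + v i * t) = fun j => x j + t * v j := by funext j; ring
  rw [this, ← MvPolynomial.coe_aeval_eq_eval]
  rfl

/-- Every Zariski-open set containing a point contains a basic open set
`{y | q(y) ≠ 0}` containing that point. -/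
lemma zariski_exists_poly_aux {F : Type*} [Field F] {m : ℕ} {U : Set (Fin m → F)}
    (hU : IsOpen[zariski F m] U) :
    ∀ x ∈ U, ∃ q : MvPolynomial (Fin m) F,
      MvPolynomial.eval x q ≠ 0 ∧ ∀ y, MvPolynomial.eval y q ≠ 0 → y ∈ U := by
  induction hU with
  | basic V hV =>
    obtain ⟨S, rfl⟩ := hV
    intro x hx
    simp only [Set.mem_compl_iff, Set.mem_setOf_eq, not_forall] at hx
    obtain ⟨p, hp, hpx⟩ := hx
    exact ⟨p, hpx, fun y hy h => hy (h p hp)⟩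
  | univ => exact fun x _ => ⟨1, by simp, fun y _ => trivial⟩
  | inter V W _ _ ihV ihW =>
    intro x hx
    obtain ⟨q₁, hq₁, hq₁'⟩ := ihV x hx.1
    obtain ⟨q₂, hq₂, hq₂'⟩ := ihW x hx.2
    refine ⟨q₁ * q₂, by simpa using mul_ne_zero hq₁ hq₂, fun y hy => ?_⟩
    rw [map_mul, mul_ne_zero_iff] at hy
    exact ⟨hq₁' y hy.1, hq₂' y hy.2⟩
  | sUnion C _ ihC =>
    rintro x ⟨s, hs, hxs⟩
    obtain ⟨q, hq, hq'⟩ := ihC s hs x hxs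
    exact ⟨q, hq, fun y hy => ⟨s, hs, hq' y hy⟩⟩

/-- The affine line through `x` and `y`. -/
def lineSet {F : Type*} [Field F] {m : ℕ} (x y : Fin m → F) : Set (Fin m → F) :=
  {p | ∃ t : F, p = fun j => x j + t * (y j - x j)}

lemma left_mem_lineSet {F : Type*} [Field F] {m : ℕ} (x y : Fin m → F) :
    x ∈ lineSet x y :=
  ⟨0, by funext j; simp⟩

lemma right_mem_lineSet {F : Type*} [Field F] {m : ℕ} (x y : Fin m → F) :
    y ∈ lineSet x y :=
  ⟨1, by funext j; ring⟩

lemma lineSet_subset_hypSet {F : Type*} [Field F] {m : ℕ} {a : Fin m → F} {b : F}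
    {x y : Fin m → F} (hx : x ∈ hypSet a b) (hy : y ∈ hypSet a b) :
    lineSet x y ⊆ hypSet a b := by
  rintro p ⟨t, rfl⟩
  have hx' : ∑ j, a j * x j = b := hx
  have hy' : ∑ j, a j * y j = b := hy
  show ∑ j, a j * (x j + t * (y j - x j)) = b
  have : ∀ j ∈ Finset.univ (α := Fin m),
      a j * (x j + t * (y j - x j))
        = a j * x j + t * (a j * y j) - t * (a j * x j) := fun j _ => by ring
  rw [Finset.sum_congr rfl this, Finset.sum_sub_distrib, Finset.sum_add_distrib,
    ← Finset.mul_sum, ← Finset.mul_sum, hx', hy']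
  ring

/-- Any affine line is preconnected in the Zariski topology over an infinite field. -/
lemma lineSet_preconnected {F : Type*} [Field F] [Infinite F] {m : ℕ}
    (x y : Fin m → F) : @IsPreconnected _ (zariski F m) (lineSet x y) := by
  letI := zariski F m
  rintro U V hU hV - ⟨p₁, ⟨t₁, rfl⟩, hpU⟩ ⟨p₂, ⟨t₂, rfl⟩, hpV⟩
  obtain ⟨q, hq, hq'⟩ := zariski_exists_poly_aux hU _ hpU
  obtain ⟨r, hr, hr'⟩ := zariski_exists_poly_aux hV _ hpV
  set v : Fin m → F := fun j => y j - x j with hv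
  set f : Polynomial F := MvPolynomial.aeval
    (fun j => Polynomial.C (x j) + Polynomial.C (v j) * Polynomial.X) q with hf
  set g : Polynomial F := MvPolynomial.aeval
    (fun j => Polynomial.C (x j) + Polynomial.C (v j) * Polynomial.X) r with hg
  have hf0 : f ≠ 0 := by
    intro h
    apply hq
    have := eval_line_aux x v q t₁
    rw [← this, ← hf, h, Polynomial.eval_zero]
  have hg0 : g ≠ 0 := by
    intro h
    apply hr
    have := eval_line_aux x v r t₂
    rw [← this, ← hg, h, Polynomial.eval_zero]
  have hfg : f * g ≠ 0 := mul_ne_zero hf0 hg0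
  have : ∃ t : F, Polynomial.eval t (f * g) ≠ 0 := by
    by_contra h
    push_neg at h
    exact hfg (Polynomial.funext fun s => by simpa using h s)
  obtain ⟨t, ht⟩ := this
  rw [Polynomial.eval_mul, mul_ne_zero_iff] at ht
  refine ⟨fun j => x j + t * v j, ⟨t, rfl⟩, ?_, ?_⟩
  · exact hq' _ (by rw [← eval_line_aux x v q t]; exact fun h => ht.1 (by rw [← hf] at h; exact h))
  · exact hr' _ (by rw [← eval_line_aux x v r t]; exact fun h => ht.2 (by rw [← hg] at h; exact h))

/-- The chain lemma: any two points of the skeleton lie in a common preconnected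
subset of the skeleton. -/
lemma skeleton_chain_aux {F : Type*} [Field F] [Infinite F] {m n : ℕ}
    (a : Fin n → Fin m → F) (b : Fin n → F) (hA : IsArrangement a b)
    {k : ℕ} (hk1 : 1 ≤ k) (hk2 : k + 1 ≤ m) :
    ∀ d : ℕ, ∀ T T' : Finset (Fin n), T.card = m - k → T'.card = m - k →
      (T \ T').card ≤ d →
      ∀ x ∈ ⋂ i ∈ T, hypSet (a i) (b i), ∀ y ∈ ⋂ i ∈ T', hypSet (a i) (b i),
      ∃ s : Set (Fin m → F),
        s ⊆ (⋃ (T : Finset (Fin n)) (_ : T.card = m - k), ⋂ i ∈ T, hypSet (a i) (b i)) ∧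
        x ∈ s ∧ y ∈ s ∧ @IsPreconnected _ (zariski F m) s := by
  intro d
  induction d with
  | zero =>
    intro T T' hT hT' hd x hx y hy
    have hTT' : T = T' := by
      apply Finset.eq_of_subset_of_card_le
      · intro u hu
        by_contra hu'
        have : u ∈ T \ T' := Finset.mem_sdiff.mpr ⟨hu, hu'⟩
        have := Finset.card_eq_zero.mp (Nat.le_zero.mp hd)
        simp [this] at *
      · omega
    subst hTT'
    refine ⟨lineSet x y, ?_, left_mem_lineSet x y, right_mem_lineSet x y,
      lineSet_preconnected x y⟩
    have hsub : lineSet x y ⊆ ⋂ i ∈ T, hypSet (a i) (b i) := by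
      apply Set.subset_iInter₂
      intro i hi
      exact lineSet_subset_hypSet (Set.mem_iInter₂.mp hx i hi) (Set.mem_iInter₂.mp hy i hi)
    exact hsub.trans (Set.subset_iUnion₂ (s := fun T _ => ⋂ i ∈ T, hypSet (a i) (b i)) T hT)
  | succ d ih =>
    intro T T' hT hT' hd x hx y hy
    rcases Finset.eq_empty_or_nonempty (T \ T') with hempty | ⟨i, hi⟩
    · exact ih T T' hT hT' (by simp [hempty]) x hx y hy
    · -- pick j ∈ T' \ T
      have hT'T : (T' \ T).Nonempty := by
        rcases Finset.eq_empty_or_nonempty (T' \ T) with h | h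
        · exfalso
          have hsub : T' ⊆ T := by
            intro u hu
            by_contra hu'
            exact absurd (Finset.mem_sdiff.mpr ⟨hu, hu'⟩) (by simp [h])
          have : T' = T := Finset.eq_of_subset_of_card_le hsub (by omega)
          subst this
          simp at hi
        · exact h
      obtain ⟨j, hj⟩ := hT'T
      rw [Finset.mem_sdiff] at hi hj
      have hmk : 1 ≤ m - k := by omega
      set T₁ : Finset (Fin n) := insert j (T.erase i) with hT₁
      have hT₁card : T₁.card = m - k := by
        rw [hT₁, Finset.card_insert_of_notMem (fun h => hj.2 (Finset.mem_of_mem_erase h)),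
          Finset.card_erase_of_mem hi.1, hT]
        omega
      set Tu : Finset (Fin n) := insert j T with hTu
      have hTucard : Tu.card = m - k + 1 := by
        rw [hTu, Finset.card_insert_of_notMem hj.2, hT]
      obtain ⟨A, hAeq, ⟨z, hz⟩, -⟩ := hA.2.1 Tu ⟨j, Finset.mem_insert_self j T⟩
        (by omega)
      have hz' : z ∈ ⋂ u ∈ Tu, hypSet (a u) (b u) := by rw [← hAeq]; exact hz
      have hzT : z ∈ ⋂ u ∈ T, hypSet (a u) (b u) :=
        Set.mem_iInter₂.mpr fun u hu =>
          Set.mem_iInter₂.mp hz' u (Finset.mem_insert_of_mem hu)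
      have hzT₁ : z ∈ ⋂ u ∈ T₁, hypSet (a u) (b u) := by
        apply Set.mem_iInter₂.mpr
        intro u hu
        rcases Finset.mem_insert.mp hu with rfl | hu
        · exact Set.mem_iInter₂.mp hz' u (Finset.mem_insert_self u T)
        · exact Set.mem_iInter₂.mp hz' u (Finset.mem_insert_of_mem (Finset.mem_of_mem_erase hu))
      have hcard2 : (T₁ \ T').card ≤ d := by
        have hsub : T₁ \ T' ⊆ (T \ T').erase i := by
          intro u hu
          rw [Finset.mem_sdiff] at hu
          rcases Finset.mem_insert.mp hu.1 with rfl | hu'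
          · exact absurd hj.1 hu.2
          · rw [Finset.mem_erase] at hu' ⊢
            exact ⟨hu'.1, Finset.mem_sdiff.mpr ⟨hu'.2, hu.2⟩⟩
        have := Finset.card_le_card hsub
        rw [Finset.card_erase_of_mem (Finset.mem_sdiff.mpr hi)] at this
        omega
      obtain ⟨s', hs'sub, hzs', hys', hs'pc⟩ := ih T₁ T' hT₁card hT' hcard2 z hzT₁ y hy
      refine ⟨lineSet x z ∪ s', ?_, Or.inl (left_mem_lineSet x z), Or.inr hys', ?_⟩
      · apply Set.union_subset _ hs'sub
        have hsub : lineSet x z ⊆ ⋂ u ∈ T, hypSet (a u) (b u) := by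
          apply Set.subset_iInter₂
          intro u hu
          exact lineSet_subset_hypSet (Set.mem_iInter₂.mp hx u hu)
            (Set.mem_iInter₂.mp hzT u hu)
        exact hsub.trans (Set.subset_iUnion₂ (s := fun T _ => ⋂ i ∈ T, hypSet (a i) (b i)) T hT)
      · letI := zariski F m
        exact IsPreconnected.union z (right_mem_lineSet x z) hzs'
          (lineSet_preconnected x z) hs'pc

/-- **Theorem (Zariski connectedness of positive dimensional skeletons).** Over an
infinite field `F`, for every `1 ≤ k ≤ m - 1` the skeleton of `k`-dimensional planes of
a hyperplane arrangement in `F^m` (the union of the intersections of all `(m-k)`-element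
subfamilies of the hyperplanes) is connected in the Zariski topology: it cannot be
partitioned into two nonempty relatively open subsets. -/
theorem zariski_connectedness_of_skeleton {F : Type*} [Field F] [Infinite F] {m n : ℕ}
    (a : Fin n → Fin m → F) (b : Fin n → F) (hA : IsArrangement a b)
    (k : ℕ) (hk1 : 1 ≤ k) (hk2 : k ≤ m - 1) :
    @IsPreconnected (Fin m → F) (zariski F m)
      (⋃ (T : Finset (Fin n)) (_ : T.card = m - k), ⋂ i ∈ T, hypSet (a i) (b i)) := by
  letI := zariski F m
  have hm : k + 1 ≤ m := by
    rcases Nat.eq_zero_or_pos m with rfl | hm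
    · omega
    · omega
  apply isPreconnected_of_forall_pair
  intro x hx y hy
  simp only [Set.mem_iUnion] at hx hy
  obtain ⟨T, hT, hxT⟩ := hx
  obtain ⟨T', hT', hyT⟩ := hy
  obtain ⟨s, h1, h2, h3, h4⟩ := skeleton_chain_aux a b hA hk1 hm (T \ T').card T T'
    hT hT' le_rfl x hxT y hyT
  exact ⟨s, h1, h2, h3, h4⟩
end

section
/- Let 𝔽 be an ordered field and let H_1, …, H_{m+1} be m + 1 hyperplanes in general position in 𝔽^m cutting out a bounded nonempty polyhedral region Δ (an m-dimensional simplex). For each i let u_i be the outward-pointing normal vector of H_i with respect to Δ (the nonzero normal of H_i such that the linear functional x ↦ u_i · x is larger on the side of H_i not containing Δ). Then for every 1 ≤ i ≤ m + 1 there exist α_j > 0 for j ≠ i such that −u_i = ∑_{j ≠ i} α_j u_j. -/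
open Finset

section Helpers

variable {F : Type*} [Field F] [LinearOrder F] [IsStrictOrderedRing F] {m : ℕ}

/-- The linear functional `x ↦ ∑ k, a k * x k`. -/
def dotL (a : Fin m → F) : (Fin m → F) →ₗ[F] F where
  toFun x := ∑ k, a k * x k
  map_add' x y := by simp [mul_add, Finset.sum_add_distrib]
  map_smul' t x := by simp [Finset.mul_sum, mul_left_comm]

lemma dotL_apply (a x : Fin m → F) : dotL a x = ∑ k, a k * x k := rfl

lemma dot_combo {n : ℕ} (S : Finset (Fin n)) (β : Fin n → F) (u : Fin n → Fin m → F)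
    (d : Fin m → F) :
    ∑ l, (∑ j ∈ S, β j * u j l) * d l = ∑ j ∈ S, β j * ∑ l, u j l * d l := by
  simp_rw [Finset.sum_mul, Finset.mul_sum, mul_assoc]
  exact Finset.sum_comm

/-- Dual vectors: the joint evaluation map of the functionals indexed by
`univ.erase i` is surjective. -/
lemma dual_exists (hm : 0 < m) {u : Fin (m + 1) → Fin m → F} {c : Fin (m + 1) → F}
    (hA : IsArrangement u c) (i : Fin (m + 1)) (v : Fin (m + 1) → F) :
    ∃ d : Fin m → F, ∀ j ∈ Finset.univ.erase i, ∑ l, u j l * d l = v j := by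
  set S : Finset (Fin (m + 1)) := Finset.univ.erase i with hS
  have hScard : S.card = m := by
    simp [hS, Finset.card_erase_of_mem]
  have hSne : S.Nonempty := Finset.card_pos.mp (by omega)
  obtain ⟨A, hAeq, ⟨p, hp⟩, hdim⟩ := hA.2.1 S hSne hScard.le
  have hp' : ∀ j ∈ S, ∑ k, u j k * p k = c j := by
    intro j hj
    have hp2 : p ∈ ⋂ j ∈ S, hypSet (u j) (c j) := hAeq ▸ hp
    exact Set.mem_iInter₂.mp hp2 j hj
  have hbot : A.direction = ⊥ := by
    rw [← Submodule.finrank_eq_zero (R := F), hdim, hScard, Nat.sub_self]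
  set Φ : (Fin m → F) →ₗ[F] (↥S → F) := LinearMap.pi (fun j : ↥S ↦ dotL (u ↑j)) with hΦ
  have hinj : Function.Injective Φ := by
    rw [← LinearMap.ker_eq_bot]
    refine LinearMap.ker_eq_bot'.mpr fun d hd ↦ ?_
    have hd' : ∀ j ∈ S, ∑ k, u j k * d k = 0 := by
      intro j hj
      exact congrFun hd ⟨j, hj⟩
    have hmem : d +ᵥ p ∈ A := by
      rw [← SetLike.mem_coe, hAeq]
      refine Set.mem_iInter₂.mpr fun j hj ↦ ?_
      show ∑ k, u j k * (d k + p k) = c j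
      simp only [mul_add, Finset.sum_add_distrib, hd' j hj, hp' j hj, zero_add]
    have hdir : d ∈ A.direction := (AffineSubspace.vadd_mem_iff_mem_direction d hp).mp hmem
    rw [hbot] at hdir
    exact hdir
  have hsur : Function.Surjective Φ := by
    refine (LinearMap.injective_iff_surjective_of_finrank_eq_finrank ?_).mp hinj
    simp [Module.finrank_pi, hScard]
  obtain ⟨d, hd⟩ := hsur (fun j : ↥S ↦ v ↑j)
  exact ⟨d, fun j hj ↦ congrFun hd ⟨j, hj⟩⟩

end Helpers

/-- **Outward normals of a simplex.** Let `m + 1` hyperplanes `u i ⬝ x = c i` in general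
position in `F^m` cut out the nonempty bounded polyhedral region (an `m`-dimensional
simplex) `Δ = {x | ∀ i, u i ⬝ x ≤ c i}`, so that each `u i` is the outward-pointing
normal of the corresponding hyperplane with respect to `Δ`.  Then for every `i` the
vector `-u i` is a positive linear combination of the remaining outward normals. -/
theorem simplex_outward_normals {F : Type*} [Field F] [LinearOrder F] [IsStrictOrderedRing F] {m : ℕ}
    (hm : 0 < m) (u : Fin (m + 1) → Fin m → F) (c : Fin (m + 1) → F)
    (hA : IsArrangement u c)
    (hne : ({x : Fin m → F | ∀ i, ∑ j, u i j * x j ≤ c i}).Nonempty)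
    (hbd : ¬ IsUnboundedSet {x : Fin m → F | ∀ i, ∑ j, u i j * x j ≤ c i}) :
    ∀ i : Fin (m + 1), ∃ α : Fin (m + 1) → F,
      (∀ j, j ≠ i → 0 < α j) ∧
      -u i = ∑ j ∈ Finset.univ.erase i, α j • u j := by
  intro i
  set S : Finset (Fin (m + 1)) := Finset.univ.erase i with hS
  have dual : ∀ v : Fin (m + 1) → F, ∃ d : Fin m → F,
      ∀ j ∈ S, ∑ l, u j l * d l = v j := fun v ↦ dual_exists hm hA i v
  -- linear independence over S
  have indep : ∀ β : Fin (m + 1) → F, (∑ j ∈ S, β j • u j = 0) → ∀ k ∈ S, β k = 0 := by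
    intro β hβ k hk
    obtain ⟨d, hd⟩ := dual (fun j ↦ if j = k then 1 else 0)
    have h0 : ∀ l, ∑ j ∈ S, β j * u j l = 0 := by
      intro l
      have := congrFun hβ l
      simpa [Finset.sum_apply] using this
    have h1 : ∑ j ∈ S, β j * ∑ l, u j l * d l = 0 := by
      rw [← dot_combo]
      simp [h0]
    rw [Finset.sum_congr rfl (fun j hj ↦ by rw [hd j hj])] at h1
    simpa [Finset.sum_ite_eq', hk] using h1
  -- a nontrivial linear dependence among all m+1 vectors
  have hnli : ¬ LinearIndependent F u := by
    intro h
    have := h.fintype_card_le_finrank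
    simp [Module.finrank_pi] at this
  obtain ⟨g, hg, k0, hk0⟩ := Fintype.not_linearIndependent_iff.mp hnli
  have hgi : g i ≠ 0 := by
    intro hgi0
    have hsplit : g i • u i + ∑ j ∈ S, g j • u j = ∑ j, g j • u j :=
      Finset.add_sum_erase _ (fun j ↦ g j • u j) (Finset.mem_univ i)
    have hSsum : ∑ j ∈ S, g j • u j = 0 := by
      rw [hg] at hsplit
      simpa [hgi0] using hsplit
    rcases eq_or_ne k0 i with rfl | hk0i
    · exact hk0 hgi0
    · exact hk0 (indep g hSsum k0 (Finset.mem_erase.mpr ⟨hk0i, Finset.mem_univ _⟩))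
  set α : Fin (m + 1) → F := fun j ↦ g j / g i with hα
  have hαsum : -u i = ∑ j ∈ S, α j • u j := by
    have hsplit : g i • u i + ∑ j ∈ S, g j • u j = ∑ j, g j • u j :=
      Finset.add_sum_erase _ (fun j ↦ g j • u j) (Finset.mem_univ i)
    rw [hg] at hsplit
    have h2 : g i • u i = -∑ j ∈ S, g j • u j := eq_neg_of_add_eq_zero_left hsplit
    have h3 : -u i = (g i)⁻¹ • ∑ j ∈ S, g j • u j := by
      rw [← neg_neg (∑ j ∈ S, g j • u j), ← h2, smul_neg, smul_smul, inv_mul_cancel₀ hgi,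
        one_smul]
    rw [h3, Finset.smul_sum]
    refine Finset.sum_congr rfl fun j _ ↦ ?_
    simp only [smul_smul, hα, div_eq_inv_mul]
  -- positivity via the boundedness assumption
  refine ⟨α, ?_, hαsum⟩
  intro k hki
  have hk : k ∈ S := Finset.mem_erase.mpr ⟨hki, Finset.mem_univ _⟩
  by_contra hle
  push_neg at hle
  obtain ⟨d, hd⟩ := dual (fun j ↦ if j = k then -1 else 0)
  have hdk : ∑ l, u k l * d l = -1 := by simpa using hd k hk
  have hui : ∀ l, u i l = -∑ j ∈ S, α j * u j l := by
    intro l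
    have := congrFun hαsum l
    simp only [Pi.neg_apply, Finset.sum_apply, Pi.smul_apply, smul_eq_mul] at this
    linarith [this]
  have hdi : ∑ l, u i l * d l = α k := by
    calc ∑ l, u i l * d l = ∑ l, (-∑ j ∈ S, α j * u j l) * d l := by
          refine Finset.sum_congr rfl fun l _ ↦ by rw [hui l]
      _ = -∑ l, (∑ j ∈ S, α j * u j l) * d l := by simp [neg_mul]
      _ = -∑ j ∈ S, α j * ∑ l, u j l * d l := by rw [dot_combo]
      _ = -∑ j ∈ S, α j * (if j = k then -1 else 0) := by
          refine congrArg Neg.neg (Finset.sum_congr rfl fun j hj ↦ by rw [hd j hj])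
      _ = α k := by simp [mul_ite, Finset.sum_ite_eq', hk]
  have hdnp : ∀ j, ∑ l, u j l * d l ≤ 0 := by
    intro j
    rcases eq_or_ne j i with rfl | hji
    · rw [hdi]; exact hle
    · rw [hd j (Finset.mem_erase.mpr ⟨hji, Finset.mem_univ _⟩)]
      split <;> norm_num
  have hd0 : d ≠ 0 := by
    intro h
    rw [h] at hdk
    simp at hdk
  obtain ⟨x, hx⟩ := hne
  apply hbd
  refine ⟨x + d, x, ?_, hx, ?_, Or.inl fun t ht ↦ ?_⟩
  · intro j
    have : ∑ l, u j l * (x l + d l) = ∑ l, u j l * x l + ∑ l, u j l * d l := by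
      simp [mul_add, Finset.sum_add_distrib]
    show ∑ l, u j l * (x + d) l ≤ c j
    simp only [Pi.add_apply]
    rw [this]
    have := hx j
    have := hdnp j
    linarith
  · intro h
    exact hd0 (by simpa using congrArg (· - x) h)
  · intro j
    have hsimp : x + t • (x + d - x) = x + t • d := by ring_nf
    rw [hsimp]
    show ∑ l, u j l * (x + t • d) l ≤ c j
    have : ∑ l, u j l * (x l + t * d l) = ∑ l, u j l * x l + t * ∑ l, u j l * d l := by
      simp [mul_add, Finset.sum_add_distrib, Finset.mul_sum, mul_left_comm]
    simp only [Pi.add_apply, Pi.smul_apply, smul_eq_mul]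
    rw [this]
    have h1 := hx j
    have h2 := hdnp j
    nlinarith
end
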